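/- arXiv:2211.10912 — 9 statements merged into one kernel-verified Lean document; each statement's English description precedes it below -/
import Mathlib

section
/- For a nonempty set S ⊆ ℤⁿ, the following are equivalent: (i) the convex hull of S equals the union over all x ∈ ℝⁿ of the convex hulls of S ∩ N(x); (ii) every x in the convex hull of S lies in the convex hull of S ∩ N(x); (iii) for each x ∈ ℝⁿ, the intersection of the convex hull of S with the convex hull of N(x) equals the convex hull of S ∩ N(x). -/
noncomputable section

def coeZR {n : ℕ} (z : Fin n → ℤ) : Fin n → ℝ := fun i => (z i : ℝ)

def IntNbhd {n : ℕ} (x : Fin n → ℝ) : Set (Fin n → ℤ) :=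
  {z | ∀ i, |x i - (z i : ℝ)| < 1}

def IntegrallyConvexSet {n : ℕ} (S : Set (Fin n → ℤ)) : Prop :=
  ∀ x ∈ convexHull ℝ (coeZR '' S), x ∈ convexHull ℝ (coeZR '' (S ∩ IntNbhd x))

/-- Integer points in the neighborhood of `x` lie in the box `[⌊x⌋, ⌈x⌉]`. -/
lemma nbhd_box {n : ℕ} {x : Fin n → ℝ} {z : Fin n → ℤ} (hz : z ∈ IntNbhd x) (i : Fin n) :
    (⌊x i⌋ : ℝ) ≤ (z i : ℝ) ∧ (z i : ℝ) ≤ (⌈x i⌉ : ℝ) := by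
  have h := abs_lt.1 (hz i)
  have hfl := Int.floor_le (x i)
  have hcl := Int.le_ceil (x i)
  constructor
  · have h1 : (⌊x i⌋ : ℝ) - 1 < (z i : ℝ) := by linarith [h.2]
    have h2 : ⌊x i⌋ - 1 < z i := by exact_mod_cast h1
    have : ⌊x i⌋ ≤ z i := by omega
    exact_mod_cast this
  · have h1 : (z i : ℝ) < (⌈x i⌉ : ℝ) + 1 := by linarith [h.1]
    have h2 : z i < ⌈x i⌉ + 1 := by exact_mod_cast h1
    have : z i ≤ ⌈x i⌉ := by omega
    exact_mod_cast this

def Box {n : ℕ} (x : Fin n → ℝ) : Set (Fin n → ℝ) :=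
  Set.univ.pi fun i => Set.Icc (⌊x i⌋ : ℝ) (⌈x i⌉ : ℝ)

lemma hull_nbhd_subset_box {n : ℕ} (x : Fin n → ℝ) :
    convexHull ℝ (coeZR '' IntNbhd x) ⊆ Box x := by
  apply convexHull_min
  · rintro _ ⟨z, hz, rfl⟩ i _
    exact ⟨(nbhd_box hz i).1, (nbhd_box hz i).2⟩
  · exact convex_pi fun i _ => convex_Icc _ _

/-- If `y` lies in the box of `x`, then `IntNbhd y ⊆ IntNbhd x`. -/
lemma nbhd_mono {n : ℕ} {x y : Fin n → ℝ} (hy : y ∈ Box x) :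
    IntNbhd y ⊆ IntNbhd x := by
  intro z hz i
  have hyi := hy i (Set.mem_univ i)
  have h := abs_lt.1 (hz i)
  have h1 : (⌊x i⌋ : ℝ) - 1 < (z i : ℝ) := by linarith [hyi.1, h.2]
  have h2 : (z i : ℝ) < (⌈x i⌉ : ℝ) + 1 := by linarith [hyi.2, h.1]
  have h3 : ⌊x i⌋ ≤ z i := by
    have : ⌊x i⌋ - 1 < z i := by exact_mod_cast h1
    omega
  have h4 : z i ≤ ⌈x i⌉ := by
    have : z i < ⌈x i⌉ + 1 := by exact_mod_cast h2
    omega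
  have h3' : (⌊x i⌋ : ℝ) ≤ (z i : ℝ) := by exact_mod_cast h3
  have h4' : (z i : ℝ) ≤ (⌈x i⌉ : ℝ) := by exact_mod_cast h4
  have hfl := Int.sub_one_lt_floor (x i)
  have hcl := Int.ceil_lt_add_one (x i)
  rw [abs_lt]
  constructor <;> linarith

/-- Every point lies in the convex hull of its integral neighborhood. -/
lemma mem_hull_nbhd {n : ℕ} (x : Fin n → ℝ) :
    x ∈ convexHull ℝ (coeZR '' IntNbhd x) := by
  classical
  have hsub : (Set.univ.pi fun i => ({(⌊x i⌋ : ℝ), (⌈x i⌉ : ℝ)} : Set ℝ)) ⊆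
      coeZR '' IntNbhd x := by
    intro y hy
    refine ⟨fun i => if y i = (⌊x i⌋ : ℝ) then ⌊x i⌋ else ⌈x i⌉, ?_, ?_⟩
    · intro i
      have hfl := Int.sub_one_lt_floor (x i)
      have hfl' := Int.floor_le (x i)
      have hcl := Int.ceil_lt_add_one (x i)
      have hcl' := Int.le_ceil (x i)
      have hf : |x i - ((⌊x i⌋ : ℤ) : ℝ)| < 1 := abs_lt.2 ⟨by linarith, by linarith⟩
      have hc : |x i - ((⌈x i⌉ : ℤ) : ℝ)| < 1 := abs_lt.2 ⟨by linarith, by linarith⟩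
      simp only
      split_ifs with h
      · exact hf
      · exact hc
    · funext i
      have hy' := hy i (Set.mem_univ i)
      by_cases h : y i = (⌊x i⌋ : ℝ)
      · simp [coeZR, h]
      · rcases hy' with h' | h'
        · exact absurd h' h
        · rw [Set.mem_singleton_iff] at h'
          simp only [coeZR, if_neg h]
          exact h'.symm
  refine convexHull_mono hsub ?_
  apply mem_convexHull_pi
  intro i _
  rw [convexHull_pair, segment_eq_Icc (by exact_mod_cast Int.floor_le_ceil (x i))]
  exact ⟨Int.floor_le (x i), Int.le_ceil (x i)⟩

/-- 1D estimate: a convex combination of reals, each within distance 1 above `c j`,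
stays strictly less than `c j + 1` provided `j` has positive weight. -/
lemma oneD {ι : Type} (t : Finset ι) (w : ι → ℝ) (c : ι → ℝ) (hw0 : ∀ k ∈ t, 0 ≤ w k)
    (hw1 : ∑ k ∈ t, w k = 1) {j : ι} (hj : j ∈ t) (hwj : 0 < w j)
    (hc : ∀ k ∈ t, c k - c j ≤ 1) : (∑ k ∈ t, w k * c k) - c j < 1 := by
  classical
  have key : (∑ k ∈ t, w k * c k) - c j = ∑ k ∈ t, w k * (c k - c j) := by
    simp only [mul_sub]
    rw [Finset.sum_sub_distrib, ← Finset.sum_mul, hw1]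
    ring
  rw [key, ← Finset.add_sum_erase t _ hj]
  have h1 : w j * (c j - c j) = 0 := by ring
  have h2 : ∑ k ∈ t.erase j, w k * (c k - c j) ≤ ∑ k ∈ t.erase j, w k := by
    apply Finset.sum_le_sum
    intro k hk
    have hk' := Finset.mem_of_mem_erase hk
    calc w k * (c k - c j) ≤ w k * 1 := by
          apply mul_le_mul_of_nonneg_left (hc k hk') (hw0 k hk')
      _ = w k := mul_one _
  have h3 : ∑ k ∈ t.erase j, w k = 1 - w j := by
    have h4 := Finset.add_sum_erase t w hj
    linarith
  linarith

/-- Key lemma: if `x` is in the hull of `coeZR '' A` where all of `A` fits in one integral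
neighborhood, then `x` is in the hull of `coeZR '' (A ∩ IntNbhd x)`. -/
lemma key_lemma {n : ℕ} {A : Set (Fin n → ℤ)} {x y : Fin n → ℝ} (hA : A ⊆ IntNbhd y)
    (hx : x ∈ convexHull ℝ (coeZR '' A)) :
    x ∈ convexHull ℝ (coeZR '' (A ∩ IntNbhd x)) := by
  classical
  rw [convexHull_eq] at hx
  obtain ⟨ι, t, w, z, hw0, hw1, hz, hcm⟩ := hx
  choose! u huA huz using hz
  -- restrict to the support
  set t' : Finset ι := {i ∈ t | w i ≠ 0} with ht'
  have hsub : t' ⊆ t := Finset.filter_subset _ _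
  have hcm' : t'.centerMass w z = x := by rw [ht', Finset.centerMass_filter_ne_zero, hcm]
  have hw1' : ∑ k ∈ t', w k = 1 := by
    rw [ht', Finset.sum_filter_ne_zero, hw1]
  -- x as a coordinatewise sum
  have hxeq : ∀ i, x i = ∑ k ∈ t, w k * z k i := by
    intro i
    rw [← hcm, Finset.centerMass, hw1, inv_one, one_smul]
    simp [Finset.sum_apply]
  -- pairwise coordinate bound
  have hpair : ∀ k ∈ t, ∀ j ∈ t, ∀ i, z k i - z j i ≤ 1 := by
    intro k hk j hj i
    rw [← huz k hk, ← huz j hj]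
    have h1 := abs_lt.1 (hA (huA k hk) i)
    have h2 := abs_lt.1 (hA (huA j hj) i)
    have : (u k i : ℝ) - (u j i : ℝ) < 2 := by linarith
    have h3 : u k i - u j i < 2 := by exact_mod_cast this
    have h4 : u k i - u j i ≤ 1 := by omega
    show (u k i : ℝ) - (u j i : ℝ) ≤ 1
    exact_mod_cast h4
  -- each support point is in IntNbhd x
  have hsupp : ∀ j ∈ t', z j ∈ coeZR '' (A ∩ IntNbhd x) := by
    intro j hj
    rw [ht', Finset.mem_filter] at hj
    obtain ⟨hjt, hjw⟩ := hj
    have hwj : 0 < w j := lt_of_le_of_ne (hw0 j hjt) (Ne.symm hjw)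
    refine ⟨u j, ⟨huA j hjt, ?_⟩, huz j hjt⟩
    intro i
    rw [abs_lt]
    have hub : x i - z j i < 1 := by
      rw [hxeq i]
      exact oneD t w (fun k => z k i) hw0 hw1 hjt hwj (fun k hk => hpair k hk j hjt i)
    have hlb : z j i - x i < 1 := by
      have h2 := oneD t w (fun k => - z k i) hw0 hw1 hjt hwj
        (fun k hk => by have h3 := hpair j hjt k hk i; linarith)
      have heq : ∑ k ∈ t, w k * (- z k i) = - x i := by
        rw [hxeq i]
        simp [mul_neg]
      rw [heq] at h2
      linarith
    have hz_eq : z j i = (u j i : ℝ) := by rw [← huz j hjt]; rfl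
    rw [hz_eq] at hub hlb
    constructor <;> linarith
  have := Finset.centerMass_mem_convexHull t'
    (fun k hk => hw0 k (hsub hk)) (hw1' ▸ one_pos) hsupp
  rwa [hcm'] at this

theorem stmt0 {n : ℕ} (S : Set (Fin n → ℤ)) (hS : S.Nonempty) :
    ((convexHull ℝ (coeZR '' S) = ⋃ x : Fin n → ℝ, convexHull ℝ (coeZR '' (S ∩ IntNbhd x))) ↔
      (∀ x ∈ convexHull ℝ (coeZR '' S), x ∈ convexHull ℝ (coeZR '' (S ∩ IntNbhd x)))) ∧
    ((∀ x ∈ convexHull ℝ (coeZR '' S), x ∈ convexHull ℝ (coeZR '' (S ∩ IntNbhd x))) ↔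
      (∀ x : Fin n → ℝ,
        convexHull ℝ (coeZR '' S) ∩ convexHull ℝ (coeZR '' (IntNbhd x)) =
          convexHull ℝ (coeZR '' (S ∩ IntNbhd x)))) := by
  constructor
  · constructor
    · intro h x hx
      rw [h] at hx
      obtain ⟨y, hy⟩ := Set.mem_iUnion.1 hx
      have hA : S ∩ IntNbhd y ⊆ IntNbhd y := Set.inter_subset_right
      have := key_lemma hA hy
      refine convexHull_mono (Set.image_mono ?_) this
      exact Set.inter_subset_inter_left _ Set.inter_subset_left
    · intro h
      apply Set.Subset.antisymm
      · intro x hx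
        exact Set.mem_iUnion.2 ⟨x, h x hx⟩
      · intro x hx
        obtain ⟨y, hy⟩ := Set.mem_iUnion.1 hx
        exact convexHull_mono (Set.image_mono Set.inter_subset_left) hy
  · constructor
    · intro h x
      apply Set.Subset.antisymm
      · rintro y ⟨hyS, hyN⟩
        have hbox : y ∈ Box x := hull_nbhd_subset_box x hyN
        have hy := h y hyS
        refine convexHull_mono (Set.image_mono ?_) hy
        exact Set.inter_subset_inter_right _ (nbhd_mono hbox)
      · intro y hy
        exact ⟨convexHull_mono (Set.image_mono Set.inter_subset_left) hy,
          convexHull_mono (Set.image_mono Set.inter_subset_right) hy⟩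
    · intro h x hx
      have : x ∈ convexHull ℝ (coeZR '' S) ∩ convexHull ℝ (coeZR '' (IntNbhd x)) :=
        ⟨hx, mem_hull_nbhd x⟩
      rw [h x] at this
      exact this
end
end

section
/- A nonempty set S ⊆ ℤⁿ is integrally convex if and only if for every pair of points y, y' ∈ S with ‖y − y'‖_∞ ≥ 2, the midpoint (y+y')/2 lies in the convex hull of S ∩ N((y+y')/2). -/
noncomputable section

open Finset

section ICHelpers

lemma avg_lemma {α : Type*} [Fintype α] (w f : α → ℝ)
    (hw : ∀ a, 0 ≤ w a) (h1 : ∑ a, w a = 1) (c : ℝ) (havg : ∑ a, w a * f a = c)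
    (a₀ : α) (h0 : 0 < w a₀) (hf : f a₀ < c) : ∃ a, 0 < w a ∧ c < f a := by
  by_contra h
  push_neg at h
  have hle : ∀ a, w a * f a ≤ w a * c := by
    intro a
    rcases (hw a).lt_or_eq with hlt | heq
    · exact mul_le_mul_of_nonneg_left (h a hlt) (hw a)
    · simp [← heq]
  have hlt : ∑ a, w a * f a < ∑ a, w a * c :=
    Finset.sum_lt_sum (fun a _ => hle a) ⟨a₀, Finset.mem_univ _, by nlinarith⟩
  rw [← Finset.sum_mul, h1, one_mul] at hlt
  linarith

lemma coord_le (a b z : ℤ) (hl : -2 < a + b - 2*z) (hr : a + b - 2*z < 2) :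
    (a+b-2*z)^2 ≤ (a-b)^2 := by
  rcases eq_or_ne a b with rfl | hne
  · have h3 : a + a - 2*z = 0 := by omega
    rw [h3]; positivity
  · have h3 : (a+b-2*z)^2 ≤ 1 := by nlinarith
    have h4 : 1 ≤ (a-b)^2 := by
      rcases hne.lt_or_gt with h | h <;> nlinarith
    linarith

lemma coord_lt (a b z : ℤ) (hl : -2 < a + b - 2*z) (hr : a + b - 2*z < 2)
    (hab : 2 ≤ |a - b|) : (a+b-2*z)^2 < (a-b)^2 := by
  have h3 : (a+b-2*z)^2 ≤ 1 := by nlinarith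
  have h4 : 4 ≤ (a-b)^2 := by
    rcases abs_cases (a-b) with ⟨he, _⟩ | ⟨he, _⟩ <;> nlinarith
  linarith

lemma int_bounds (a b z : ℤ) (h : |((a:ℝ)+b)/2 - z| < 1) :
    -2 < a + b - 2*z ∧ a + b - 2*z < 2 := by
  have h' := abs_lt.mp h
  constructor
  · have : (-2:ℝ) < ((a:ℝ)+b-2*z) := by linarith [h'.1, h'.2]
    exact_mod_cast this
  · have : ((a:ℝ)+b-2*z) < 2 := by linarith [h'.1, h'.2]
    exact_mod_cast this

lemma coordR_le (a b z : ℤ) (h : |((a:ℝ)+b)/2 - z| < 1) :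
    ((z:ℝ) - ((a:ℝ)+b)/2)^2 ≤ (((a:ℝ)-b)/2)^2 := by
  obtain ⟨hl, hr⟩ := int_bounds a b z h
  have hc : (((a+b-2*z : ℤ)):ℝ)^2 ≤ (((a-b : ℤ)):ℝ)^2 := by
    exact_mod_cast coord_le a b z hl hr
  push_cast at hc
  nlinarith [hc]

lemma coordR_lt (a b z : ℤ) (h : |((a:ℝ)+b)/2 - z| < 1) (hab : 2 ≤ |a - b|) :
    ((z:ℝ) - ((a:ℝ)+b)/2)^2 < (((a:ℝ)-b)/2)^2 := by
  obtain ⟨hl, hr⟩ := int_bounds a b z h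
  have hc : (((a+b-2*z : ℤ)):ℝ)^2 < (((a-b : ℤ)):ℝ)^2 := by
    exact_mod_cast coord_lt a b z hl hr hab
  push_cast at hc
  nlinarith [hc]

lemma sq_dist_lt {n : ℕ} (ya yb z : Fin n → ℤ) (k : Fin n) (hk : 2 ≤ |ya k - yb k|)
    (hz : ∀ i, |(((ya i:ℝ) + (yb i:ℝ))/2) - (z i:ℝ)| < 1) :
    ∑ i, ((z i:ℝ) - ((ya i:ℝ) + (yb i:ℝ))/2)^2 < ∑ i, (((ya i:ℝ) - (yb i:ℝ))/2)^2 := by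
  apply Finset.sum_lt_sum
  · exact fun i _ => coordR_le _ _ _ (hz i)
  · exact ⟨k, Finset.mem_univ _, coordR_lt _ _ _ (hz k) hk⟩

lemma coeZR_inj {n : ℕ} : Function.Injective (coeZR (n := n)) := by
  intro a b hab
  funext i
  have := congrFun hab i
  simpa [coeZR] using this

lemma hull_of_weights {n : ℕ} (s : Set (Fin n → ℤ)) (T : Finset (Fin n → ℤ))
    (hT : ∀ z ∈ T, z ∈ s) (w : (Fin n → ℤ) → ℝ) (h0 : ∀ z ∈ T, 0 ≤ w z)
    (h1 : ∑ z ∈ T, w z = 1) (x : Fin n → ℝ) (hx : ∑ z ∈ T, w z • coeZR z = x) :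
    x ∈ convexHull ℝ (coeZR '' s) := by
  have := T.centerMass_mem_convexHull (w := w) h0 (by rw [h1]; norm_num)
      (z := coeZR) (fun z hz => Set.mem_image_of_mem _ (hT z hz))
  rwa [Finset.centerMass_eq_of_sum_1 _ _ h1, hx] at this

lemma exists_finset_rep {n : ℕ} (s : Set (Fin n → ℤ)) (x : Fin n → ℝ)
    (hx : x ∈ convexHull ℝ (coeZR '' s)) :
    ∃ G : Finset (Fin n → ℤ), ↑G ⊆ s ∧ ∃ μ : (Fin n → ℤ) → ℝ,
      (∀ z ∈ G, 0 ≤ μ z) ∧ ∑ z ∈ G, μ z = 1 ∧ ∑ z ∈ G, μ z • coeZR z = x := by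
  classical
  rw [convexHull_eq_union_convexHull_finite_subsets] at hx
  simp only [Set.mem_iUnion] at hx
  obtain ⟨t, hts, hxt⟩ := hx
  set G : Finset (Fin n → ℤ) := t.preimage coeZR coeZR_inj.injOn with hG
  have hGs : (↑G : Set (Fin n → ℤ)) ⊆ s := by
    intro z hz
    rw [hG, Finset.coe_preimage, Set.mem_preimage] at hz
    obtain ⟨z', hz', he⟩ := hts hz
    rwa [← coeZR_inj he]
  have htG : (↑t : Set (Fin n → ℝ)) ⊆ coeZR '' ↑G := by
    intro u hu
    obtain ⟨z, hz, rfl⟩ := hts hu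
    exact ⟨z, by rw [hG, Finset.mem_coe, Finset.mem_preimage]; exact hu, rfl⟩
  have hxG : x ∈ convexHull ℝ (↑(G.image coeZR) : Set (Fin n → ℝ)) := by
    refine convexHull_mono ?_ hxt
    rw [Finset.coe_image]
    exact htG
  rw [Finset.convexHull_eq] at hxG
  obtain ⟨w, hw0, hw1, hwx⟩ := hxG
  refine ⟨G, hGs, fun z => w (coeZR z), ?_, ?_, ?_⟩
  · exact fun z hz => hw0 _ (Finset.mem_image_of_mem _ hz)
  · rw [← Finset.sum_image (f := w) (g := coeZR)
      (fun a _ b _ h => coeZR_inj h)]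
    exact hw1
  · rw [Finset.centerMass_eq_of_sum_1 _ _ hw1] at hwx
    rw [← hwx, Finset.sum_image (g := coeZR) (f := fun u => w u • id u)
      (fun a _ b _ h => coeZR_inj h)]
    rfl

lemma sum_w1 {α : Type*} [Fintype α] [DecidableEq α] (w ν v : α → ℝ) (ε : ℝ) (t₀ t₁ : α) :
    ∑ t, (w t + 2*ε*ν t - ε*(if t = t₀ then 1 else 0) - ε*(if t = t₁ then 1 else 0)) * v t
      = ∑ t, w t * v t + 2*ε*(∑ t, ν t * v t) - ε * v t₀ - ε * v t₁ := by
  have e1 : ∀ t₂ : α, ∑ t, (if t = t₂ then (1:ℝ) else 0) * v t = v t₂ := by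
    intro t₂
    rw [Finset.sum_congr rfl (fun t _ => by rw [ite_mul, one_mul, zero_mul]),
      Finset.sum_ite_eq' Finset.univ t₂ v, if_pos (Finset.mem_univ _)]
  calc ∑ t, (w t + 2*ε*ν t - ε*(if t = t₀ then 1 else 0) - ε*(if t = t₁ then 1 else 0)) * v t
      = ∑ t, (w t * v t + 2*ε*(ν t * v t) - ε*((if t = t₀ then 1 else 0) * v t)
          - ε*((if t = t₁ then 1 else 0) * v t)) := by
        refine Finset.sum_congr rfl fun t _ => by ring
    _ = _ := by
        rw [Finset.sum_sub_distrib, Finset.sum_sub_distrib, Finset.sum_add_distrib,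
          ← Finset.mul_sum, ← Finset.mul_sum, ← Finset.mul_sum, e1, e1]

lemma sum_extend {M : Type*} [AddCommMonoid M] {α : Type*} [DecidableEq α]
    (T G : Finset α) (hGT : G ⊆ T) (f : α → M) :
    ∑ t : ↑T, (if ↑t ∈ G then f ↑t else 0) = ∑ z ∈ G, f z := by
  rw [Finset.sum_coe_sort T (fun z => if z ∈ G then f z else 0), Finset.sum_ite_mem,
    Finset.inter_eq_right.mpr hGT]

end ICHelpers

theorem IC_backward {n : ℕ} (S : Set (Fin n → ℤ))
    (H : ∀ y ∈ S, ∀ y' ∈ S, (∃ i, 2 ≤ |y i - y' i|) →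
      (2⁻¹ : ℝ) • (coeZR y + coeZR y') ∈
        convexHull ℝ (coeZR '' (S ∩ IntNbhd ((2⁻¹ : ℝ) • (coeZR y + coeZR y'))))) :
    IntegrallyConvexSet S := by
  classical
  intro x hx
  obtain ⟨F, hFS, μF, hμF0, hμF1, hμFx⟩ := exists_finset_rep S x hx
  have hFne : F.Nonempty := by
    rcases F.eq_empty_or_nonempty with rfl | h
    · simp at hμF1
    · exact h
  set lo : Fin n → ℤ := fun i => F.inf' hFne (fun z => z i) with hlo
  set hi : Fin n → ℤ := fun i => F.sup' hFne (fun z => z i) with hhi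
  set T : Finset (Fin n → ℤ) := (Finset.Icc lo hi).filter (fun z => z ∈ S) with hTdef
  have hTS : ∀ z ∈ T, z ∈ S := fun z hz => (Finset.mem_filter.mp hz).2
  have hTlo : ∀ z ∈ T, ∀ i, lo i ≤ z i := fun z hz i =>
    (Finset.mem_Icc.mp (Finset.mem_filter.mp hz).1).1 i
  have hThi : ∀ z ∈ T, ∀ i, z i ≤ hi i := fun z hz i =>
    (Finset.mem_Icc.mp (Finset.mem_filter.mp hz).1).2 i
  have hFT : F ⊆ T := by
    intro z hz
    refine Finset.mem_filter.mpr ⟨Finset.mem_Icc.mpr ⟨fun i => ?_, fun i => ?_⟩, hFS hz⟩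
    · exact Finset.inf'_le (fun w => w i) hz
    · exact Finset.le_sup' (fun w => w i) hz
  set φ : (Fin n → ℤ) → ℝ := fun z => ∑ i, ((z i : ℝ))^2 with hφ
  set Φ : ((↑T : Type) → ℝ) → ℝ := fun w => ∑ t, w t * φ ↑t with hΦ
  set K : Set ((↑T : Type) → ℝ) :=
    stdSimplex ℝ (↑T : Type) ∩ {w | ∑ t, w t • coeZR ↑t = x} with hK
  -- K compact
  have hKco : IsCompact K := by
    apply (isCompact_stdSimplex ℝ (↑T : Type)).inter_right
    exact isClosed_eq
      (continuous_finset_sum _ fun t _ => (continuous_apply t).smul continuous_const)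
      continuous_const
  -- K nonempty
  have hKne : K.Nonempty := by
    refine ⟨fun t => if ↑t ∈ F then μF ↑t else 0, ⟨⟨fun t => ?_, ?_⟩, ?_⟩⟩
    · by_cases h : (↑t : Fin n → ℤ) ∈ F
      · simpa [h] using hμF0 _ h
      · simp [h]
    · rw [sum_extend T F hFT μF]; exact hμF1
    · show (∑ t : ↑T, (if ↑t ∈ F then μF ↑t else 0) • coeZR ↑t) = x
      rw [Finset.sum_congr rfl (fun t _ => by rw [ite_smul, zero_smul]),
        sum_extend T F hFT (fun z => μF z • coeZR z)]
      exact hμFx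
  -- continuity of Φ
  have hΦcont : ContinuousOn Φ K :=
    (continuous_finset_sum _ fun t _ => (continuous_apply t).mul continuous_const).continuousOn
  obtain ⟨w₀, hw₀K, hmin⟩ := hKco.exists_isMinOn hKne hΦcont
  obtain ⟨hw₀s, hw₀x⟩ := hw₀K
  have hw₀0 : ∀ t : ↑T, 0 ≤ w₀ t := hw₀s.1
  have hw₀1 : ∑ t, w₀ t = 1 := hw₀s.2
  have hcoordsum : ∀ i, ∑ t : ↑T, w₀ t * ((↑t : Fin n → ℤ) i : ℝ) = x i := by
    intro i
    have h := congrFun hw₀x i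
    simpa [Finset.sum_apply, coeZR] using h
  have claim : ∀ t : ↑T, 0 < w₀ t → (↑t : Fin n → ℤ) ∈ IntNbhd x := by
    by_contra hc
    push_neg at hc
    obtain ⟨t₀, ht₀pos, ht₀n⟩ := hc
    have ht₀n' : ∃ k, 1 ≤ |x k - ((↑t₀ : Fin n → ℤ) k : ℝ)| := by
      by_contra hno
      push_neg at hno
      exact ht₀n (fun i => hno i)
    obtain ⟨k, hk1⟩ := ht₀n'
    have key : ∃ t₁ : ↑T, 0 < w₀ t₁ ∧ 2 ≤ |(↑t₀ : Fin n → ℤ) k - (↑t₁ : Fin n → ℤ) k| := by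
      rcases le_abs.mp hk1 with hcase | hcase
      · obtain ⟨t₁, h1, h2⟩ := avg_lemma w₀ (fun t => ((↑t : Fin n → ℤ) k : ℝ)) hw₀0 hw₀1
          (x k) (hcoordsum k) t₀ ht₀pos (by linarith)
        refine ⟨t₁, h1, le_abs.mpr (Or.inr ?_)⟩
        have hr : ((↑t₀ : Fin n → ℤ) k : ℝ) + 1 < ((↑t₁ : Fin n → ℤ) k : ℝ) := by linarith
        have hint : (↑t₀ : Fin n → ℤ) k + 1 < (↑t₁ : Fin n → ℤ) k := by exact_mod_cast hr
        omega
      · obtain ⟨t₁, h1, h2⟩ := avg_lemma w₀ (fun t => -((↑t : Fin n → ℤ) k : ℝ)) hw₀0 hw₀1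
          (-(x k)) (by rw [← hcoordsum k]; simp [mul_neg]) t₀ ht₀pos (by simp; linarith)
        refine ⟨t₁, h1, le_abs.mpr (Or.inl ?_)⟩
        have h2' : -(x k) < -(((↑t₁ : Fin n → ℤ) k : ℝ)) := h2
        have hr : ((↑t₁ : Fin n → ℤ) k : ℝ) + 1 < ((↑t₀ : Fin n → ℤ) k : ℝ) := by linarith
        have hint : (↑t₁ : Fin n → ℤ) k + 1 < (↑t₀ : Fin n → ℤ) k := by exact_mod_cast hr
        omega
    obtain ⟨t₁, ht₁pos, hk2⟩ := key
    set ya : Fin n → ℤ := ↑t₀ with hya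
    set yb : Fin n → ℤ := ↑t₁ with hyb
    have hyaS : ya ∈ S := hTS _ t₀.2
    have hybS : yb ∈ S := hTS _ t₁.2
    set m : Fin n → ℝ := (2⁻¹ : ℝ) • (coeZR ya + coeZR yb) with hm
    have hmi : ∀ i, m i = ((ya i : ℝ) + (yb i : ℝ))/2 := by
      intro i
      simp [hm, coeZR]
      ring
    have hmmem := H ya hyaS yb hybS ⟨k, hk2⟩
    obtain ⟨G, hGsub, μ, hμ0, hμ1, hμm⟩ := exists_finset_rep _ _ hmmem
    have hGN : ∀ z ∈ G, ∀ i, |m i - (z i : ℝ)| < 1 := fun z hz => (hGsub hz).2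
    have hμmi : ∀ i, ∑ z ∈ G, μ z * (z i : ℝ) = m i := by
      intro i
      have h := congrFun hμm i
      simp [Finset.sum_apply, coeZR] at h
      rw [h, hmi i]; ring
    have hGT : G ⊆ T := by
      intro z hz
      refine Finset.mem_filter.mpr ⟨Finset.mem_Icc.mpr ⟨fun i => ?_, fun i => ?_⟩,
        (hGsub hz).1⟩
      · have h1 := abs_lt.mp (hGN z hz i)
        have hloya : lo i ≤ ya i := hTlo _ t₀.2 i
        have hloyb : lo i ≤ yb i := hTlo _ t₁.2 i
        have hlr : ((lo i : ℝ)) ≤ m i := by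
          rw [hmi i]
          have c1 : ((lo i : ℝ)) ≤ (ya i : ℝ) := by exact_mod_cast hloya
          have c2 : ((lo i : ℝ)) ≤ (yb i : ℝ) := by exact_mod_cast hloyb
          linarith
        have hr2 : ((lo i : ℝ)) - 1 < (z i : ℝ) := by linarith [h1.1, h1.2]
        have hr3 : lo i - 1 < z i := by exact_mod_cast hr2
        exact Int.sub_one_lt_iff.mp hr3
      · have h1 := abs_lt.mp (hGN z hz i)
        have hhiya : ya i ≤ hi i := hThi _ t₀.2 i
        have hhiyb : yb i ≤ hi i := hThi _ t₁.2 i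
        have hlr : m i ≤ ((hi i : ℝ)) := by
          rw [hmi i]
          have c1 : (ya i : ℝ) ≤ ((hi i : ℝ)) := by exact_mod_cast hhiya
          have c2 : (yb i : ℝ) ≤ ((hi i : ℝ)) := by exact_mod_cast hhiyb
          linarith
        have hr2 : (z i : ℝ) < ((hi i : ℝ)) + 1 := by linarith [h1.1, h1.2]
        have hr3 : z i < hi i + 1 := by exact_mod_cast hr2
        exact Int.lt_add_one_iff.mp hr3
    have hne01 : t₀ ≠ t₁ := by
      intro h
      have hyy : ya = yb := by rw [hya, hyb, h]
      rw [hyy, sub_self] at hk2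
      simp at hk2
    set ε : ℝ := min (w₀ t₀) (w₀ t₁) with hε
    have hεpos : 0 < ε := lt_min ht₀pos ht₁pos
    set ν : (↑T : Type) → ℝ := fun t => if ↑t ∈ G then μ ↑t else 0 with hν
    have hν0 : ∀ t, 0 ≤ ν t := by
      intro t
      by_cases h : (↑t : Fin n → ℤ) ∈ G
      · simpa [hν, h] using hμ0 _ h
      · simp [hν, h]
    have hν1 : ∑ t, ν t = 1 := by
      rw [hν, sum_extend T G hGT μ]; exact hμ1
    have hνv : ∀ v : (Fin n → ℤ) → ℝ, ∑ t : ↑T, ν t * v ↑t = ∑ z ∈ G, μ z * v z := by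
      intro v
      rw [hν]
      rw [Finset.sum_congr rfl (fun t _ => by rw [ite_mul, zero_mul]),
        sum_extend T G hGT (fun z => μ z * v z)]
    set w₁ : (↑T : Type) → ℝ := fun t => w₀ t + 2*ε*ν t - ε*(if t = t₀ then 1 else 0)
      - ε*(if t = t₁ then 1 else 0) with hw₁
    have hw₁sums : ∀ v : (↑T : Type) → ℝ,
        ∑ t, w₁ t * v t = ∑ t, w₀ t * v t + 2*ε*(∑ t, ν t * v t) - ε * v t₀ - ε * v t₁ :=
      fun v => sum_w1 w₀ ν v ε t₀ t₁
    have hw₁K : w₁ ∈ K := by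
      refine ⟨⟨fun t => ?_, ?_⟩, ?_⟩
      · have h2εν : 0 ≤ 2*ε*ν t := mul_nonneg (by linarith) (hν0 t)
        by_cases h0 : t = t₀
        · subst h0
          have hmle : ε ≤ w₀ t := min_le_left _ _
          have hval : w₁ t = w₀ t + 2*ε*ν t - ε := by
            simp [hw₁, hne01]
          rw [hval]
          linarith
        · by_cases h1 : t = t₁
          · subst h1
            have hmle : ε ≤ w₀ t := min_le_right _ _
            have hval : w₁ t = w₀ t + 2*ε*ν t - ε := by
              simp [hw₁, h0]
            rw [hval]
            linarith
          · have hval : w₁ t = w₀ t + 2*ε*ν t := by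
              simp [hw₁, h0, h1]
            rw [hval]
            have := hw₀0 t
            linarith
      · have h := hw₁sums (fun _ => 1)
        simp only [mul_one] at h
        show ∑ t, w₁ t = 1
        rw [h, hw₀1, hν1]
        ring
      · show (∑ t : ↑T, w₁ t • coeZR ↑t) = x
        funext i
        rw [Finset.sum_apply]
        have hred : ∀ t : ↑T, (w₁ t • coeZR (↑t : Fin n → ℤ)) i
            = w₁ t * ((↑t : Fin n → ℤ) i : ℝ) := by
          intro t; simp [coeZR]
        rw [Finset.sum_congr rfl (fun t _ => hred t)]
        rw [hw₁sums (fun t => ((↑t : Fin n → ℤ) i : ℝ))]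
        rw [hcoordsum i]
        rw [hνv (fun z => (z i : ℝ)), hμmi i]
        rw [hmi i]
        have : (ya i : ℝ) = ((↑t₀ : Fin n → ℤ) i : ℝ) := by rw [hya]
        have : (yb i : ℝ) = ((↑t₁ : Fin n → ℤ) i : ℝ) := by rw [hyb]
        rw [hya, hyb]
        ring
    -- the key strict inequality
    set C : ℝ := ∑ i, (((ya i:ℝ) - (yb i:ℝ))/2)^2 with hC
    have hDz : ∀ z ∈ G, ∑ i, ((z i:ℝ) - m i)^2 < C := by
      intro z hz
      have h := sq_dist_lt ya yb z k hk2 (fun i => by rw [← hmi i]; exact hGN z hz i)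
      rw [hC]
      simp_rw [hmi]
      exact h
    have hexp : ∀ z : Fin n → ℤ, ∑ i, ((z i:ℝ) - m i)^2
        = φ z - 2 * (∑ i, m i * (z i:ℝ)) + ∑ i, (m i)^2 := by
      intro z
      rw [hφ]
      simp only
      rw [Finset.mul_sum, ← Finset.sum_sub_distrib, ← Finset.sum_add_distrib]
      exact Finset.sum_congr rfl fun i _ => by ring
    have hpt : ∀ z ∈ G, φ z - 2 * (∑ i, m i * (z i:ℝ)) < C - ∑ i, (m i)^2 := by
      intro z hz
      have h := hDz z hz
      rw [hexp z] at h
      linarith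
    have hμpos : ∃ z ∈ G, 0 < μ z := by
      by_contra hno
      push_neg at hno
      have : ∑ z ∈ G, μ z ≤ 0 := Finset.sum_nonpos (fun z hz => hno z hz)
      rw [hμ1] at this
      linarith
    obtain ⟨z₀, hz₀G, hz₀pos⟩ := hμpos
    have havg : ∑ z ∈ G, μ z * (φ z - 2 * (∑ i, m i * (z i:ℝ)))
        < C - ∑ i, (m i)^2 := by
      have hlt : ∑ z ∈ G, μ z * (φ z - 2 * (∑ i, m i * (z i:ℝ)))
          < ∑ z ∈ G, μ z * (C - ∑ i, (m i)^2) := by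
        apply Finset.sum_lt_sum
        · intro z hz
          exact mul_le_mul_of_nonneg_left (le_of_lt (hpt z hz)) (hμ0 z hz)
        · exact ⟨z₀, hz₀G, by
            exact (mul_lt_mul_iff_right₀ hz₀pos).mpr (hpt z₀ hz₀G)⟩
      rwa [← Finset.sum_mul, hμ1, one_mul] at hlt
    have hswap : ∑ z ∈ G, μ z * (∑ i, m i * (z i:ℝ)) = ∑ i, (m i)^2 := by
      calc ∑ z ∈ G, μ z * (∑ i, m i * (z i:ℝ))
          = ∑ z ∈ G, ∑ i, m i * (μ z * (z i:ℝ)) := by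
            refine Finset.sum_congr rfl fun z _ => ?_
            rw [Finset.mul_sum]
            exact Finset.sum_congr rfl fun i _ => by ring
        _ = ∑ i, ∑ z ∈ G, m i * (μ z * (z i:ℝ)) := Finset.sum_comm
        _ = ∑ i, m i * ∑ z ∈ G, μ z * (z i:ℝ) := by
            refine Finset.sum_congr rfl fun i _ => ?_
            rw [Finset.mul_sum]
        _ = ∑ i, (m i)^2 := by
            refine Finset.sum_congr rfl fun i _ => ?_
            rw [hμmi i]; ring
    have hsplit : ∑ z ∈ G, μ z * (φ z - 2 * (∑ i, m i * (z i:ℝ)))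
        = ∑ z ∈ G, μ z * φ z - 2 * ∑ z ∈ G, μ z * (∑ i, m i * (z i:ℝ)) := by
      rw [Finset.mul_sum, ← Finset.sum_sub_distrib]
      exact Finset.sum_congr rfl fun z _ => by ring
    have hCid : C + ∑ i, (m i)^2 = (φ ya + φ yb)/2 := by
      have hper : ∀ i : Fin n, (((ya i:ℝ) - (yb i:ℝ))/2)^2 + (m i)^2
          = (((ya i:ℝ))^2 + ((yb i:ℝ))^2)/2 := by
        intro i; rw [hmi i]; ring
      rw [hC, hφ]
      simp only
      rw [← Finset.sum_add_distrib, Finset.sum_congr rfl (fun i _ => hper i),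
        ← Finset.sum_div, Finset.sum_add_distrib]
    have hkey : ∑ z ∈ G, μ z * φ z < (φ ya + φ yb)/2 := by
      rw [hsplit, hswap] at havg
      linarith
    -- contradiction with minimality
    have hΦw₁ : Φ w₁ = Φ w₀ + 2*ε*(∑ z ∈ G, μ z * φ z) - ε * φ ya - ε * φ yb := by
      rw [hΦ]
      simp only
      rw [hw₁sums (fun t => φ ↑t), hνv φ]
    have hle : Φ w₀ ≤ Φ w₁ := hmin hw₁K
    have h2 : 2*ε*(∑ z ∈ G, μ z * φ z) < 2*ε*((φ ya + φ yb)/2) :=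
      (mul_lt_mul_iff_right₀ (by positivity)).mpr hkey
    rw [hΦw₁] at hle
    have : 2*ε*((φ ya + φ yb)/2) = ε * φ ya + ε * φ yb := by ring
    linarith
  -- conclude
  set W : (Fin n → ℤ) → ℝ := fun z => if h : z ∈ T then w₀ ⟨z, h⟩ else 0 with hW
  have hWcoe : ∀ t : ↑T, W ↑t = w₀ t := by
    intro t
    simp [hW]
  set T' : Finset (Fin n → ℤ) := T.filter (fun z => W z ≠ 0) with hT'
  have hsum1 : ∑ z ∈ T', W z = 1 := by
    rw [hT', Finset.sum_filter_ne_zero]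
    rw [← Finset.sum_coe_sort T W]
    rw [Finset.sum_congr rfl (fun t _ => hWcoe t)]
    exact hw₀1
  have hsumx : ∑ z ∈ T', W z • coeZR z = x := by
    have hz0 : ∀ z ∈ T, z ∉ T' → W z • coeZR z = 0 := by
      intro z hz hz'
      have : W z = 0 := by
        by_contra hne
        exact hz' (Finset.mem_filter.mpr ⟨hz, hne⟩)
      rw [this, zero_smul]
    rw [Finset.sum_subset (Finset.filter_subset _ _) hz0]
    rw [← Finset.sum_coe_sort T (fun z => W z • coeZR z)]
    rw [Finset.sum_congr rfl (fun t _ => by rw [hWcoe t])]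
    exact hw₀x
  apply hull_of_weights (S ∩ IntNbhd x) T' _ W _ hsum1 x hsumx
  · intro z hz
    obtain ⟨hzT, hzW⟩ := Finset.mem_filter.mp hz
    have hWz : W z = w₀ ⟨z, hzT⟩ := by simp [hW, hzT]
    have hpos : 0 < w₀ ⟨z, hzT⟩ := by
      rcases (hw₀0 ⟨z, hzT⟩).lt_or_eq with h | h
      · exact h
      · exact absurd (by rw [hWz, ← h]) hzW
    exact ⟨hTS z hzT, claim ⟨z, hzT⟩ hpos⟩
  · intro z hz
    obtain ⟨hzT, _⟩ := Finset.mem_filter.mp hz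
    have : W z = w₀ ⟨z, hzT⟩ := by simp [hW, hzT]
    rw [this]
    exact hw₀0 _

theorem stmt2 {n : ℕ} (S : Set (Fin n → ℤ)) (hS : S.Nonempty) :
    IntegrallyConvexSet S ↔
      ∀ y ∈ S, ∀ y' ∈ S, (∃ i, 2 ≤ |y i - y' i|) →
        (2⁻¹ : ℝ) • (coeZR y + coeZR y') ∈
          convexHull ℝ (coeZR '' (S ∩ IntNbhd ((2⁻¹ : ℝ) • (coeZR y + coeZR y')))) := by
  constructor
  · intro hIC y hy y' hy' _
    apply hIC
    have h1 : coeZR y ∈ convexHull ℝ (coeZR '' S) :=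
      subset_convexHull ℝ _ ⟨y, hy, rfl⟩
    have h2 : coeZR y' ∈ convexHull ℝ (coeZR '' S) :=
      subset_convexHull ℝ _ ⟨y', hy', rfl⟩
    have h3 := (convex_convexHull ℝ (coeZR '' S)) h1 h2
      (by norm_num : (0:ℝ) ≤ 2⁻¹) (by norm_num : (0:ℝ) ≤ 2⁻¹) (by norm_num)
    rwa [smul_add]
  · exact IC_backward S
end
end

section
/- Let S ⊆ ℤⁿ be an integrally convex set. For any face F of the convex hull of S, the set F ∩ ℤⁿ is integrally convex. -/
noncomputable section

/-- If `x` lies in the convex hull of `A`, a linear functional `f` is at most `M` on `A`,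
and `f x = M`, then `x` lies in the convex hull of the points of `A` where `f` equals `M`. -/
lemma face_hull {E : Type*} [AddCommGroup E] [Module ℝ E] (A : Set E)
    (f : E →ₗ[ℝ] ℝ) (M : ℝ) (hA : ∀ a ∈ A, f a ≤ M) (x : E)
    (hx : x ∈ convexHull ℝ A) (hfx : f x = M) :
    x ∈ convexHull ℝ {a ∈ A | f a = M} := by
  rw [convexHull_eq] at hx
  obtain ⟨ι, t, w, z, hw0, hw1, hzA, hcm⟩ := hx
  have hcm' : ∑ i ∈ t, w i • z i = x := by
    rw [← hcm, Finset.centerMass_eq_of_sum_1 _ _ hw1]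
  have hfx' : ∑ i ∈ t, w i * f (z i) = M := by
    rw [← hfx, ← hcm']
    simp [map_sum]
  have hkey : ∑ i ∈ t, w i * (M - f (z i)) = 0 := by
    have : ∑ i ∈ t, w i * (M - f (z i)) = (∑ i ∈ t, w i) * M - ∑ i ∈ t, w i * f (z i) := by
      rw [Finset.sum_mul, ← Finset.sum_sub_distrib]
      exact Finset.sum_congr rfl (fun i _ => by ring)
    rw [this, hw1, hfx']; ring
  have hterm : ∀ i ∈ t, w i * (M - f (z i)) = 0 :=
    (Finset.sum_eq_zero_iff_of_nonneg (fun i hi =>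
      mul_nonneg (hw0 i hi) (by linarith [hA (z i) (hzA i hi)]))).1 hkey
  have hmem : ∀ i ∈ t, w i ≠ 0 → z i ∈ {a ∈ A | f a = M} := by
    intro i hi hwi
    refine ⟨hzA i hi, ?_⟩
    have := hterm i hi
    rcases mul_eq_zero.1 this with h1 | h2
    · exact absurd h1 hwi
    · linarith
  have := Finset.centerMass_mem_convexHull (t.filter fun i => w i ≠ 0)
    (fun i hi => hw0 i (Finset.mem_filter.1 hi).1)
    (by rw [Finset.sum_filter_ne_zero t, hw1]; exact one_pos)
    (fun i hi => hmem i (Finset.mem_filter.1 hi).1 (Finset.mem_filter.1 hi).2)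
  rwa [Finset.centerMass_filter_ne_zero, hcm] at this

theorem stmt3 {n : ℕ} (S : Set (Fin n → ℤ)) (h : IntegrallyConvexSet S) (c : Fin n → ℝ) :
    IntegrallyConvexSet {z : Fin n → ℤ |
      coeZR z ∈ convexHull ℝ (coeZR '' S) ∧
      ∀ y ∈ convexHull ℝ (coeZR '' S), ∑ i, c i * y i ≤ ∑ i, c i * coeZR z i} := by
  set T : Set (Fin n → ℤ) := {z : Fin n → ℤ |
      coeZR z ∈ convexHull ℝ (coeZR '' S) ∧
      ∀ y ∈ convexHull ℝ (coeZR '' S), ∑ i, c i * y i ≤ ∑ i, c i * coeZR z i} with hT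
  intro x hx
  -- the linear functional
  set f : (Fin n → ℝ) →ₗ[ℝ] ℝ :=
    { toFun := fun y => ∑ i, c i * y i
      map_add' := by intro a b; simp [mul_add, Finset.sum_add_distrib]
      map_smul' := by
        intro r a
        simp [Finset.mul_sum, mul_comm, mul_left_comm] } with hf
  have hfapp : ∀ y, f y = ∑ i, c i * y i := fun y => rfl
  -- T is nonempty
  have hne : T.Nonempty := by
    by_contra hne
    rw [Set.not_nonempty_iff_eq_empty] at hne
    simp [hne, convexHull_empty] at hx
  obtain ⟨z0, hz0⟩ := hne
  set M : ℝ := ∑ i, c i * coeZR z0 i with hM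
  have hmaxM : ∀ y ∈ convexHull ℝ (coeZR '' S), f y ≤ M := fun y hy => hz0.2 y hy
  -- coeZR '' T ⊆ hull S
  have hTsub : coeZR '' T ⊆ convexHull ℝ (coeZR '' S) := by
    rintro _ ⟨z, hz, rfl⟩; exact hz.1
  have hx' : x ∈ convexHull ℝ (coeZR '' S) :=
    convexHull_min hTsub (convex_convexHull ℝ _) hx
  -- f is constantly M on coeZR '' T
  have hfT : ∀ a ∈ coeZR '' T, f a = M := by
    rintro _ ⟨z, hz, rfl⟩
    have h1 : f (coeZR z) ≤ M := hmaxM _ hz.1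
    have h2 : M ≤ f (coeZR z) := hz.2 (coeZR z0) hz0.1
    linarith
  have hfx : f x = M := by
    have hconv : Convex ℝ {y : Fin n → ℝ | f y = M} := by
      exact convex_hyperplane f.isLinear M
    have : convexHull ℝ (coeZR '' T) ⊆ {y | f y = M} :=
      convexHull_min hfT hconv
    exact this hx
  -- apply integral convexity of S
  have hS := h x hx'
  have hAle : ∀ a ∈ coeZR '' (S ∩ IntNbhd x), f a ≤ M := by
    rintro _ ⟨z, hz, rfl⟩
    exact hmaxM _ (subset_convexHull ℝ _ ⟨z, hz.1, rfl⟩)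
  have hface := face_hull _ f M hAle x hS hfx
  refine convexHull_mono ?_ hface
  rintro _ ⟨⟨z, ⟨hzS, hzN⟩, rfl⟩, hfz⟩
  refine ⟨z, ⟨⟨subset_convexHull ℝ _ ⟨z, hzS, rfl⟩, ?_⟩, hzN⟩, rfl⟩
  intro y hy
  have := hmaxM y hy
  rw [hfapp] at this hfz
  linarith
end
end

section
/- Let S ⊆ ℤⁿ be an integrally convex set, y ∈ S, and d ∈ ℤⁿ. If y + kd ∈ S for all integers k ≥ 1, then for every z ∈ S we have z + kd ∈ S for all integers k ≥ 1. -/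
noncomputable section

lemma sign_mul_self_eq_abs (a : ℤ) : a.sign * a = |a| := by
  rcases lt_trichotomy a 0 with h | h | h
  · simp [Int.sign_eq_neg_one_of_neg h, abs_of_neg h]
  · simp [h]
  · simp [Int.sign_eq_one_of_pos h, abs_of_pos h]

lemma coord_lemma (K v m : ℤ) (hK : 1 ≤ K) (hv : |v| < K) (hm : |K * m - v| < K) :
    (0 ≤ v.sign * m) ∧ (m ≠ 0 → v.sign * m = 1) := by
  rw [abs_lt] at hm hv
  have hm1 : -1 ≤ m := by nlinarith
  have hm2 : m ≤ 1 := by nlinarith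
  interval_cases m
  · have hvneg : v < 0 := by omega
    simp [Int.sign_eq_neg_one_of_neg hvneg]
  · simp
  · have hvpos : 0 < v := by omega
    simp [Int.sign_eq_one_of_pos hvpos]

lemma step {n : ℕ} (S : Set (Fin n → ℤ)) (h : IntegrallyConvexSet S)
    (y : Fin n → ℤ) (hy : y ∈ S) (d : Fin n → ℤ)
    (hyd : ∀ k : ℤ, 1 ≤ k → y + k • d ∈ S)
    (z : Fin n → ℤ) (hz : z ∈ S) : z + d ∈ S := by
  classical
  set v : Fin n → ℤ := fun i => y i - z i with hv
  set K : ℤ := 1 + ∑ i, |v i| with hKdef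
  have hsum_nonneg : 0 ≤ ∑ i, |v i| := Finset.sum_nonneg fun i _ => abs_nonneg _
  have hK1 : 1 ≤ K := by omega
  have hK0 : (0:ℝ) < (K:ℝ) := by exact_mod_cast (by omega : (0:ℤ) < K)
  have hKne : (K:ℝ) ≠ 0 := ne_of_gt hK0
  set a : Fin n → ℤ := z + d with ha
  set x : Fin n → ℝ := fun i => ((a i : ℝ)) + (v i : ℝ) / K with hx
  -- x is in the convex hull of coeZR '' S
  have hxhull : x ∈ convexHull ℝ (coeZR '' S) := by
    have h1 : coeZR z ∈ convexHull ℝ (coeZR '' S) :=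
      subset_convexHull ℝ _ ⟨z, hz, rfl⟩
    have h2 : coeZR (y + K • d) ∈ convexHull ℝ (coeZR '' S) :=
      subset_convexHull ℝ _ ⟨y + K • d, hyd K hK1, rfl⟩
    have hcomb := (convex_convexHull ℝ (coeZR '' S)) h1 h2
      (a := 1 - 1/(K:ℝ)) (b := 1/(K:ℝ))
      (by rw [sub_nonneg]; rw [div_le_one hK0]; exact_mod_cast hK1)
      (by positivity) (by ring)
    convert hcomb using 1
    funext i
    simp only [coeZR, Pi.add_apply, Pi.smul_apply, smul_eq_mul, hx, ha, hv]
    push_cast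
    field_simp
    ring
  have hmem := h x hxhull
  -- show a ∈ S by contradiction
  by_contra hna
  -- the halfspace
  set C : Set (Fin n → ℝ) :=
    {u | 1 + ∑ i, ((v i).sign : ℝ) * (a i : ℝ) ≤ ∑ i, ((v i).sign : ℝ) * u i} with hC
  have hCconv : Convex ℝ C := by
    apply convex_halfSpace_ge
    constructor
    · intro p q
      simp only [Pi.add_apply, mul_add]
      rw [Finset.sum_add_distrib]
    · intro c p
      simp only [Pi.smul_apply, smul_eq_mul, Finset.mul_sum]
      congr 1; funext i; ring
  have hTC : coeZR '' (S ∩ IntNbhd x) ⊆ C := by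
    rintro _ ⟨w, ⟨hwS, hwN⟩, rfl⟩
    -- integer inequality
    have key : ∀ i, (0 ≤ (v i).sign * (w i - a i)) ∧
        (w i - a i ≠ 0 → (v i).sign * (w i - a i) = 1) := by
      intro i
      apply coord_lemma K (v i) (w i - a i) hK1
      · calc |v i| ≤ ∑ j, |v j| := Finset.single_le_sum (f := fun j => |v j|) (fun j _ => abs_nonneg _) (Finset.mem_univ i)
          _ < K := by omega
      · have := hwN i
        have h1 : |((K * (w i - a i) - v i : ℤ) : ℝ)| < (K : ℝ) := by
          have heq : ((K * (w i - a i) - v i : ℤ) : ℝ) = -((K:ℝ) * (x i - (w i : ℝ))) := by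
            simp only [hx]
            push_cast
            field_simp
            ring
          rw [heq, abs_neg, abs_mul, abs_of_pos hK0]
          calc (K:ℝ) * |x i - (w i : ℝ)| < (K:ℝ) * 1 := by
                exact mul_lt_mul_of_pos_left this hK0
            _ = K := mul_one _
        exact_mod_cast h1
    have hwa : w ≠ a := fun hwa => hna (hwa ▸ hwS)
    obtain ⟨i0, hi0⟩ : ∃ i, w i - a i ≠ 0 := by
      by_contra hc
      push_neg at hc
      exact hwa (funext fun i => by have := hc i; omega)
    have hint : 1 ≤ ∑ i, (v i).sign * (w i - a i) := by
      calc (1:ℤ) = (v i0).sign * (w i0 - a i0) := ((key i0).2 hi0).symm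
        _ ≤ ∑ i, (v i).sign * (w i - a i) :=
            Finset.single_le_sum (fun j _ => (key j).1) (Finset.mem_univ i0)
    show 1 + ∑ i, ((v i).sign : ℝ) * (a i : ℝ) ≤ ∑ i, ((v i).sign : ℝ) * (coeZR w i)
    have : (1:ℝ) ≤ ∑ i, ((v i).sign : ℝ) * ((w i : ℝ) - (a i : ℝ)) := by
      have := hint
      push_cast at *
      exact_mod_cast (by exact_mod_cast hint : ((1:ℤ):ℝ) ≤ ((∑ i, (v i).sign * (w i - a i) : ℤ) : ℝ))
    simp only [coeZR]
    have hexp : ∑ i, ((v i).sign : ℝ) * ((w i : ℝ) - (a i : ℝ))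
        = ∑ i, ((v i).sign : ℝ) * (w i : ℝ) - ∑ i, ((v i).sign : ℝ) * (a i : ℝ) := by
      rw [← Finset.sum_sub_distrib]
      congr 1; funext i; ring
    linarith [hexp ▸ this]
  have hxC : x ∈ C := convexHull_min hTC hCconv hmem
  -- but f x - f a < 1
  have hfx : ∑ i, ((v i).sign : ℝ) * x i - ∑ i, ((v i).sign : ℝ) * (a i : ℝ)
      = (∑ i, |v i| : ℤ) / (K : ℝ) := by
    rw [← Finset.sum_sub_distrib]
    have : ∀ i, ((v i).sign : ℝ) * x i - ((v i).sign : ℝ) * (a i : ℝ)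
        = (((v i).sign * v i : ℤ) : ℝ) / K := by
      intro i
      simp only [hx]
      push_cast
      field_simp
      ring
    rw [Finset.sum_congr rfl fun i _ => this i]
    rw [← Finset.sum_div]
    congr 1
    push_cast [← sign_mul_self_eq_abs]
    rfl
  have hlt : ((∑ i, |v i| : ℤ) : ℝ) / (K : ℝ) < 1 := by
    rw [div_lt_one hK0]
    exact_mod_cast (by omega : (∑ i, |v i| : ℤ) < K)
  have := hxC
  simp only [hC, Set.mem_setOf_eq] at this
  linarith [hfx]

theorem stmt4 {n : ℕ} (S : Set (Fin n → ℤ)) (h : IntegrallyConvexSet S)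
    (y : Fin n → ℤ) (hy : y ∈ S) (d : Fin n → ℤ)
    (hyd : ∀ k : ℤ, 1 ≤ k → y + k • d ∈ S) :
    ∀ z ∈ S, ∀ k : ℤ, 1 ≤ k → z + k • d ∈ S := by
  intro z hz k hk
  refine Int.le_induction (motive := fun k _ => z + k • d ∈ S) ?_ ?_ k hk
  · simpa only [one_smul] using step S h y hy d hyd z hz
  · intro m _ ih
    have heq : z + (m + 1) • d = (z + m • d) + d := by
      rw [add_smul, one_smul, add_assoc]
    rw [heq]
    exact step S h y hy d hyd _ ih
end
end

section
/- If a set S ⊆ ℤⁿ is integrally convex, then its convex hull is a box-integer polyhedron; conversely, if P ⊆ ℝⁿ is a box-integer polyhedron, then S = P ∩ ℤⁿ is an integrally convex set. -/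
noncomputable section

def IsPolyhedron {n : ℕ} (P : Set (Fin n → ℝ)) : Prop :=
  ∃ (m : ℕ) (A : Fin m → Fin n → ℝ) (b : Fin m → ℝ),
    P = {x | ∀ j, ∑ i, A j i * x i ≤ b j}

def IntBox {n : ℕ} (l u : Fin n → ℤ) : Set (Fin n → ℝ) :=
  {x | ∀ i, (l i : ℝ) ≤ x i ∧ x i ≤ (u i : ℝ)}

def IsIntegerPoly {n : ℕ} (P : Set (Fin n → ℝ)) : Prop :=
  P = convexHull ℝ (coeZR '' {z : Fin n → ℤ | coeZR z ∈ P})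

def IsBoxInteger {n : ℕ} (P : Set (Fin n → ℝ)) : Prop :=
  ∀ l u : Fin n → ℤ, l ≤ u → IsIntegerPoly (P ∩ IntBox l u)


open Finset

variable {n : ℕ}

abbrev E (n : ℕ) := Fin n → ℝ

def dot {n : ℕ} (a x : E n) : ℝ := ∑ i, a i * x i

lemma dot_comm (a x : E n) : dot a x = dot x a := by
  unfold dot; exact Finset.sum_congr rfl fun i _ => mul_comm _ _

lemma dot_add_right (a x y : E n) : dot a (x + y) = dot a x + dot a y := by
  unfold dot; rw [← Finset.sum_add_distrib]
  exact Finset.sum_congr rfl fun i _ => by simp [mul_add]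

lemma dot_smul_right (a : E n) (c : ℝ) (x : E n) : dot a (c • x) = c * dot a x := by
  unfold dot; rw [Finset.mul_sum]
  exact Finset.sum_congr rfl fun i _ => by simp [Pi.smul_apply]; ring

lemma dot_sub_right (a x y : E n) : dot a (x - y) = dot a x - dot a y := by
  unfold dot; rw [← Finset.sum_sub_distrib]
  exact Finset.sum_congr rfl fun i _ => by simp [mul_sub]

lemma isLinearMap_dot (a : E n) : IsLinearMap ℝ (fun x => dot a x) :=
  ⟨fun x y => dot_add_right a x y, fun c x => dot_smul_right a c x⟩

lemma dot_sum_right {ι : Type*} (a : E n) (s : Finset ι) (f : ι → E n) :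
    dot a (∑ i ∈ s, f i) = ∑ i ∈ s, dot a (f i) := by
  classical
  induction s using Finset.induction_on with
  | empty => simp [dot]
  | insert _ _ h ih => rw [Finset.sum_insert h, dot_add_right, ih, Finset.sum_insert h]

lemma dot_zero_right (a : E n) : dot a 0 = 0 := by simp [dot]

lemma dot_nonneg_self (a : E n) : 0 ≤ dot a a :=
  Finset.sum_nonneg fun i _ => mul_self_nonneg _

/-- Weyl: a cone given by finitely many homogeneous inequalities is finitely generated. -/
lemma weyl_aux (M : Finset (E n)) :
    ∃ (ι : Type) (_ : Fintype ι) (g : ι → E n),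
      ∀ a : E n, (∀ m ∈ M, dot m a ≤ 0) ↔
        ∃ c : ι → ℝ, (∀ i, 0 ≤ c i) ∧ a = ∑ i, c i • g i := by
  classical
  induction M using Finset.induction_on with
  | empty =>
    refine ⟨Fin n ⊕ Fin n, inferInstance, Sum.elim (fun i => Pi.single i 1)
      (fun i => -Pi.single i 1), fun a => ?_⟩
    constructor
    · intro _
      refine ⟨Sum.elim (fun i => max (a i) 0) (fun i => max (-a i) 0),
        fun i => by cases i <;> exact le_max_right _ _, ?_⟩
      rw [Fintype.sum_sum_type]
      funext j
      simp only [Sum.elim_inl, Sum.elim_inr, Finset.sum_apply, Pi.add_apply,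
        Pi.smul_apply, Pi.neg_apply, smul_eq_mul]
      rw [Finset.sum_eq_single j (fun i _ hne => by
          simp [Pi.single_apply, (Ne.symm hne)]) (by simp),
        Finset.sum_eq_single j (fun i _ hne => by
          simp [Pi.single_apply, (Ne.symm hne)]) (by simp)]
      simp only [Pi.single_apply, if_pos rfl, mul_one, mul_neg]
      cases le_total (a j) 0 with
      | inl h => rw [max_eq_right h, max_eq_left (neg_nonneg.mpr h)]; simp
      | inr h => rw [max_eq_left h, max_eq_right (neg_nonpos.mpr h)]; simp
    · intro _ m hm; exact absurd hm (Finset.notMem_empty m)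
  | @insert m M hmM ih =>
    obtain ⟨ι, _, g, hg⟩ := ih
    set d : ι → ℝ := fun i => dot m (g i) with hd
    refine ⟨ι ⊕ ι × ι, inferInstance,
      Sum.elim (fun i => if d i ≤ 0 then g i else 0)
        (fun q => if d q.1 ≤ 0 ∧ 0 < d q.2 then d q.2 • g q.1 - d q.1 • g q.2 else 0),
      fun a => ?_⟩
    have gsat : ∀ i, ∀ m' ∈ M, dot m' (g i) ≤ 0 := by
      intro i
      refine (hg (g i)).mpr ⟨fun j => if j = i then 1 else 0,
        fun j => by positivity, ?_⟩
      have h1 : ∀ j, (if j = i then (1:ℝ) else 0) • g j = if j = i then g j else 0 := by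
        intro j; split <;> simp
      rw [Finset.sum_congr rfl (fun j _ => h1 j), Finset.sum_ite_eq' Finset.univ i g]
      simp
    constructor
    · intro ha
      have haM : ∀ m' ∈ M, dot m' a ≤ 0 := fun m' hm' => ha m' (Finset.mem_insert_of_mem hm')
      have ham : dot m a ≤ 0 := ha m (Finset.mem_insert_self m M)
      obtain ⟨c, hc0, hca⟩ := (hg a).mp haM
      set N : Finset ι := Finset.univ.filter (fun i => d i ≤ 0) with hN
      set P : Finset ι := Finset.univ.filter (fun i => ¬ d i ≤ 0) with hP
      have hsplit : ∀ f : ι → E n, ∑ i, f i = ∑ i ∈ N, f i + ∑ i ∈ P, f i := by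
        intro f; rw [hN, hP, Finset.sum_filter_add_sum_filter_not]
      have hsplitR : ∀ f : ι → ℝ, ∑ i, f i = ∑ i ∈ N, f i + ∑ i ∈ P, f i := by
        intro f; rw [hN, hP, Finset.sum_filter_add_sum_filter_not]
      set sP : ℝ := ∑ i ∈ P, c i * d i with hsP
      set sN : ℝ := -∑ i ∈ N, c i * d i with hsN
      have hma : dot m a = sP - sN := by
        rw [hca, dot_sum_right]
        rw [hsplitR (fun i => dot m (c i • g i))]
        have : ∀ i, dot m (c i • g i) = c i * d i := fun i => dot_smul_right m (c i) (g i)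
        simp only [this]; rw [hsP, hsN]; ring
      have hsPnn : 0 ≤ sP := Finset.sum_nonneg fun i hi => by
        have := (Finset.mem_filter.mp hi).2
        exact mul_nonneg (hc0 i) (le_of_lt (not_le.mp this))
      have hsNnn : 0 ≤ sN := by
        rw [hsN, neg_nonneg]
        exact Finset.sum_nonpos fun i hi => mul_nonpos_of_nonneg_of_nonpos (hc0 i)
          (Finset.mem_filter.mp hi).2
      by_cases hsp : sP ≤ 0
      · -- sP = 0, all P-coefficients vanish
        have hsP0 : sP = 0 := le_antisymm hsp hsPnn
        have hcP : ∀ i ∈ P, c i = 0 := by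
          intro i hi
          have hzero : ∑ j ∈ P, c j * d j = 0 := hsP.symm.trans hsP0
          have := (Finset.sum_eq_zero_iff_of_nonneg (fun j hj =>
            mul_nonneg (hc0 j) (le_of_lt (not_le.mp (Finset.mem_filter.mp hj).2)))).mp hzero i hi
          have hdi : 0 < d i := not_le.mp (Finset.mem_filter.mp hi).2
          rcases mul_eq_zero.mp this with h | h
          · exact h
          · exact absurd h (ne_of_gt hdi)
        refine ⟨Sum.elim c 0, fun i => by cases i with
          | inl i => exact hc0 i
          | inr q => exact le_refl 0, ?_⟩
        rw [Fintype.sum_sum_type]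
        simp only [Sum.elim_inl, Sum.elim_inr, Pi.zero_apply, zero_smul,
          Finset.sum_const_zero, add_zero]
        rw [hca]
        refine Finset.sum_congr rfl fun i _ => ?_
        by_cases hdi : d i ≤ 0
        · simp [hdi]
        · have : c i = 0 := hcP i (Finset.mem_filter.mpr ⟨Finset.mem_univ i, hdi⟩)
          simp [this]
      · have hsPpos : 0 < sP := not_le.mp hsp
        have hsNP : sP ≤ sN := by
          have := hma ▸ ham; linarith
        have hsNpos : 0 < sN := lt_of_lt_of_le hsPpos hsNP
        have hsNne : sN ≠ 0 := ne_of_gt hsNpos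
        refine ⟨Sum.elim (fun i => if d i ≤ 0 then c i * (1 - sP / sN) else 0)
          (fun q => if d q.1 ≤ 0 ∧ 0 < d q.2 then c q.1 * c q.2 / sN else 0),
          ?_, ?_⟩
        · intro i
          cases i with
          | inl i =>
            simp only [Sum.elim_inl]
            split
            · have : sP / sN ≤ 1 := (div_le_one hsNpos).mpr hsNP
              exact mul_nonneg (hc0 i) (by linarith)
            · exact le_refl 0
          | inr q =>
            simp only [Sum.elim_inr]
            split
            · exact div_nonneg (mul_nonneg (hc0 q.1) (hc0 q.2)) (le_of_lt hsNpos)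
            · exact le_refl 0
        · -- the sum identity
          set T : E n := ∑ j ∈ P, c j • g j with hT
          set X : E n := ∑ i ∈ N, c i • g i with hX
          rw [Fintype.sum_sum_type]
          have hleft : (∑ i : ι, (if d i ≤ 0 then c i * (1 - sP / sN) else 0) •
              (if d i ≤ 0 then g i else 0)) = (1 - sP / sN) • X := by
            rw [hX, Finset.smul_sum, hN, Finset.sum_filter]
            refine Finset.sum_congr rfl fun i _ => ?_
            by_cases hdi : d i ≤ 0
            · simp only [hdi, if_true]; module
            · simp [hdi]
          have hinner : ∀ i : ι, (∑ j : ι,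
              (if d i ≤ 0 ∧ 0 < d j then c i * c j / sN else 0) •
              (if d i ≤ 0 ∧ 0 < d j then d j • g i - d i • g j else 0))
              = (if d i ≤ 0 then ((c i * sP / sN) • g i - (c i * d i / sN) • T) else 0) := by
            intro i
            by_cases hdi : d i ≤ 0
            · simp only [hdi, true_and, if_true]
              have hstep : ∀ j : ι, (if 0 < d j then c i * c j / sN else 0) •
                  (if 0 < d j then d j • g i - d i • g j else 0)
                  = (if ¬ d j ≤ 0 then ((c i * (c j * d j) / sN) • g i
                      - (c i * d i / sN) • (c j • g j)) else 0) := by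
                intro j
                by_cases hdj : 0 < d j
                · rw [if_pos hdj, if_pos hdj, if_pos (not_le.mpr hdj)]
                  module
                · rw [if_neg hdj, if_neg hdj, if_neg (not_not_intro (not_lt.mp hdj))]
                  simp
              rw [Finset.sum_congr rfl (fun j _ => hstep j), ← Finset.sum_filter, ← hP,
                Finset.sum_sub_distrib, ← Finset.sum_smul, ← Finset.smul_sum, ← hT]
              congr 1
              congr 1
              rw [← Finset.sum_div, ← Finset.mul_sum, ← hsP]
            · simp only [hdi, false_and, if_false, zero_smul, Finset.sum_const_zero]
          have hright : (∑ q : ι × ι,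
              (if d q.1 ≤ 0 ∧ 0 < d q.2 then c q.1 * c q.2 / sN else 0) •
              (if d q.1 ≤ 0 ∧ 0 < d q.2 then d q.2 • g q.1 - d q.1 • g q.2 else 0))
              = (sP / sN) • X + T := by
            rw [Fintype.sum_prod_type]
            rw [Finset.sum_congr rfl (fun i _ => hinner i), ← Finset.sum_filter, ← hN,
              Finset.sum_sub_distrib, ← Finset.sum_smul]
            have h1 : ∑ i ∈ N, (c i * sP / sN) • g i = (sP / sN) • X := by
              rw [hX, Finset.smul_sum]
              refine Finset.sum_congr rfl fun i _ => ?_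
              module
            have h2 : (∑ i ∈ N, c i * d i / sN) = -1 := by
              rw [← Finset.sum_div]
              have : ∑ i ∈ N, c i * d i = -sN := by rw [hsN]; ring
              rw [this, neg_div, div_self hsNne]
            rw [h1, h2]
            module
          simp only [Sum.elim_inl, Sum.elim_inr]
          rw [hleft, hright, hca, hsplit (fun i => c i • g i), ← hX, ← hT]
          module
    · intro ⟨c, hc0, hca⟩
      intro m' hm'
      rw [hca, dot_sum_right]
      refine Finset.sum_nonpos fun i _ => ?_
      rw [dot_smul_right]
      refine mul_nonpos_of_nonneg_of_nonpos (hc0 i) ?_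
      cases i with
      | inl i =>
        simp only [Sum.elim_inl]
        split
        · rcases Finset.mem_insert.mp hm' with h | h
          · subst h; assumption
          · exact gsat i m' h
        · rw [dot_zero_right]
      | inr q =>
        simp only [Sum.elim_inr]
        split
        · rename_i hq
          rw [dot_sub_right, dot_smul_right, dot_smul_right]
          rcases Finset.mem_insert.mp hm' with h | h
          · subst h
            show d q.2 * d q.1 - d q.1 * d q.2 ≤ 0
            ring_nf
            exact le_refl 0
          · have h1 := gsat q.1 m' h
            have h2 := gsat q.2 m' h
            nlinarith [hq.1, hq.2]
        · rw [dot_zero_right]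

/-- Weyl with Fin indexing. -/
lemma weyl (M : Finset (E n)) :
    ∃ (k : ℕ) (g : Fin k → E n),
      ∀ a : E n, (∀ m ∈ M, dot m a ≤ 0) ↔
        ∃ c : Fin k → ℝ, (∀ i, 0 ≤ c i) ∧ a = ∑ i, c i • g i := by
  obtain ⟨ι, _, g, hg⟩ := weyl_aux M
  refine ⟨Fintype.card ι, g ∘ (Fintype.equivFin ι).symm, fun a => ?_⟩
  rw [hg a]
  constructor
  · rintro ⟨c, hc0, hca⟩
    refine ⟨c ∘ (Fintype.equivFin ι).symm, fun i => hc0 _, ?_⟩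
    rw [hca]
    exact (Equiv.sum_comp (Fintype.equivFin ι).symm (fun i => c i • g i)).symm
  · rintro ⟨c, hc0, hca⟩
    refine ⟨c ∘ (Fintype.equivFin ι), fun i => hc0 _, ?_⟩
    rw [hca, ← Equiv.sum_comp (Fintype.equivFin ι)
      (fun j => c j • (g ∘ (Fintype.equivFin ι).symm) j)]
    exact Finset.sum_congr rfl fun i _ => by simp


lemma intBox_convex (l u : Fin n → ℤ) : Convex ℝ (IntBox l u) := by
  intro x hx y hy α β hα hβ hαβ
  intro i
  have h1 := hx i; have h2 := hy i
  simp only [Pi.add_apply, Pi.smul_apply, smul_eq_mul]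
  have hll : (l i : ℝ) = α * l i + β * l i := by rw [← add_mul, hαβ, one_mul]
  have huu : (u i : ℝ) = α * u i + β * u i := by rw [← add_mul, hαβ, one_mul]
  constructor
  · rw [hll]
    exact add_le_add (mul_le_mul_of_nonneg_left h1.1 hα) (mul_le_mul_of_nonneg_left h2.1 hβ)
  · rw [huu]
    exact add_le_add (mul_le_mul_of_nonneg_left h1.2 hα) (mul_le_mul_of_nonneg_left h2.2 hβ)

lemma nbhd_in_box {x : E n} {z : Fin n → ℤ} {l u : Fin n → ℤ}
    (hx : x ∈ IntBox l u) (hz : z ∈ IntNbhd x) : coeZR z ∈ IntBox l u := by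
  intro i
  have h1 := (hx i).1; have h2 := (hx i).2
  have h3 := abs_lt.mp (hz i)
  constructor
  · have : (l i : ℝ) - 1 < (z i : ℝ) := by linarith [h3.2]
    have : (l i : ℤ) - 1 < z i := by exact_mod_cast this
    have : l i ≤ z i := by omega
    show (l i : ℝ) ≤ (z i : ℝ)
    exact_mod_cast this
  · have : (z i : ℝ) < (u i : ℝ) + 1 := by linarith [h3.1]
    have : (z i : ℤ) < u i + 1 := by exact_mod_cast this
    have : z i ≤ u i := by omega
    show (z i : ℝ) ≤ (u i : ℝ)
    exact_mod_cast this

/-- conv(S) ∩ box = conv(S ∩ box) for integrally convex S. -/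
lemma hull_box {S : Set (Fin n → ℤ)} (hS : IntegrallyConvexSet S) (l u : Fin n → ℤ) :
    convexHull ℝ (coeZR '' S) ∩ IntBox l u
      = convexHull ℝ (coeZR '' {z | z ∈ S ∧ coeZR z ∈ IntBox l u}) := by
  apply Set.Subset.antisymm
  · rintro x ⟨hxC, hxB⟩
    refine convexHull_mono ?_ (hS x hxC)
    apply Set.image_mono
    rintro z ⟨hzS, hzN⟩
    exact ⟨hzS, nbhd_in_box hxB hzN⟩
  · apply convexHull_min
    · rintro _ ⟨z, ⟨hzS, hzB⟩, rfl⟩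
      exact ⟨subset_convexHull ℝ _ ⟨z, hzS, rfl⟩, hzB⟩
    · exact (convex_convexHull ℝ _).inter (intBox_convex l u)

/-- integer points of conv(S) lie in S, for integrally convex S. -/
lemma lattice_mem {S : Set (Fin n → ℤ)} (hS : IntegrallyConvexSet S) {z : Fin n → ℤ}
    (hz : coeZR z ∈ convexHull ℝ (coeZR '' S)) : z ∈ S := by
  have h := hS _ hz
  have hne : (S ∩ IntNbhd (coeZR z)).Nonempty := by
    by_contra hc
    rw [Set.not_nonempty_iff_eq_empty] at hc
    rw [hc, Set.image_empty, convexHull_empty] at h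
    exact h
  obtain ⟨w, hwS, hwN⟩ := hne
  have : w = z := by
    funext i
    have := abs_lt.mp (hwN i)
    have h1 : (z i : ℝ) - (w i : ℝ) < 1 := by simpa [coeZR] using this.2
    have h2 : -1 < (z i : ℝ) - (w i : ℝ) := by
      have := this.1; simp only [coeZR] at this; linarith
    have h1' : (z i : ℤ) - w i < 1 := by exact_mod_cast h1
    have h2' : (-1 : ℤ) < z i - w i := by exact_mod_cast h2
    omega
  rwa [this] at hwS

/-- face of an integrally convex hull: local representation. -/
lemma face_lemma {S : Set (Fin n → ℤ)} (hS : IntegrallyConvexSet S) (a : E n) (cv : ℝ)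
    (hval : ∀ z ∈ S, dot a (coeZR z) ≤ cv) (p : E n)
    (hp : p ∈ convexHull ℝ (coeZR '' {z | z ∈ S ∧ dot a (coeZR z) = cv})) :
    p ∈ convexHull ℝ (coeZR '' {z | (z ∈ S ∧ dot a (coeZR z) = cv) ∧ z ∈ IntNbhd p}) := by
  classical
  have hpc : dot a p = cv := by
    have hsub : convexHull ℝ (coeZR '' {z | z ∈ S ∧ dot a (coeZR z) = cv})
        ⊆ {q | dot a q = cv} := by
      apply convexHull_min
      · rintro _ ⟨z, hz, rfl⟩; exact hz.2
      · exact convex_hyperplane (isLinearMap_dot a) cv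
    exact hsub hp
  have hpS : p ∈ convexHull ℝ (coeZR '' S) :=
    convexHull_mono (Set.image_mono fun z hz => hz.1) hp
  have h := hS p hpS
  rw [_root_.convexHull_eq] at h
  obtain ⟨ι, t, w, zf, hw0, hw1, hmem, hcen⟩ := h
  have hpsum : p = ∑ i ∈ t, w i • zf i := by
    rw [← hcen, Finset.centerMass_eq_of_sum_1 t zf hw1]
  have hterm : ∀ i ∈ t, dot a (zf i) ≤ cv := by
    intro i hi
    obtain ⟨ζ, hζ, hζe⟩ := hmem i hi
    rw [← hζe]; exact hval ζ hζ.1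
  have hzero : ∀ i ∈ t, w i * (cv - dot a (zf i)) = 0 := by
    have hsum0 : ∑ i ∈ t, w i * (cv - dot a (zf i)) = 0 := by
      have hdp : dot a p = ∑ i ∈ t, w i * dot a (zf i) := by
        rw [hpsum, dot_sum_right]
        exact Finset.sum_congr rfl fun i _ => dot_smul_right a (w i) (zf i)
      have : ∑ i ∈ t, w i * (cv - dot a (zf i))
          = (∑ i ∈ t, w i) * cv - ∑ i ∈ t, w i * dot a (zf i) := by
        rw [Finset.sum_mul, ← Finset.sum_sub_distrib]
        exact Finset.sum_congr rfl fun i _ => by ring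
      rw [this, hw1, ← hdp, hpc]; ring
    exact fun i hi => (Finset.sum_eq_zero_iff_of_nonneg (fun i hi =>
      mul_nonneg (hw0 i hi) (by linarith [hterm i hi]))).mp hsum0 i hi
  set t' : Finset ι := t.filter (fun i => w i ≠ 0) with ht'
  have hw1' : ∑ i ∈ t', w i = 1 := by
    rw [ht', Finset.sum_filter_ne_zero]; exact hw1
  have hmem' : ∀ i ∈ t', zf i ∈ coeZR '' {z | (z ∈ S ∧ dot a (coeZR z) = cv) ∧ z ∈ IntNbhd p} := by
    intro i hi
    have hit := (Finset.mem_filter.mp hi).1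
    have hwne := (Finset.mem_filter.mp hi).2
    obtain ⟨ζ, hζ, hζe⟩ := hmem i hit
    have heq : dot a (zf i) = cv := by
      have := hzero i hit
      rcases mul_eq_zero.mp this with h | h
      · exact absurd h hwne
      · linarith
    exact ⟨ζ, ⟨⟨hζ.1, by rw [hζe]; exact heq⟩, hζ.2⟩, hζe⟩
  have hcen' : t'.centerMass w zf = p := by
    rw [Finset.centerMass_eq_of_sum_1 t' zf hw1', hpsum]
    apply Finset.sum_subset (Finset.filter_subset _ t)
    intro i hit hnot
    have : w i = 0 := by
      by_contra hc
      exact hnot (Finset.mem_filter.mpr ⟨hit, hc⟩)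
    simp [this]
  have hfin := Finset.centerMass_mem_convexHull t'
    (fun i hi => hw0 i (Finset.mem_filter.mp hi).1) (by rw [hw1']; norm_num) hmem'
  rwa [hcen'] at hfin

/-- Part 1, box-integrality. -/
lemma part1_box {S : Set (Fin n → ℤ)} (hS : IntegrallyConvexSet S) :
    IsBoxInteger (convexHull ℝ (coeZR '' S)) := by
  intro l u _
  unfold IsIntegerPoly
  have hset : {z : Fin n → ℤ | coeZR z ∈ convexHull ℝ (coeZR '' S) ∩ IntBox l u}
      = {z | z ∈ S ∧ coeZR z ∈ IntBox l u} := by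
    ext z
    constructor
    · rintro ⟨h1, h2⟩; exact ⟨lattice_mem hS h1, h2⟩
    · rintro ⟨h1, h2⟩; exact ⟨subset_convexHull ℝ _ ⟨z, h1, rfl⟩, h2⟩
  rw [hset, hull_box hS l u]

/-- Part 2. -/
lemma part2 (P : Set (Fin n → ℝ)) (hpoly : IsPolyhedron P) (hbox : IsBoxInteger P) :
    IntegrallyConvexSet {z : Fin n → ℤ | coeZR z ∈ P} := by
  obtain ⟨m, A, b, hP⟩ := hpoly
  have hPconv : Convex ℝ P := by
    rw [hP]
    intro x hx y hy α β hα hβ hαβ j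
    have hx' := hx j; have hy' := hy j
    have : ∑ i, A j i * (α • x + β • y) i = α * ∑ i, A j i * x i + β * ∑ i, A j i * y i := by
      rw [Finset.mul_sum, Finset.mul_sum, ← Finset.sum_add_distrib]
      refine Finset.sum_congr rfl fun i _ => ?_
      simp only [Pi.add_apply, Pi.smul_apply, smul_eq_mul]; ring
    rw [this]
    have hbb : (b j : ℝ) = α * b j + β * b j := by rw [← add_mul, hαβ, one_mul]
    rw [hbb]
    exact add_le_add (mul_le_mul_of_nonneg_left hx' hα) (mul_le_mul_of_nonneg_left hy' hβ)
  intro x hx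
  set S : Set (Fin n → ℤ) := {z | coeZR z ∈ P} with hSdef
  have hxP : x ∈ P := by
    refine convexHull_min ?_ hPconv hx
    rintro _ ⟨z, hz, rfl⟩; exact hz
  set l : Fin n → ℤ := fun i => ⌊x i⌋ with hl
  set u : Fin n → ℤ := fun i => ⌈x i⌉ with hu
  have hlu : l ≤ u := fun i => Int.floor_le_ceil (x i)
  have hxB : x ∈ IntBox l u := fun i => ⟨Int.floor_le (x i), Int.le_ceil (x i)⟩
  have := hbox l u hlu
  unfold IsIntegerPoly at this
  have hxmem : x ∈ convexHull ℝ (coeZR '' {z : Fin n → ℤ | coeZR z ∈ P ∩ IntBox l u}) := by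
    rw [← this]; exact ⟨hxP, hxB⟩
  refine convexHull_mono ?_ hxmem
  apply Set.image_mono
  rintro z ⟨hzP, hzB⟩
  refine ⟨hzP, fun i => abs_lt.mpr ⟨?_, ?_⟩⟩
  · have h2 : (z i : ℝ) ≤ (u i : ℝ) := (hzB i).2
    have : (u i : ℝ) < x i + 1 := by
      rw [hu]; exact_mod_cast Int.ceil_lt_add_one (x i)
    linarith
  · have h1 : (l i : ℝ) ≤ (z i : ℝ) := (hzB i).1
    have : x i - 1 < (l i : ℝ) := by
      rw [hl]; exact_mod_cast Int.sub_one_lt_floor (x i)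
    linarith


lemma dot_sub_left (a b x : E n) : dot (a - b) x = dot a x - dot b x := by
  rw [dot_comm, dot_sub_right, dot_comm x a, dot_comm x b]

lemma dot_smul_left (c : ℝ) (a x : E n) : dot (c • a) x = c * dot a x := by
  rw [dot_comm, dot_smul_right, dot_comm]

lemma dot_expand (u v : E n) (t : ℝ) :
    dot (u - t • v) (u - t • v) = dot u u - 2*t*dot u v + t*t*dot v v := by
  rw [dot_sub_left, dot_sub_right, dot_sub_right, dot_smul_right, dot_smul_left,
    dot_smul_left, dot_smul_right, dot_comm v u]
  ring

lemma dot_self_eq_zero {v : E n} (h : dot v v = 0) : v = 0 := by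
  funext i
  have hterm := (Finset.sum_eq_zero_iff_of_nonneg
    (fun j (_ : j ∈ Finset.univ) => mul_self_nonneg (v j))).mp h i (Finset.mem_univ i)
  have := mul_self_eq_zero.mp hterm
  simpa using this

lemma dot_coord_le (v : E n) (i : Fin n) : v i * v i ≤ dot v v :=
  Finset.single_le_sum (fun j _ => mul_self_nonneg (v j)) (Finset.mem_univ i)

lemma coord_bound {v : E n} {K : ℝ} (hK : dot v v ≤ K) (i : Fin n) : |v i| ≤ K + 1 := by
  have h1 : |v i| * |v i| ≤ K := by rw [abs_mul_abs_self]; exact le_trans (dot_coord_le v i) hK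
  have h2 : 0 ≤ |v i| := abs_nonneg _
  nlinarith

/-- Hull into a halfspace. -/
lemma hull_halfspace (a : E n) (c : ℝ) (T : Set (Fin n → ℤ))
    (h : ∀ z ∈ T, dot a (coeZR z) ≤ c) :
    convexHull ℝ (coeZR '' T) ⊆ {q | dot a q ≤ c} := by
  apply convexHull_min
  · rintro _ ⟨z, hz, rfl⟩; exact h z hz
  · exact convex_halfSpace_le (isLinearMap_dot a) c

lemma hull_hyperplane (a : E n) (c : ℝ) (T : Set (Fin n → ℤ))
    (h : ∀ z ∈ T, dot a (coeZR z) = c) :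
    convexHull ℝ (coeZR '' T) ⊆ {q | dot a q = c} := by
  apply convexHull_min
  · rintro _ ⟨z, hz, rfl⟩; exact h z hz
  · exact convex_hyperplane (isLinearMap_dot a) c

/-- Extend a local support inequality to a global one (segment argument). -/
lemma seg_lemma {C : Set (E n)} (hC : Convex ℝ C) (a p : E n) (l u : Fin n → ℤ)
    (hp : p ∈ C) (hball : ∀ i, (l i : ℝ) ≤ p i - 1 ∧ p i + 1 ≤ (u i : ℝ))
    (hloc : ∀ y ∈ C ∩ IntBox l u, dot a y ≤ dot a p) :
    ∀ z ∈ C, dot a z ≤ dot a p := by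
  intro z hz
  by_contra hgt
  push_neg at hgt
  set D : ℝ := ∑ i, |z i - p i| with hD
  have hD0 : 0 ≤ D := Finset.sum_nonneg fun i _ => abs_nonneg _
  set t : ℝ := 1 / (1 + D) with ht
  have ht0 : 0 < t := by positivity
  have ht1 : t ≤ 1 := by
    rw [ht]; rw [div_le_one (by linarith)]; linarith
  have hyC : (1 - t) • p + t • z ∈ C := hC hp hz (by linarith) (le_of_lt ht0) (by ring)
  set y : E n := (1 - t) • p + t • z with hy
  have hybox : y ∈ IntBox l u := by
    intro i
    have hcoord : |z i - p i| ≤ D :=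
      Finset.single_le_sum (fun j _ => abs_nonneg (z j - p j)) (Finset.mem_univ i)
    have hyi : y i = p i + t * (z i - p i) := by
      simp only [hy, Pi.add_apply, Pi.smul_apply, smul_eq_mul]; ring
    have habs : |t * (z i - p i)| ≤ 1 := by
      rw [abs_mul, abs_of_pos ht0, ht]
      rw [div_mul_eq_mul_div, div_le_one (by linarith)]
      linarith
    have := abs_le.mp habs
    constructor
    · rw [hyi]; linarith [(hball i).1, this.1]
    · rw [hyi]; linarith [(hball i).2, this.2]
  have hle := hloc y ⟨hyC, hybox⟩
  have hyd : dot a y = (1 - t) * dot a p + t * dot a z := by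
    rw [hy, dot_add_right, dot_smul_right, dot_smul_right]
  rw [hyd] at hle
  nlinarith
/-- Projection onto a compact convex set, with support inequality. -/
lemma proj_lemma {Q : Set (E n)} (hQconv : Convex ℝ Q) (hQcomp : IsCompact Q)
    (hQne : Q.Nonempty) (x : E n) :
    ∃ p ∈ Q, (∀ y ∈ Q, dot (x - p) y ≤ dot (x - p) p) ∧
      (∀ y ∈ Q, dot (x - p) (x - p) ≤ dot (x - y) (x - y)) := by
  have hcont : Continuous (fun y : E n => dot (x - y) (x - y)) := by
    unfold dot
    apply continuous_finset_sum
    intro i _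
    exact ((continuous_const.sub (continuous_apply i)).mul
      (continuous_const.sub (continuous_apply i)))
  obtain ⟨p, hpQ, hmin⟩ := hQcomp.exists_isMinOn hQne hcont.continuousOn
  refine ⟨p, hpQ, ?_, fun y hy => hmin hy⟩
  intro y hy
  by_contra hgt
  push_neg at hgt
  have hd : 0 < dot (x - p) (y - p) := by
    have : dot (x - p) (y - p) = dot (x - p) y - dot (x - p) p := dot_sub_right _ _ _
    linarith [this]
  set d : ℝ := dot (x - p) (y - p) with hdd
  set q : ℝ := dot (y - p) (y - p) with hq
  have hq0 : 0 ≤ q := dot_nonneg_self _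
  set t : ℝ := min 1 (d / (1 + q)) with htdef
  have ht0 : 0 < t := lt_min one_pos (by positivity)
  have ht1 : t ≤ 1 := min_le_left _ _
  have htq : t * (1 + q) ≤ d := by
    have : t ≤ d / (1 + q) := min_le_right _ _
    rw [le_div_iff₀ (by linarith)] at this
    exact this
  have hytQ : (1 - t) • p + t • y ∈ Q := hQconv hpQ hy (by linarith) (le_of_lt ht0) (by ring)
  have hsub : x - ((1 - t) • p + t • y) = (x - p) - t • (y - p) := by
    funext i
    simp only [Pi.sub_apply, Pi.add_apply, Pi.smul_apply, smul_eq_mul]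
    ring
  have hexp : dot (x - ((1 - t) • p + t • y)) (x - ((1 - t) • p + t • y))
      = dot (x - p) (x - p) - 2 * t * d + t * t * q := by
    rw [hsub, dot_expand, hdd, hq]
  have hge := hmin hytQ
  simp only [Set.mem_setOf_eq] at hge
  rw [hexp] at hge
  -- hge : dot (x-p)(x-p) ≤ dot (x-p)(x-p) - 2td + t²q
  have h1 : 2 * t * d ≤ t * t * q := by
    have : (0:ℝ) ≤ - (2 * t * d) + t * t * q := by linarith [hge]
    linarith
  have h2 : t * q ≤ d := by nlinarith
  nlinarith

lemma concentrate {T : Set (Fin n → ℤ)} (a : E n) (cv : ℝ)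
    (hval : ∀ z ∈ T, dot a (coeZR z) ≤ cv)
    {p : E n} (hp : p ∈ convexHull ℝ (coeZR '' T)) (hpc : dot a p = cv) :
    p ∈ convexHull ℝ (coeZR '' {z | z ∈ T ∧ dot a (coeZR z) = cv}) := by
  classical
  rw [_root_.convexHull_eq] at hp
  obtain ⟨ι, t, w, zf, hw0, hw1, hmem, hcen⟩ := hp
  have hpsum : p = ∑ i ∈ t, w i • zf i := by
    rw [← hcen, Finset.centerMass_eq_of_sum_1 t zf hw1]
  have hterm : ∀ i ∈ t, dot a (zf i) ≤ cv := by
    intro i hi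
    obtain ⟨ζ, hζ, hζe⟩ := hmem i hi
    rw [← hζe]; exact hval ζ hζ
  have hzero : ∀ i ∈ t, w i * (cv - dot a (zf i)) = 0 := by
    have hsum0 : ∑ i ∈ t, w i * (cv - dot a (zf i)) = 0 := by
      have hdp : dot a p = ∑ i ∈ t, w i * dot a (zf i) := by
        rw [hpsum, dot_sum_right]
        exact Finset.sum_congr rfl fun i _ => dot_smul_right a (w i) (zf i)
      have : ∑ i ∈ t, w i * (cv - dot a (zf i))
          = (∑ i ∈ t, w i) * cv - ∑ i ∈ t, w i * dot a (zf i) := by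
        rw [Finset.sum_mul, ← Finset.sum_sub_distrib]
        exact Finset.sum_congr rfl fun i _ => by ring
      rw [this, hw1, ← hdp, hpc]; ring
    exact fun i hi => (Finset.sum_eq_zero_iff_of_nonneg (fun i hi =>
      mul_nonneg (hw0 i hi) (by linarith [hterm i hi]))).mp hsum0 i hi
  set t' : Finset ι := t.filter (fun i => w i ≠ 0) with ht'
  have hw1' : ∑ i ∈ t', w i = 1 := by
    rw [ht', Finset.sum_filter_ne_zero]; exact hw1
  have hmem' : ∀ i ∈ t', zf i ∈ coeZR '' {z | z ∈ T ∧ dot a (coeZR z) = cv} := by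
    intro i hi
    have hit := (Finset.mem_filter.mp hi).1
    have hwne := (Finset.mem_filter.mp hi).2
    obtain ⟨ζ, hζ, hζe⟩ := hmem i hit
    have heq : dot a (zf i) = cv := by
      have := hzero i hit
      rcases mul_eq_zero.mp this with h | h
      · exact absurd h hwne
      · linarith
    exact ⟨ζ, ⟨hζ, by rw [hζe]; exact heq⟩, hζe⟩
  have hcen' : t'.centerMass w zf = p := by
    rw [Finset.centerMass_eq_of_sum_1 t' zf hw1', hpsum]
    apply Finset.sum_subset (Finset.filter_subset _ t)
    intro i hit hnot
    have : w i = 0 := by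
      by_contra hc
      exact hnot (Finset.mem_filter.mpr ⟨hit, hc⟩)
    simp [this]
  have hfin := Finset.centerMass_mem_convexHull t'
    (fun i hi => hw0 i (Finset.mem_filter.mp hi).1) (by rw [hw1']; norm_num) hmem'
  rwa [hcen'] at hfin

lemma coeZR_sub (a b : Fin n → ℤ) : coeZR (a - b) = coeZR a - coeZR b := by
  funext i; simp [coeZR]

lemma box_set_finite (l u : Fin n → ℤ) : {z : Fin n → ℤ | coeZR z ∈ IntBox l u}.Finite := by
  apply Set.Finite.subset (Set.Finite.pi (fun i : Fin n => Set.finite_Icc (l i) (u i)))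
  intro z hz
  simp only [Set.mem_pi, Set.mem_univ, forall_true_left, Set.mem_Icc]
  intro i
  have h1 : (l i : ℝ) ≤ (z i : ℝ) := (hz i).1
  have h2 : (z i : ℝ) ≤ (u i : ℝ) := (hz i).2
  exact ⟨by exact_mod_cast h1, by exact_mod_cast h2⟩

lemma part1_poly {S : Set (Fin n → ℤ)} (hSne : S.Nonempty) (hS : IntegrallyConvexSet S) :
    IsPolyhedron (convexHull ℝ (coeZR '' S)) := by
  classical
  set C : Set (E n) := convexHull ℝ (coeZR '' S) with hC
  -- master normal candidates
  set Δfin : Finset (E n) :=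
    (Fintype.piFinset (fun _ : Fin n => Finset.Icc (-3 : ℤ) 3)).image coeZR with hΔ
  choose k g hg using (weyl (n := n))
  set ROWS : Finset (E n) := Δfin.powerset.biUnion
    (fun M => Finset.univ.image (g M)) with hROWS
  set σ : E n → ℝ := fun a => sSup ((fun z => dot a z) '' (coeZR '' S)) with hσ
  set ROWS' : Finset (E n) :=
    ROWS.filter (fun a => BddAbove ((fun z => dot a z) '' (coeZR '' S))) with hROWS'
  refine ⟨ROWS'.card, fun j => (ROWS'.equivFin.symm j : E n),
    fun j => σ ((ROWS'.equivFin.symm j : E n)), ?_⟩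
  apply Set.Subset.antisymm
  · -- C ⊆ polyhedron
    intro x hx j
    set a : E n := (ROWS'.equivFin.symm j : E n) with ha
    have hmem : a ∈ ROWS' := (ROWS'.equivFin.symm j).2
    have hbdd : BddAbove ((fun z => dot a z) '' (coeZR '' S)) :=
      (Finset.mem_filter.mp hmem).2
    show dot a x ≤ σ a
    have hsub : C ⊆ {y | dot a y ≤ σ a} := by
      apply convexHull_min
      · rintro _ ⟨z, hz, rfl⟩
        exact le_csSup hbdd ⟨coeZR z, ⟨z, hz, rfl⟩, rfl⟩
      · exact convex_halfSpace_le (isLinearMap_dot a) _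
    exact hsub hx
  · -- polyhedron ⊆ C
    intro x hx
    by_contra hxC
    obtain ⟨z0, hz0⟩ := hSne
    set K : ℝ := dot (x - coeZR z0) (x - coeZR z0) with hK
    have hK0 : 0 ≤ K := dot_nonneg_self _
    set R : ℤ := ⌈K⌉ + 3 with hR
    have hRK : K + 3 ≤ (R : ℝ) := by
      have := Int.le_ceil K
      push_cast [hR]
      linarith
    set l : Fin n → ℤ := fun i => ⌊x i⌋ - R with hl
    set u : Fin n → ℤ := fun i => ⌈x i⌉ + R with hu
    set Fset : Set (Fin n → ℤ) := {z | z ∈ S ∧ coeZR z ∈ IntBox l u} with hFset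
    set Q : Set (E n) := convexHull ℝ (coeZR '' Fset) with hQ
    have hQeq : C ∩ IntBox l u = Q := hull_box hS l u
    have hQconv : Convex ℝ Q := convex_convexHull ℝ _
    have hQcomp : IsCompact Q := by
      apply Set.Finite.isCompact_convexHull
      exact Set.Finite.image _ ((box_set_finite l u).subset (fun z hz => hz.2))
    have hz0box : coeZR z0 ∈ IntBox l u := by
      intro i
      have hco := coord_bound (le_refl K) i
      have h1 : |x i - (z0 i : ℝ)| ≤ K + 1 := by
        simpa [coeZR] using hco
      have := abs_le.mp h1
      constructor
      · have hfl : (⌊x i⌋ : ℝ) ≤ x i := Int.floor_le (x i)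
        have : x i - (K+1) ≤ (z0 i : ℝ) := by linarith [this.2]
        show ((⌊x i⌋ - R : ℤ) : ℝ) ≤ (z0 i : ℝ)
        push_cast
        linarith
      · have hcl : x i ≤ (⌈x i⌉ : ℝ) := Int.le_ceil (x i)
        have : (z0 i : ℝ) ≤ x i + (K+1) := by linarith [this.1]
        show (z0 i : ℝ) ≤ ((⌈x i⌉ + R : ℤ) : ℝ)
        push_cast
        linarith
    have hQne : Q.Nonempty := ⟨coeZR z0, subset_convexHull ℝ _ ⟨z0, ⟨hz0, hz0box⟩, rfl⟩⟩
    obtain ⟨p, hpQ, hsupp, hmin⟩ := proj_lemma hQconv hQcomp hQne x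
    have hpC : p ∈ C := by
      rw [← hQeq] at hpQ; exact hpQ.1
    have hpbox : p ∈ IntBox l u := by
      rw [← hQeq] at hpQ; exact hpQ.2
    -- p is near x
    have hpxK : dot (x - p) (x - p) ≤ K := hmin (coeZR z0)
      (subset_convexHull ℝ _ ⟨z0, ⟨hz0, hz0box⟩, rfl⟩)
    have hpx : ∀ i, |x i - p i| ≤ K + 1 := by
      intro i
      have := coord_bound hpxK i
      simpa using this
    -- x ∉ Q
    have hxQ : x ∉ Q := by
      intro h
      rw [← hQeq] at h
      exact hxC h.1
    have hd0 : 0 < dot (x - p) (x - p) := by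
      rcases lt_or_eq_of_le (dot_nonneg_self (x - p)) with h | h
      · exact h
      · exfalso
        have : x - p = 0 := dot_self_eq_zero h.symm
        have : x = p := by
          funext i
          have := congrFun this i
          simp only [Pi.sub_apply, Pi.zero_apply] at this
          linarith
        rw [this] at hxQ
        exact hxQ hpQ
    -- global validity of a₀ = x - p at level cv = dot (x-p) p
    have hball : ∀ i, (l i : ℝ) ≤ p i - 1 ∧ p i + 1 ≤ (u i : ℝ) := by
      intro i
      have h1 := abs_le.mp (hpx i)
      constructor
      · have hfl : (⌊x i⌋ : ℝ) ≤ x i := Int.floor_le (x i)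
        show ((⌊x i⌋ - R : ℤ) : ℝ) ≤ p i - 1
        push_cast
        linarith [h1.2]
      · have hcl : x i ≤ (⌈x i⌉ : ℝ) := Int.le_ceil (x i)
        show p i + 1 ≤ ((⌈x i⌉ + R : ℤ) : ℝ)
        push_cast
        linarith [h1.1]
    have hval0 : ∀ z ∈ C, dot (x - p) z ≤ dot (x - p) p := by
      apply seg_lemma (convex_convexHull ℝ _) (x - p) p l u hpC hball
      intro y hy
      rw [hQeq] at hy
      exact hsupp y hy
    set cv : ℝ := dot (x - p) p with hcv
    -- p lies in the hull of the face lattice points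
    have hpface : p ∈ convexHull ℝ (coeZR '' {z | z ∈ S ∧ dot (x - p) (coeZR z) = cv}) := by
      have h1 : p ∈ convexHull ℝ (coeZR '' {z | z ∈ Fset ∧ dot (x - p) (coeZR z) = cv}) := by
        apply concentrate (x - p) cv
        · intro z hz
          exact hval0 (coeZR z) (subset_convexHull ℝ _ ⟨z, hz.1, rfl⟩)
        · exact hpQ
        · rfl
      refine convexHull_mono (Set.image_mono ?_) h1
      rintro z ⟨hz1, hz2⟩
      exact ⟨hz1.1, hz2⟩
    have hpW := face_lemma hS (x - p) cv
      (fun z hz => hval0 (coeZR z) (subset_convexHull ℝ _ ⟨z, hz, rfl⟩)) p hpface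
    set W : Set (Fin n → ℤ) :=
      {z | (z ∈ S ∧ dot (x - p) (coeZR z) = cv) ∧ z ∈ IntNbhd p} with hW
    -- W is nonempty and contained in the small box around p
    have hWne : W.Nonempty := by
      by_contra hc
      rw [Set.not_nonempty_iff_eq_empty] at hc
      rw [hc, Set.image_empty, convexHull_empty] at hpW
      exact hpW
    obtain ⟨w0, hw0W⟩ := hWne
    set l0 : Fin n → ℤ := fun i => ⌊p i⌋ with hl0
    set l' : Fin n → ℤ := fun i => l0 i - 1 with hl'
    set u' : Fin n → ℤ := fun i => l0 i + 2 with hu'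
    have hWbox : ∀ z ∈ W, coeZR z ∈ IntBox l' u' := by
      intro z hzW i
      have hN := abs_lt.mp (hzW.2 i)
      have hfl : (⌊p i⌋ : ℝ) ≤ p i := Int.floor_le (p i)
      have hfu : p i < (⌊p i⌋ : ℝ) + 1 := Int.lt_floor_add_one (p i)
      have hzl : ((l0 i : ℤ) : ℝ) - 1 < (z i : ℝ) := by
        simp only [hl0]
        push_cast
        linarith [hN.2]
      have hzu : (z i : ℝ) < ((l0 i : ℤ) : ℝ) + 2 := by
        simp only [hl0]
        push_cast
        linarith [hN.1]
      constructor
      · show ((l0 i - 1 : ℤ) : ℝ) ≤ (z i : ℝ)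
        have : (l0 i : ℤ) - 1 < z i := by exact_mod_cast hzl
        have : (l0 i : ℤ) - 1 ≤ z i := by omega
        push_cast
        exact_mod_cast by push_cast at this ⊢; linarith [this]
      · show (z i : ℝ) ≤ ((l0 i + 2 : ℤ) : ℝ)
        have h' : (z i : ℤ) < l0 i + 2 := by exact_mod_cast hzu
        have h'' : (z i : ℤ) ≤ l0 i + 2 := by omega
        exact_mod_cast h''
    set F'set : Set (Fin n → ℤ) := {z | z ∈ S ∧ coeZR z ∈ IntBox l' u'} with hF'
    have hWF : W ⊆ F'set := fun z hz => ⟨hz.1.1, hWbox z hz⟩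
    have hWfin : W.Finite := ((box_set_finite l' u').subset hWbox).subset (fun z hz => hz)
    have hF'fin : F'set.Finite := (box_set_finite l' u').subset (fun z hz => hz.2)
    set Wfin : Finset (Fin n → ℤ) := hWfin.toFinset with hWfin'
    set F'fin : Finset (Fin n → ℤ) := hF'fin.toFinset with hF'fin'
    set M0 : Finset (E n) :=
      ((Wfin ×ˢ Wfin).image (fun q => coeZR q.1 - coeZR q.2)) ∪
      ((F'fin ×ˢ Wfin).image (fun q => coeZR q.1 - coeZR q.2)) with hM0
    -- M0 ⊆ Δfin
    have hM0sub : M0 ⊆ Δfin := by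
      intro v hv
      have hbox3 : ∀ z1 z2 : Fin n → ℤ, z1 ∈ F'set → z2 ∈ F'set →
          coeZR z1 - coeZR z2 ∈ Δfin := by
        intro z1 z2 h1 h2
        rw [hΔ]
        refine Finset.mem_image.mpr ⟨z1 - z2, ?_, coeZR_sub z1 z2⟩
        rw [Fintype.mem_piFinset]
        intro i
        have a11 : ((l' i : ℤ) : ℝ) ≤ (z1 i : ℝ) := (h1.2 i).1
        have a12 : (z1 i : ℝ) ≤ ((u' i : ℤ) : ℝ) := (h1.2 i).2
        have a21 : ((l' i : ℤ) : ℝ) ≤ (z2 i : ℝ) := (h2.2 i).1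
        have a22 : (z2 i : ℝ) ≤ ((u' i : ℤ) : ℝ) := (h2.2 i).2
        have b1 : (l' i : ℤ) ≤ z1 i ∧ z1 i ≤ u' i := ⟨by exact_mod_cast a11, by exact_mod_cast a12⟩
        have b2 : (l' i : ℤ) ≤ z2 i ∧ z2 i ≤ u' i := ⟨by exact_mod_cast a21, by exact_mod_cast a22⟩
        have hlu' : l' i = l0 i - 1 := rfl
        have huu' : u' i = l0 i + 2 := rfl
        rw [hlu'] at b1 b2
        rw [huu'] at b1 b2
        rw [Finset.mem_Icc]
        constructor <;> [skip; skip] <;> simp only [Pi.sub_apply] <;> omega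
      rw [hM0] at hv
      rcases Finset.mem_union.mp hv with h | h
      · obtain ⟨q, hq, rfl⟩ := Finset.mem_image.mp h
        have hq' := Finset.mem_product.mp hq
        exact hbox3 q.1 q.2 (hWF (hWfin.mem_toFinset.mp hq'.1))
          (hWF (hWfin.mem_toFinset.mp hq'.2))
      · obtain ⟨q, hq, rfl⟩ := Finset.mem_image.mp h
        have hq' := Finset.mem_product.mp hq
        exact hbox3 q.1 q.2 (hF'fin.mem_toFinset.mp hq'.1)
          (hWF (hWfin.mem_toFinset.mp hq'.2))
    -- a₀ = x - p satisfies the M0 system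
    have ha0M : ∀ mv ∈ M0, dot mv (x - p) ≤ 0 := by
      intro mv hmv
      rw [hM0] at hmv
      have key : ∀ z1 z2 : Fin n → ℤ, z1 ∈ S → z2 ∈ W →
          dot (coeZR z1 - coeZR z2) (x - p) ≤ 0 := by
        intro z1 z2 h1 h2
        rw [dot_sub_left, dot_comm (coeZR z1), dot_comm (coeZR z2)]
        have v1 : dot (x - p) (coeZR z1) ≤ cv :=
          hval0 (coeZR z1) (subset_convexHull ℝ _ ⟨z1, h1, rfl⟩)
        have v2 : dot (x - p) (coeZR z2) = cv := h2.1.2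
        linarith
      rcases Finset.mem_union.mp hmv with h | h
      · obtain ⟨q, hq, rfl⟩ := Finset.mem_image.mp h
        have hq' := Finset.mem_product.mp hq
        exact key q.1 q.2 (hWfin.mem_toFinset.mp hq'.1).1.1 (hWfin.mem_toFinset.mp hq'.2)
      · obtain ⟨q, hq, rfl⟩ := Finset.mem_image.mp h
        have hq' := Finset.mem_product.mp hq
        exact key q.1 q.2 (hF'fin.mem_toFinset.mp hq'.1).1 (hWfin.mem_toFinset.mp hq'.2)
    obtain ⟨c, hc0, hca⟩ := (hg M0 (x - p)).mp ha0M
    -- find a generator with positive inner product with x - p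
    have hsum : dot (x - p) (x - p) = ∑ i, c i * dot (g M0 i) (x - p) := by
      calc dot (x - p) (x - p) = dot (x - p) (∑ i, c i • g M0 i) := by rw [← hca]
        _ = ∑ i, c i * dot (g M0 i) (x - p) := by
            rw [dot_sum_right]
            exact Finset.sum_congr rfl fun i _ => by rw [dot_smul_right, dot_comm]
    have hex : ∃ i0, 0 < dot (g M0 i0) (x - p) := by
      by_contra hc
      push_neg at hc
      have : ∑ i, c i * dot (g M0 i) (x - p) ≤ 0 :=
        Finset.sum_nonpos fun i _ => mul_nonpos_of_nonneg_of_nonpos (hc0 i) (hc i)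
      linarith [hsum ▸ hd0]
    obtain ⟨i0, hi0⟩ := hex
    set av : E n := g M0 i0 with hav
    -- av belongs to the cone, hence satisfies the M0 system
    have havM : ∀ mv ∈ M0, dot mv av ≤ 0 := by
      refine (hg M0 av).mpr ⟨fun j => if j = i0 then 1 else 0, fun j => by positivity, ?_⟩
      have h1 : ∀ j, (if j = i0 then (1:ℝ) else 0) • g M0 j = if j = i0 then g M0 j else 0 := by
        intro j; split <;> simp
      rw [Finset.sum_congr rfl (fun j _ => h1 j), Finset.sum_ite_eq' Finset.univ i0 (g M0)]
      simp [hav]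
    -- consequences: av is constant on W and valid on F'
    have havW : ∀ z ∈ W, dot av (coeZR z) = dot av (coeZR w0) := by
      intro z hz
      have hmem1 : coeZR z - coeZR w0 ∈ M0 := by
        rw [hM0]
        refine Finset.mem_union_left _ (Finset.mem_image.mpr ⟨(z, w0), ?_, rfl⟩)
        exact Finset.mem_product.mpr ⟨hWfin.mem_toFinset.mpr hz, hWfin.mem_toFinset.mpr hw0W⟩
      have hmem2 : coeZR w0 - coeZR z ∈ M0 := by
        rw [hM0]
        refine Finset.mem_union_left _ (Finset.mem_image.mpr ⟨(w0, z), ?_, rfl⟩)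
        exact Finset.mem_product.mpr ⟨hWfin.mem_toFinset.mpr hw0W, hWfin.mem_toFinset.mpr hz⟩
      have e1 := havM _ hmem1
      have e2 := havM _ hmem2
      rw [dot_sub_left, dot_comm (coeZR z), dot_comm (coeZR w0)] at e1
      rw [dot_sub_left, dot_comm (coeZR z), dot_comm (coeZR w0)] at e2
      linarith
    have havF : ∀ z ∈ F'set, dot av (coeZR z) ≤ dot av (coeZR w0) := by
      intro z hz
      have hmem1 : coeZR z - coeZR w0 ∈ M0 := by
        rw [hM0]
        refine Finset.mem_union_right _ (Finset.mem_image.mpr ⟨(z, w0), ?_, rfl⟩)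
        exact Finset.mem_product.mpr ⟨hF'fin.mem_toFinset.mpr hz, hWfin.mem_toFinset.mpr hw0W⟩
      have e1 := havM _ hmem1
      rw [dot_sub_left, dot_comm (coeZR z), dot_comm (coeZR w0)] at e1
      linarith
    set ca : ℝ := dot av (coeZR w0) with hca'
    -- dot av p = ca
    have hpa : dot av p = ca := by
      have hsub : convexHull ℝ (coeZR '' W) ⊆ {q | dot av q = ca} :=
        hull_hyperplane av ca W havW
      exact hsub hpW
    -- local support of av on C ∩ small box
    have hloc : ∀ y ∈ C ∩ IntBox l' u', dot av y ≤ dot av p := by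
      intro y hy
      rw [hull_box hS l' u'] at hy
      have := hull_halfspace av ca F'set havF hy
      rw [hpa]
      exact this
    -- global validity via segment argument
    have hball' : ∀ i, (l' i : ℝ) ≤ p i - 1 ∧ p i + 1 ≤ (u' i : ℝ) := by
      intro i
      have hfl : (⌊p i⌋ : ℝ) ≤ p i := Int.floor_le (p i)
      have hfu : p i < (⌊p i⌋ : ℝ) + 1 := Int.lt_floor_add_one (p i)
      constructor
      · show ((l0 i - 1 : ℤ) : ℝ) ≤ p i - 1
        simp only [hl0]
        push_cast
        linarith
      · show p i + 1 ≤ ((l0 i + 2 : ℤ) : ℝ)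
        simp only [hl0]
        push_cast
        linarith
    have havGlobal : ∀ z ∈ C, dot av z ≤ dot av p :=
      seg_lemma (convex_convexHull ℝ _) av p l' u' hpC hball' hloc
    -- av is a row of the polyhedron
    have havROWS : av ∈ ROWS := by
      rw [hROWS]
      refine Finset.mem_biUnion.mpr ⟨M0, Finset.mem_powerset.mpr hM0sub, ?_⟩
      exact Finset.mem_image.mpr ⟨i0, Finset.mem_univ i0, rfl⟩
    have hbddav : BddAbove ((fun z => dot av z) '' (coeZR '' S)) := by
      refine ⟨dot av p, ?_⟩
      rintro y ⟨w, hw, rfl⟩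
      exact havGlobal w (subset_convexHull ℝ _ hw)
    have havROWS' : av ∈ ROWS' := Finset.mem_filter.mpr ⟨havROWS, hbddav⟩
    -- derive the contradiction
    set j : Fin ROWS'.card := ROWS'.equivFin ⟨av, havROWS'⟩ with hj
    have hAj : (ROWS'.equivFin.symm j : E n) = av := by
      rw [hj, Equiv.symm_apply_apply]
    have hxj := hx j
    have hxj' : dot av x ≤ σ av := by
      rw [← hAj]
      exact hxj
    have hσle : σ av ≤ dot av p := by
      apply csSup_le
      · exact ⟨dot av (coeZR z0), ⟨coeZR z0, ⟨z0, hz0, rfl⟩, rfl⟩⟩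
      · rintro y ⟨w, hw, rfl⟩
        exact havGlobal w (subset_convexHull ℝ _ hw)
    have hpos : 0 < dot av x - dot av p := by
      rw [← dot_sub_right]
      exact hi0
    linarith


theorem stmt5 {n : ℕ} :
    (∀ S : Set (Fin n → ℤ), S.Nonempty → IntegrallyConvexSet S →
      IsPolyhedron (convexHull ℝ (coeZR '' S)) ∧ IsBoxInteger (convexHull ℝ (coeZR '' S))) ∧
    (∀ P : Set (Fin n → ℝ), IsPolyhedron P → IsBoxInteger P →
      IntegrallyConvexSet {z : Fin n → ℤ | coeZR z ∈ P}) := by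
  constructor
  · intro S hne hic
    exact ⟨part1_poly hne hic, part1_box hic⟩
  · exact part2
end
end

section
/- Let S = {(1,1,0,0), (0,1,1,0), (1,0,1,0), (0,0,0,1)} ⊆ ℤ⁴ and let P be its convex hull. Then the 2-dilation 2P is not box-integer: the point (1,1,1,1/2) belongs to 2P, and (2P) ∩ [l,u] consists only of the point (1,1,1,1/2) for l = (1,1,1,0) and u = (1,1,1,1); in particular 2P ∩ [l,u] contains no integer point while being nonempty. -/
noncomputable section

def S6 : Set (Fin 4 → ℤ) := {![1,1,0,0], ![0,1,1,0], ![1,0,1,0], ![0,0,0,1]}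

def P6 : Set (Fin 4 → ℝ) := convexHull ℝ (coeZR '' S6)

/-- the 2-dilation of P6 -/
def P6d : Set (Fin 4 → ℝ) := {x | (2⁻¹ : ℝ) • x ∈ P6}

def v6 : Fin 4 → ℝ := ![1, 1, 1, 1/2]

def box6 : Set (Fin 4 → ℝ) :=
  {x | ∀ i, ((![1,1,1,0] : Fin 4 → ℤ) i : ℝ) ≤ x i ∧ x i ≤ ((![1,1,1,1] : Fin 4 → ℤ) i : ℝ)}

lemma hyp_convex : Convex ℝ {y : Fin 4 → ℝ | y 0 + y 1 + y 2 + 2 * y 3 = 2} := by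
  intro x hx y hy a b ha hb hab
  simp only [Set.mem_setOf_eq, Pi.add_apply, Pi.smul_apply, smul_eq_mul] at *
  linear_combination a * hx + b * hy + 2 * hab

lemma P6_sub : P6 ⊆ {y : Fin 4 → ℝ | y 0 + y 1 + y 2 + 2 * y 3 = 2} := by
  rw [P6]
  apply convexHull_min _ hyp_convex
  rintro y ⟨z, hz, rfl⟩
  simp only [S6, Set.mem_insert_iff, Set.mem_singleton_iff] at hz
  rcases hz with rfl | rfl | rfl | rfl <;> simp [coeZR] <;> norm_num

lemma v6_mem : v6 ∈ P6d := by
  have hconv := convex_convexHull ℝ (coeZR '' S6)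
  have h1 : coeZR ![1,1,0,0] ∈ P6 :=
    subset_convexHull ℝ _ ⟨_, by simp [S6], rfl⟩
  have h2 : coeZR ![0,1,1,0] ∈ P6 :=
    subset_convexHull ℝ _ ⟨_, by simp [S6], rfl⟩
  have h3 : coeZR ![1,0,1,0] ∈ P6 :=
    subset_convexHull ℝ _ ⟨_, by simp [S6], rfl⟩
  have h4 : coeZR ![0,0,0,1] ∈ P6 :=
    subset_convexHull ℝ _ ⟨_, by simp [S6], rfl⟩
  have h12 := hconv h1 h2 (by norm_num : (0:ℝ) ≤ 1/2) (by norm_num : (0:ℝ) ≤ 1/2) (by norm_num)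
  have h34 := hconv h3 h4 (by norm_num : (0:ℝ) ≤ 1/2) (by norm_num : (0:ℝ) ≤ 1/2) (by norm_num)
  have h := hconv h12 h34 (by norm_num : (0:ℝ) ≤ 1/2) (by norm_num : (0:ℝ) ≤ 1/2) (by norm_num)
  have heq : (2⁻¹ : ℝ) • v6 =
      (1/2 : ℝ) • ((1/2 : ℝ) • coeZR ![1,1,0,0] + (1/2 : ℝ) • coeZR ![0,1,1,0]) +
      (1/2 : ℝ) • ((1/2 : ℝ) • coeZR ![1,0,1,0] + (1/2 : ℝ) • coeZR ![0,0,0,1]) := by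
    funext i
    fin_cases i <;> simp [coeZR, v6] <;> norm_num
  show (2⁻¹ : ℝ) • v6 ∈ P6
  rw [heq]
  exact h

lemma eq_single : P6d ∩ box6 = {v6} := by
  ext x
  constructor
  · rintro ⟨hx, hbox⟩
    have hrel := P6_sub hx
    simp only [Set.mem_setOf_eq, Pi.smul_apply, smul_eq_mul] at hrel
    have h0 := hbox 0
    have h1 := hbox 1
    have h2 := hbox 2
    have h3 := hbox 3
    simp only [Matrix.cons_val_zero, Matrix.cons_val_one, Matrix.head_cons,
      Matrix.cons_val_two, Matrix.tail_cons, Matrix.cons_val_three] at h0 h1 h2 h3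
    funext i
    fin_cases i <;> simp [v6] <;> push_cast at h0 h1 h2 h3 <;> linarith
  · rintro rfl
    refine ⟨v6_mem, ?_⟩
    intro i
    fin_cases i <;> norm_num [v6]

theorem stmt6 :
    v6 ∈ P6d ∧ P6d ∩ box6 = {v6} ∧ (P6d ∩ box6).Nonempty ∧
      ∀ z : Fin 4 → ℤ, coeZR z ∉ P6d ∩ box6 := by
  refine ⟨v6_mem, eq_single, ?_, ?_⟩
  · rw [eq_single]; exact ⟨v6, rfl⟩
  · intro z hz
    rw [eq_single] at hz
    have h3 := congrFun hz 3
    simp [coeZR, v6] at h3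
    have : (2 * z 3 : ℝ) = 1 := by linarith
    have : (2 * z 3 : ℤ) = 1 := by exact_mod_cast this
    omega
end
end

section
/- The intersection of two integrally convex sets need not be integrally convex: S₁ = {(0,0,0), (0,1,1), (1,1,0), (1,2,1)} and S₂ = {(0,0,0), (0,1,0), (1,1,1), (1,2,1)} are both integrally convex subsets of ℤ³, but S₁ ∩ S₂ = {(0,0,0), (1,2,1)} is not integrally convex. -/
noncomputable section

def S81 : Set (Fin 3 → ℤ) := {![0,0,0], ![0,1,1], ![1,1,0], ![1,2,1]}

def S82 : Set (Fin 3 → ℤ) := {![0,0,0], ![0,1,0], ![1,1,1], ![1,2,1]}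

lemma combo3' {E : Type*} [AddCommGroup E] [Module ℝ E] {A : Set E} {p q r x : E} {α β γ : ℝ}
    (hα : 0 ≤ α) (hβ : 0 ≤ β) (hγ : 0 ≤ γ) (hsum : α + β + γ = 1)
    (hp : 0 < α → p ∈ A) (hq : 0 < β → q ∈ A) (hr : 0 < γ → r ∈ A)
    (hx : x = α • p + β • q + γ • r) : x ∈ convexHull ℝ A := by
  have hc : x = Finset.univ.centerMass ![α, β, γ] ![p, q, r] := by
    rw [Finset.centerMass]
    simp [Fin.sum_univ_three, hsum, hx]
  rw [hc, ← Finset.centerMass_filter_ne_zero]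
  apply Finset.centerMass_mem_convexHull
  · intro i hi; fin_cases i <;> simpa using by assumption
  · rw [Finset.sum_filter_ne_zero]
    simp [Fin.sum_univ_three, hsum]
  · intro i hi
    simp only [Finset.mem_filter] at hi
    fin_cases i <;> simp_all <;> [exact hp (lt_of_le_of_ne hα (Ne.symm hi)); exact hq (lt_of_le_of_ne hβ (Ne.symm hi)); exact hr (lt_of_le_of_ne hγ (Ne.symm hi))]

lemma ic81 : IntegrallyConvexSet S81 := by
  intro x hx
  have himg : coeZR '' S81 =
      ({![0,0,0], ![0,1,1], ![1,1,0], ![1,2,1]} : Set (Fin 3 → ℝ)) := by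
    have e1 : coeZR ![0,0,0] = ![(0:ℝ),0,0] := by funext i; fin_cases i <;> simp [coeZR]
    have e2 : coeZR ![0,1,1] = ![(0:ℝ),1,1] := by funext i; fin_cases i <;> simp [coeZR]
    have e3 : coeZR ![1,1,0] = ![(1:ℝ),1,0] := by funext i; fin_cases i <;> simp [coeZR]
    have e4 : coeZR ![1,2,1] = ![(1:ℝ),2,1] := by funext i; fin_cases i <;> simp [coeZR]
    simp [S81, Set.image_insert_eq, Set.image_singleton, e1, e2, e3, e4]
  rw [himg] at hx
  set P : Set (Fin 3 → ℝ) :=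
    {y | y 1 = y 0 + y 2 ∧ 0 ≤ y 0 ∧ y 0 ≤ 1 ∧ 0 ≤ y 2 ∧ y 2 ≤ 1} with hPdef
  have hconv : Convex ℝ P := by
    intro u hu v hv a b ha hb hab
    simp only [hPdef, Set.mem_setOf_eq, Pi.add_apply, Pi.smul_apply, smul_eq_mul] at *
    obtain ⟨hu1, hu2, hu3, hu4, hu5⟩ := hu
    obtain ⟨hv1, hv2, hv3, hv4, hv5⟩ := hv
    refine ⟨by nlinarith, by nlinarith, by nlinarith, by nlinarith, by nlinarith⟩
  have hxP : x ∈ P := by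
    refine convexHull_min ?_ hconv hx
    intro y hy
    simp only [Set.mem_insert_iff, Set.mem_singleton_iff] at hy
    rcases hy with h | h | h | h <;> subst h <;>
      simp [hPdef] <;> norm_num
  obtain ⟨h1, h0a, h0b, h2a, h2b⟩ := hxP
  set t := x 0 with ht
  set s := x 2 with hs
  rcases le_total (s + t) 1 with hc | hc
  · apply combo3' (p := coeZR ![0,0,0]) (q := coeZR ![0,1,1]) (r := coeZR ![1,1,0])
      (α := 1 - s - t) (β := s) (γ := t) (by linarith) h2a h0a (by ring)
    · intro h
      refine ⟨![0,0,0], ⟨by simp [S81], ?_⟩, rfl⟩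
      intro i; fin_cases i <;> simp <;> rw [abs_lt] <;> constructor <;> linarith
    · intro h
      refine ⟨![0,1,1], ⟨by simp [S81], ?_⟩, rfl⟩
      intro i; fin_cases i <;> simp <;> rw [abs_lt] <;> constructor <;> linarith
    · intro h
      refine ⟨![1,1,0], ⟨by simp [S81], ?_⟩, rfl⟩
      intro i; fin_cases i <;> simp <;> rw [abs_lt] <;> constructor <;> linarith
    · funext i; fin_cases i <;> simp [coeZR] <;> linarith
  · apply combo3' (p := coeZR ![1,2,1]) (q := coeZR ![0,1,1]) (r := coeZR ![1,1,0])
      (α := s + t - 1) (β := 1 - t) (γ := 1 - s) (by linarith) (by linarith) (by linarith) (by ring)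
    · intro h
      refine ⟨![1,2,1], ⟨by simp [S81], ?_⟩, rfl⟩
      intro i; fin_cases i <;> simp <;> rw [abs_lt] <;> constructor <;> linarith
    · intro h
      refine ⟨![0,1,1], ⟨by simp [S81], ?_⟩, rfl⟩
      intro i; fin_cases i <;> simp <;> rw [abs_lt] <;> constructor <;> linarith
    · intro h
      refine ⟨![1,1,0], ⟨by simp [S81], ?_⟩, rfl⟩
      intro i; fin_cases i <;> simp <;> rw [abs_lt] <;> constructor <;> linarith
    · funext i; fin_cases i <;> simp [coeZR] <;> linarith

lemma ic82 : IntegrallyConvexSet S82 := by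
  intro x hx
  have himg : coeZR '' S82 =
      ({![0,0,0], ![0,1,0], ![1,1,1], ![1,2,1]} : Set (Fin 3 → ℝ)) := by
    have e1 : coeZR ![0,0,0] = ![(0:ℝ),0,0] := by funext i; fin_cases i <;> simp [coeZR]
    have e2 : coeZR ![0,1,0] = ![(0:ℝ),1,0] := by funext i; fin_cases i <;> simp [coeZR]
    have e3 : coeZR ![1,1,1] = ![(1:ℝ),1,1] := by funext i; fin_cases i <;> simp [coeZR]
    have e4 : coeZR ![1,2,1] = ![(1:ℝ),2,1] := by funext i; fin_cases i <;> simp [coeZR]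
    simp [S82, Set.image_insert_eq, Set.image_singleton, e1, e2, e3, e4]
  rw [himg] at hx
  set P : Set (Fin 3 → ℝ) :=
    {y | y 2 = y 0 ∧ 0 ≤ y 0 ∧ y 0 ≤ 1 ∧ 0 ≤ y 1 - y 0 ∧ y 1 - y 0 ≤ 1} with hPdef
  have hconv : Convex ℝ P := by
    intro u hu v hv a b ha hb hab
    simp only [hPdef, Set.mem_setOf_eq, Pi.add_apply, Pi.smul_apply, smul_eq_mul] at *
    obtain ⟨hu1, hu2, hu3, hu4, hu5⟩ := hu
    obtain ⟨hv1, hv2, hv3, hv4, hv5⟩ := hv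
    refine ⟨by nlinarith, by nlinarith, by nlinarith, by nlinarith, by nlinarith⟩
  have hxP : x ∈ P := by
    refine convexHull_min ?_ hconv hx
    intro y hy
    simp only [Set.mem_insert_iff, Set.mem_singleton_iff] at hy
    rcases hy with h | h | h | h <;> subst h <;>
      simp [hPdef] <;> norm_num
  obtain ⟨h1, h0a, h0b, h2a, h2b⟩ := hxP
  set t := x 0 with ht
  have hx1 : x 1 = (x 1 - x 0) + t := by ring
  set s := x 1 - x 0 with hs
  rcases le_total (s + t) 1 with hc | hc
  · apply combo3' (p := coeZR ![0,0,0]) (q := coeZR ![0,1,0]) (r := coeZR ![1,1,1])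
      (α := 1 - s - t) (β := s) (γ := t) (by linarith) h2a h0a (by ring)
    · intro h
      refine ⟨![0,0,0], ⟨by simp [S82], ?_⟩, rfl⟩
      intro i; fin_cases i <;> simp <;> rw [abs_lt] <;> constructor <;> linarith
    · intro h
      refine ⟨![0,1,0], ⟨by simp [S82], ?_⟩, rfl⟩
      intro i; fin_cases i <;> simp <;> rw [abs_lt] <;> constructor <;> linarith
    · intro h
      refine ⟨![1,1,1], ⟨by simp [S82], ?_⟩, rfl⟩
      intro i; fin_cases i <;> simp <;> rw [abs_lt] <;> constructor <;> linarith
    · funext i; fin_cases i <;> simp [coeZR] <;> linarith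
  · apply combo3' (p := coeZR ![1,2,1]) (q := coeZR ![0,1,0]) (r := coeZR ![1,1,1])
      (α := s + t - 1) (β := 1 - t) (γ := 1 - s) (by linarith) (by linarith) (by linarith) (by ring)
    · intro h
      refine ⟨![1,2,1], ⟨by simp [S82], ?_⟩, rfl⟩
      intro i; fin_cases i <;> simp <;> rw [abs_lt] <;> constructor <;> linarith
    · intro h
      refine ⟨![0,1,0], ⟨by simp [S82], ?_⟩, rfl⟩
      intro i; fin_cases i <;> simp <;> rw [abs_lt] <;> constructor <;> linarith
    · intro h
      refine ⟨![1,1,1], ⟨by simp [S82], ?_⟩, rfl⟩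
      intro i; fin_cases i <;> simp <;> rw [abs_lt] <;> constructor <;> linarith
    · funext i; fin_cases i <;> simp [coeZR] <;> linarith

lemma inter_eq : S81 ∩ S82 = ({![0,0,0], ![1,2,1]} : Set (Fin 3 → ℤ)) := by
  ext z
  simp only [S81, S82, Set.mem_inter_iff, Set.mem_insert_iff, Set.mem_singleton_iff]
  constructor
  · rintro ⟨h1 | h1 | h1 | h1, h2 | h2 | h2 | h2⟩ <;> subst h1 <;>
      first
      | (left; rfl)
      | (right; rfl)
      | (exfalso; revert h2; decide)
  · rintro (h | h) <;> subst h <;> exact ⟨by tauto, by tauto⟩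

lemma not_ic : ¬ IntegrallyConvexSet (S81 ∩ S82) := by
  rw [inter_eq]
  intro h
  set x : Fin 3 → ℝ := ![1/2, 1, 1/2] with hxdef
  have hmem : x ∈ convexHull ℝ (coeZR '' ({![0,0,0], ![1,2,1]} : Set (Fin 3 → ℤ))) := by
    apply combo3' (p := coeZR ![0,0,0]) (q := coeZR ![1,2,1]) (r := coeZR ![0,0,0])
      (α := 1/2) (β := 1/2) (γ := 0) (by norm_num) (by norm_num) le_rfl (by norm_num)
    · intro _; exact ⟨![0,0,0], by simp, rfl⟩
    · intro _; exact ⟨![1,2,1], by simp, rfl⟩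
    · intro h0; exact absurd h0 (lt_irrefl 0)
    · funext i; fin_cases i <;> simp [hxdef, coeZR] <;> norm_num
  have hempty : (({![0,0,0], ![1,2,1]} : Set (Fin 3 → ℤ)) ∩ IntNbhd x) = ∅ := by
    ext z
    simp only [Set.mem_inter_iff, Set.mem_insert_iff, Set.mem_singleton_iff,
      Set.mem_empty_iff_false, iff_false, not_and]
    rintro (h | h) <;> subst h <;> intro hn <;> have := hn 1 <;>
      simp [hxdef] at this <;> norm_num at this
  have := h x hmem
  rw [hempty] at this
  simp at this

theorem stmt8 :
    IntegrallyConvexSet S81 ∧ IntegrallyConvexSet S82 ∧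
    S81 ∩ S82 = ({![0,0,0], ![1,2,1]} : Set (Fin 3 → ℤ)) ∧
    ¬ IntegrallyConvexSet (S81 ∩ S82) := by
  exact ⟨ic81, ic82, inter_eq, not_ic⟩
end
end

section
/- The Minkowski sum of two integrally convex sets need not be hole-free: for S₁ = {(0,0), (1,1)} and S₂ = {(1,0), (0,1)} in ℤ², the point (1,1) belongs to the convex hull of S₁ + S₂ but not to S₁ + S₂ itself. -/
noncomputable section

def S91 : Set (Fin 2 → ℤ) := {![0,0], ![1,1]}

def S92 : Set (Fin 2 → ℤ) := {![1,0], ![0,1]}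

lemma pair_ic {n : ℕ} (a b : Fin n → ℤ) (h : ∀ i, |(a i : ℝ) - b i| ≤ 1) :
    IntegrallyConvexSet {a, b} := by
  intro x hx
  rw [Set.image_pair, convexHull_pair] at hx
  obtain ⟨u, v, hu, hv, huv, hx⟩ := hx
  rcases eq_or_lt_of_le hu with hu0 | hu0
  · -- u = 0, x = coeZR b
    have hv1 : v = 1 := by linarith
    have hxb : x = coeZR b := by
      rw [← hx, ← hu0, hv1]; simp
    apply subset_convexHull
    exact ⟨b, ⟨Or.inr rfl, fun i => by simp [hxb, coeZR]⟩, hxb.symm⟩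
  rcases eq_or_lt_of_le hv with hv0 | hv0
  · have hu1 : u = 1 := by linarith
    have hxa : x = coeZR a := by
      rw [← hx, ← hv0, hu1]; simp
    apply subset_convexHull
    exact ⟨a, ⟨Or.inl rfl, fun i => by simp [hxa, coeZR]⟩, hxa.symm⟩
  · -- both positive: both points in the neighborhood
    have ha : a ∈ IntNbhd x := by
      intro i
      have : x i - (a i : ℝ) = v * ((b i : ℝ) - a i) := by
        rw [← hx]; simp [coeZR]; ring_nf; linarith [congrArg (· * (a i : ℝ)) huv]
      rw [this, abs_mul, abs_of_pos hv0]
      calc v * |(b i : ℝ) - a i| ≤ v * 1 := by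
            have := h i; rw [abs_sub_comm] at this
            exact mul_le_mul_of_nonneg_left this hv0.le
        _ = v := mul_one v
        _ < 1 := by linarith
    have hb : b ∈ IntNbhd x := by
      intro i
      have : x i - (b i : ℝ) = u * ((a i : ℝ) - b i) := by
        rw [← hx]; simp [coeZR]; ring_nf; linarith [congrArg (· * (b i : ℝ)) huv]
      rw [this, abs_mul, abs_of_pos hu0]
      calc u * |(a i : ℝ) - b i| ≤ u * 1 :=
            mul_le_mul_of_nonneg_left (h i) hu0.le
        _ = u := mul_one u
        _ < 1 := by linarith
    have hsub : ({a, b} : Set (Fin n → ℤ)) ⊆ {a, b} ∩ IntNbhd x := by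
      rintro z (rfl | rfl)
      · exact ⟨Or.inl rfl, ha⟩
      · exact ⟨Or.inr rfl, hb⟩
    apply convexHull_mono (Set.image_mono hsub)
    rw [Set.image_pair, convexHull_pair]
    exact ⟨u, v, hu, hv, huv, hx⟩

theorem stmt9 :
    IntegrallyConvexSet S91 ∧ IntegrallyConvexSet S92 ∧
    coeZR (![1,1] : Fin 2 → ℤ) ∈ convexHull ℝ (coeZR '' Set.image2 (· + ·) S91 S92) ∧
    (![1,1] : Fin 2 → ℤ) ∉ Set.image2 (· + ·) S91 S92 := by
  refine ⟨?_, ?_, ?_, ?_⟩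
  · apply pair_ic
    intro i
    fin_cases i <;> norm_num
  · apply pair_ic
    intro i
    fin_cases i <;> norm_num
  · have h1 : (![1,0] : Fin 2 → ℤ) ∈ Set.image2 (· + ·) S91 S92 := by
      exact ⟨![0,0], Or.inl rfl, ![1,0], Or.inl rfl, by funext i; fin_cases i <;> rfl⟩
    have h2 : (![1,2] : Fin 2 → ℤ) ∈ Set.image2 (· + ·) S91 S92 := by
      exact ⟨![1,1], Or.inr rfl, ![0,1], Or.inr rfl, by funext i; fin_cases i <;> rfl⟩
    have : coeZR (![1,1] : Fin 2 → ℤ) =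
        (1/2 : ℝ) • coeZR (![1,0] : Fin 2 → ℤ) + (1/2 : ℝ) • coeZR (![1,2] : Fin 2 → ℤ) := by
      funext i; fin_cases i <;> norm_num [coeZR]
    rw [this]
    exact (convex_convexHull ℝ _) (subset_convexHull ℝ _ (Set.mem_image_of_mem _ h1))
      (subset_convexHull ℝ _ (Set.mem_image_of_mem _ h2)) (by norm_num) (by norm_num) (by norm_num)
  · rintro ⟨a, ha, b, hb, hab⟩
    rcases ha with rfl | rfl <;> rcases hb with rfl | rfl <;>
      [(have := congrFun hab 1); (have := congrFun hab 0);
       (have := congrFun hab 0); (have := congrFun hab 1)] <;> simp at this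
end
end

section
/- Let f: ℤⁿ → ℝ ∪ {+∞} have an integrally convex effective domain. Then f is integrally convex if and only if the local convex extension satisfies f̃((x+y)/2) ≤ (f(x) + f(y))/2 for every x, y ∈ dom f with ‖x − y‖_∞ = 2. -/
noncomputable section

def localConvexExt {n : ℕ} (f : (Fin n → ℤ) → EReal) (x : Fin n → ℝ) : EReal :=
  sInf { v : EReal | ∃ l : (Fin n → ℤ) →₀ ℝ,
    (∀ z, 0 ≤ l z) ∧ (∀ z ∈ l.support, z ∈ IntNbhd x) ∧
    (l.sum fun _ a => a) = 1 ∧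
    (l.sum fun z a => a • coeZR z) = x ∧
    v = l.sum fun z a => (a : EReal) * f z }

def ERealConvexOn {n : ℕ} (g : (Fin n → ℝ) → EReal) : Prop :=
  ∀ x y : Fin n → ℝ, ∀ a b : ℝ, 0 ≤ a → 0 ≤ b → a + b = 1 →
    g (a • x + b • y) ≤ (a : EReal) * g x + (b : EReal) * g y

def IntegrallyConvexFn {n : ℕ} (f : (Fin n → ℤ) → EReal) : Prop :=
  ERealConvexOn (localConvexExt f)

namespace IC

variable {n : ℕ}

/-- total mass of a combination, as a linear map -/
def massL : ((Fin n → ℤ) →₀ ℝ) →ₗ[ℝ] ℝ := Finsupp.lsum ℝ fun _ => LinearMap.id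

/-- barycenter (unnormalized) of a combination, as a linear map -/
def baryL : ((Fin n → ℤ) →₀ ℝ) →ₗ[ℝ] (Fin n → ℝ) :=
  Finsupp.lsum ℝ fun z => LinearMap.toSpanSingleton ℝ _ (coeZR z)

/-- real cost w.r.t. cost vector c -/
def rcostL (c : (Fin n → ℤ) → ℝ) : ((Fin n → ℤ) →₀ ℝ) →ₗ[ℝ] ℝ :=
  Finsupp.lsum ℝ fun z => LinearMap.toSpanSingleton ℝ _ (c z)

lemma massL_apply (l : (Fin n → ℤ) →₀ ℝ) : massL l = l.sum fun _ a => a := by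
  rw [massL, Finsupp.lsum_apply]; rfl

lemma baryL_apply (l : (Fin n → ℤ) →₀ ℝ) : baryL l = l.sum fun z a => a • coeZR z := by
  rw [baryL, Finsupp.lsum_apply]
  simp only [Finsupp.sum]; apply Finset.sum_congr rfl; intro z _
  simp [LinearMap.toSpanSingleton_apply]

lemma rcostL_apply (c : (Fin n → ℤ) → ℝ) (l : (Fin n → ℤ) →₀ ℝ) :
    rcostL c l = l.sum fun z a => a * c z := by
  rw [rcostL, Finsupp.lsum_apply]
  simp only [Finsupp.sum]; apply Finset.sum_congr rfl; intro z _
  simp [LinearMap.toSpanSingleton_apply, smul_eq_mul]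

lemma massL_single (z : Fin n → ℤ) (a : ℝ) : massL (Finsupp.single z a) = a := by
  simp [massL]

lemma baryL_single (z : Fin n → ℤ) (a : ℝ) : baryL (Finsupp.single z a) = a • coeZR z := by
  simp [baryL, LinearMap.toSpanSingleton_apply]

lemma rcostL_single (c : (Fin n → ℤ) → ℝ) (z : Fin n → ℤ) (a : ℝ) :
    rcostL c (Finsupp.single z a) = a * c z := by
  simp [rcostL, LinearMap.toSpanSingleton_apply, smul_eq_mul]

variable (f : (Fin n → ℤ) → EReal)

/-- EReal cost of a combination -/
def ecost (l : (Fin n → ℤ) →₀ ℝ) : EReal := l.sum fun z a => (a : EReal) * f z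

/-- real cost of a combination -/
def rcost (l : (Fin n → ℤ) →₀ ℝ) : ℝ := rcostL (fun z => (f z).toReal) l

/-- unnormalized convex combination constraints -/
def Pc (x : Fin n → ℝ) (l : (Fin n → ℤ) →₀ ℝ) : Prop :=
  (∀ z, 0 ≤ l z) ∧ massL l = 1 ∧ baryL l = x

/-- feasible for the local convex extension at x -/
def Feas (x : Fin n → ℝ) (l : (Fin n → ℤ) →₀ ℝ) : Prop :=
  Pc x l ∧ ∀ z ∈ l.support, z ∈ IntNbhd x

lemma localConvexExt_le {x : Fin n → ℝ} {l : (Fin n → ℤ) →₀ ℝ} (h : Feas x l) :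
    localConvexExt f x ≤ ecost f l := by
  refine sInf_le ⟨l, h.1.1, h.2, ?_, ?_, rfl⟩
  · rw [← massL_apply]; exact h.1.2.1
  · rw [← baryL_apply]; exact h.1.2.2

lemma exists_feas_of_lt {x : Fin n → ℝ} {v : EReal} (h : localConvexExt f x < v) :
    ∃ l, Feas x l ∧ ecost f l < v := by
  rw [localConvexExt, sInf_lt_iff] at h
  obtain ⟨w, ⟨l, h1, h2, h3, h4, h5⟩, hw⟩ := h
  refine ⟨l, ⟨⟨h1, ?_, ?_⟩, h2⟩, ?_⟩
  · rw [massL_apply]; exact h3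
  · rw [baryL_apply]; exact h4
  · rw [ecost, ← h5]; exact hw

lemma mem_IntNbhd_self (z : Fin n → ℤ) : z ∈ IntNbhd (coeZR z) := by
  intro i; simp [coeZR]

lemma IntNbhd_subset (x : Fin n → ℝ) :
    IntNbhd x ⊆ Set.pi Set.univ (fun i => ({⌊x i⌋, ⌊x i⌋ + 1} : Set ℤ)) := by
  intro z hz i _
  have h1 := hz i
  have hfl : (⌊x i⌋ : ℝ) ≤ x i := Int.floor_le _
  have hfl2 : x i < ⌊x i⌋ + 1 := Int.lt_floor_add_one _
  rw [abs_lt] at h1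
  have hz1 : (z i : ℝ) < ⌊x i⌋ + 2 := by linarith [h1.1]
  have hz2 : (⌊x i⌋ : ℝ) - 1 < z i := by linarith [h1.2]
  have : z i < ⌊x i⌋ + 2 := by exact_mod_cast hz1
  have : ⌊x i⌋ - 1 < z i := by exact_mod_cast hz2
  simp only [Set.mem_insert_iff, Set.mem_singleton_iff]
  omega

lemma IntNbhd_finite (x : Fin n → ℝ) : (IntNbhd x).Finite :=
  Set.Finite.subset (Set.Finite.pi (fun _ => (Set.finite_singleton _).insert _)) (IntNbhd_subset x)

end IC

namespace IC

variable {n : ℕ} {f : (Fin n → ℤ) → EReal}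

/-- coercion of reals to EReal as an AddMonoidHom -/
def coeHom : ℝ →+ EReal := ⟨⟨Real.toEReal, EReal.coe_zero⟩, EReal.coe_add⟩

lemma coe_finset_sum {ι : Type*} (s : Finset ι) (g : ι → ℝ) :
    ((∑ i ∈ s, g i : ℝ) : EReal) = ∑ i ∈ s, ((g i : ℝ) : EReal) :=
  map_sum coeHom g s

lemma term_ne_bot (hbot : ∀ z, f z ≠ ⊥) {a : ℝ} (ha : 0 ≤ a) (z : Fin n → ℤ) :
    (a : EReal) * f z ≠ ⊥ := by
  rcases eq_or_lt_of_le ha with h | h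
  · rw [← h]; simp [EReal.zero_mul]
  rcases eq_or_ne (f z) ⊤ with ht | ht
  · rw [ht, EReal.coe_mul_top_of_pos h]; simp
  · rw [← EReal.coe_toReal ht (hbot z), ← EReal.coe_mul]
    exact EReal.coe_ne_bot _

lemma sum_ne_bot {ι : Type*} (s : Finset ι) (g : ι → EReal) (h : ∀ i ∈ s, g i ≠ ⊥) :
    ∑ i ∈ s, g i ≠ ⊥ := by
  classical
  induction s using Finset.induction_on with
  | empty => simp
  | @insert a s' hx ih =>
    rw [Finset.sum_insert hx]
    intro hc
    rcases EReal.add_eq_bot_iff.1 hc with h1 | h1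
    · exact h a (Finset.mem_insert_self _ _) h1
    · exact ih (fun i hi => h i (Finset.mem_insert_of_mem hi)) h1

lemma ecost_ne_bot (hbot : ∀ z, f z ≠ ⊥) {l : (Fin n → ℤ) →₀ ℝ} (hl : ∀ z, 0 ≤ l z) :
    ecost f l ≠ ⊥ := by
  apply sum_ne_bot
  intro z _
  exact term_ne_bot hbot (hl z) z

lemma ecost_eq_top (hbot : ∀ z, f z ≠ ⊥) {l : (Fin n → ℤ) →₀ ℝ} (hl : ∀ z, 0 ≤ l z)
    {z₀ : Fin n → ℤ} (hz₀ : z₀ ∈ l.support) (ht : f z₀ = ⊤) : ecost f l = ⊤ := by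
  rw [ecost, Finsupp.sum, ← Finset.add_sum_erase _ _ hz₀]
  have h1 : (l z₀ : EReal) * f z₀ = ⊤ := by
    rw [ht, EReal.coe_mul_top_of_pos]
    exact lt_of_le_of_ne (hl z₀) (Ne.symm (Finsupp.mem_support_iff.1 hz₀))
  rw [h1, EReal.top_add_of_ne_bot]
  exact sum_ne_bot _ _ (fun i _ => term_ne_bot hbot (hl i) i)

lemma ecost_eq_rcost (hbot : ∀ z, f z ≠ ⊥) {l : (Fin n → ℤ) →₀ ℝ}
    (h : ∀ z ∈ l.support, f z ≠ ⊤) : ecost f l = ((rcost f l : ℝ) : EReal) := by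
  rw [ecost, rcost, rcostL_apply, Finsupp.sum, Finsupp.sum, coe_finset_sum]
  apply Finset.sum_congr rfl
  intro z hz
  rw [← EReal.coe_toReal (h z hz) (hbot z), ← EReal.coe_mul]
  norm_cast

/-- the effective domain -/
def Dom (f : (Fin n → ℤ) → EReal) : Set (Fin n → ℤ) := {z : Fin n → ℤ | f z ≠ ⊤}

lemma supp_subset_dom (hbot : ∀ z, f z ≠ ⊥) {l : (Fin n → ℤ) →₀ ℝ} (hl : ∀ z, 0 ≤ l z)
    (h : ecost f l ≠ ⊤) : ∀ z ∈ l.support, z ∈ Dom f := by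
  intro z hz
  by_contra hc
  exact h (ecost_eq_top hbot hl hz (not_not.1 hc))

lemma pc_mem_hull {S : Set (Fin n → ℤ)} {x : Fin n → ℝ} {l : (Fin n → ℤ) →₀ ℝ}
    (h : Pc x l) (hS : ∀ z ∈ l.support, z ∈ S) : x ∈ convexHull ℝ (coeZR '' S) := by
  have hm : ∑ z ∈ l.support, l z = 1 := by
    have := h.2.1; rwa [massL_apply, Finsupp.sum] at this
  have hx : l.support.centerMass l coeZR = x := by
    rw [Finset.centerMass, hm, inv_one, one_smul]
    have := h.2.2; rwa [baryL_apply, Finsupp.sum] at this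
  rw [← hx]
  exact Finset.centerMass_mem_convexHull _ (fun z _ => h.1 z) (by rw [hm]; norm_num)
    (fun z hz => Set.mem_image_of_mem _ (hS z hz))

lemma hull_to_combo {S : Set (Fin n → ℤ)} {x : Fin n → ℝ}
    (h : x ∈ convexHull ℝ (coeZR '' S)) :
    ∃ l : (Fin n → ℤ) →₀ ℝ, Pc x l ∧ ∀ z ∈ l.support, z ∈ S := by
  classical
  rw [convexHull_eq] at h
  obtain ⟨ι, t, w, zf, hw0, hw1, hz, hx⟩ := h
  choose g hgS hgz using fun i (hi : i ∈ t) => hz i hi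
  set l : (Fin n → ℤ) →₀ ℝ := ∑ i ∈ t.attach, Finsupp.single (g i.1 i.2) (w i.1) with hldef
  have happ : ∀ zz, l zz = ∑ i ∈ t.attach, Finsupp.single (g i.1 i.2) (w i.1) zz := by
    intro zz; rw [hldef, Finset.sum_apply']
  refine ⟨l, ⟨?_, ?_, ?_⟩, ?_⟩
  · intro zz
    rw [happ]
    apply Finset.sum_nonneg
    intro i _
    by_cases hgi : g i.1 i.2 = zz
    · rw [hgi, Finsupp.single_eq_same]; exact hw0 i.1 i.2
    · rw [Finsupp.single_eq_of_ne' hgi]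
  · rw [hldef, map_sum]
    simp only [massL_single]
    rw [Finset.sum_attach t w]; exact hw1
  · rw [hldef, map_sum]
    simp only [baryL_single]
    have : ∀ i ∈ t.attach, w i.1 • coeZR (g i.1 i.2) = w i.1 • zf i.1 := by
      intro i _; rw [hgz i.1 i.2]
    rw [Finset.sum_congr rfl this, Finset.sum_attach t (fun i => w i • zf i), ← hx,
      Finset.centerMass, hw1, inv_one, one_smul]
  · intro zz hzz
    rw [Finsupp.mem_support_iff, happ] at hzz
    obtain ⟨i, _, hi2⟩ := Finset.exists_ne_zero_of_sum_ne_zero hzz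
    by_cases hgi : g i.1 i.2 = zz
    · rw [← hgi]; exact hgS i.1 i.2
    · rw [Finsupp.single_eq_of_ne' hgi] at hi2; exact absurd rfl hi2

end IC

namespace IC

variable {n : ℕ} {f : (Fin n → ℤ) → EReal}

lemma le_coe_of_forall_le_add {X : EReal} {r : ℝ}
    (h : ∀ ε : ℝ, 0 < ε → X ≤ ((r + ε : ℝ) : EReal)) : X ≤ (r : EReal) := by
  induction X using EReal.rec with
  | bot => exact bot_le
  | coe s =>
      have h' : ∀ ε : ℝ, 0 < ε → s ≤ r + ε := by
        intro ε hε
        exact_mod_cast h ε hε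
      exact_mod_cast le_of_forall_pos_le_add h'
  | top =>
      exfalso
      have := h 1 one_pos
      exact EReal.coe_ne_top _ (top_le_iff.1 this)

lemma coe_le_ecost_of_feas (hbot : ∀ z, f z ≠ ⊥) {x : Fin n → ℝ} {l : (Fin n → ℤ) →₀ ℝ}
    (hl : Feas x l) {c : ℝ} (hc : ∀ z ∈ IntNbhd x, c ≤ (f z).toReal) (hc0 : c ≤ 0) :
    (c : EReal) ≤ ecost f l := by
  have hm : ∑ z ∈ l.support, l z = 1 := by
    have := hl.1.2.1; rwa [massL_apply, Finsupp.sum] at this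
  have key : ∀ z ∈ l.support, ((l z * c : ℝ) : EReal) ≤ (l z : EReal) * f z := by
    intro z hz
    rcases eq_or_ne (f z) ⊤ with ht | ht
    · rw [ht, EReal.coe_mul_top_of_pos]
      · exact le_top
      · exact lt_of_le_of_ne (hl.1.1 z) (Ne.symm (Finsupp.mem_support_iff.1 hz))
    · rw [← EReal.coe_toReal ht (hbot z), ← EReal.coe_mul, EReal.coe_le_coe_iff]
      exact mul_le_mul_of_nonneg_left (hc z (hl.2 z hz)) (hl.1.1 z)
  calc (c : EReal) = ((∑ z ∈ l.support, l z * c : ℝ) : EReal) := by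
        rw [← Finset.sum_mul, hm, one_mul]
    _ = ∑ z ∈ l.support, ((l z * c : ℝ) : EReal) := coe_finset_sum _ _
    _ ≤ ∑ z ∈ l.support, (l z : EReal) * f z := Finset.sum_le_sum key
    _ = ecost f l := rfl

lemma lce_ne_bot (hbot : ∀ z, f z ≠ ⊥) (x : Fin n → ℝ) : localConvexExt f x ≠ ⊥ := by
  classical
  set T := (IntNbhd_finite x).toFinset with hT
  set c : ℝ := -∑ z ∈ T, |(f z).toReal| with hcdef
  have hc0 : c ≤ 0 := by
    rw [hcdef, neg_nonpos]
    exact Finset.sum_nonneg (fun z _ => abs_nonneg _)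
  have hc : ∀ z ∈ IntNbhd x, c ≤ (f z).toReal := by
    intro z hz
    have hzT : z ∈ T := by rw [hT]; exact (Set.Finite.mem_toFinset _).2 hz
    have h1 : |(f z).toReal| ≤ ∑ w ∈ T, |(f w).toReal| :=
      Finset.single_le_sum (f := fun w => |(f w).toReal|) (fun w _ => abs_nonneg _) hzT
    have h2 : -|(f z).toReal| ≤ (f z).toReal := neg_abs_le _
    rw [hcdef]; linarith
  have hle : (c : EReal) ≤ localConvexExt f x := by
    apply le_sInf
    intro v hv
    obtain ⟨l, h1, h2, h3, h4, h5⟩ := hv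
    have hfeas : Feas x l := by
      refine ⟨⟨h1, ?_, ?_⟩, h2⟩
      · rw [massL_apply]; exact h3
      · rw [baryL_apply]; exact h4
    rw [h5]
    exact coe_le_ecost_of_feas hbot hfeas hc hc0
  intro hc2
  rw [hc2, le_bot_iff] at hle
  exact EReal.coe_ne_bot _ hle

lemma lce_ne_top_of_hull (hbot : ∀ z, f z ≠ ⊥) {x : Fin n → ℝ}
    (h : x ∈ convexHull ℝ (coeZR '' (Dom f ∩ IntNbhd x))) : localConvexExt f x ≠ ⊤ := by
  obtain ⟨l, hpc, hsupp⟩ := hull_to_combo h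
  have hfeas : Feas x l := ⟨hpc, fun z hz => (hsupp z hz).2⟩
  have : localConvexExt f x ≤ ecost f l := localConvexExt_le f hfeas
  rw [ecost_eq_rcost hbot (fun z hz => (hsupp z hz).1)] at this
  intro hc
  rw [hc, top_le_iff] at this
  exact EReal.coe_ne_top _ this

lemma hull_of_lce_ne_top (hbot : ∀ z, f z ≠ ⊥) {x : Fin n → ℝ}
    (h : localConvexExt f x ≠ ⊤) : x ∈ convexHull ℝ (coeZR '' (Dom f)) := by
  obtain ⟨l, hfeas, hcost⟩ := exists_feas_of_lt f (lt_top_iff_ne_top.2 h)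
  exact pc_mem_hull hfeas.1 (supp_subset_dom hbot hfeas.1.1 (lt_top_iff_ne_top.1 hcost))

lemma exists_near_opt (hbot : ∀ z, f z ≠ ⊥) {x : Fin n → ℝ}
    (hx : localConvexExt f x ≠ ⊤) {ε : ℝ} (hε : 0 < ε) :
    ∃ l, Feas x l ∧ (∀ z ∈ l.support, z ∈ Dom f) ∧
      rcost f l ≤ (localConvexExt f x).toReal + ε := by
  have hxb := lce_ne_bot hbot x
  have hlt : localConvexExt f x < (((localConvexExt f x).toReal + ε : ℝ) : EReal) := by
    conv_lhs => rw [← EReal.coe_toReal hx hxb]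
    rw [EReal.coe_lt_coe_iff]
    linarith
  obtain ⟨l, hfeas, hcost⟩ := exists_feas_of_lt f hlt
  have hD : ∀ z ∈ l.support, z ∈ Dom f :=
    supp_subset_dom hbot hfeas.1.1 (fun hc => by rw [hc] at hcost; exact absurd hcost (by simp))
  refine ⟨l, hfeas, hD, ?_⟩
  rw [ecost_eq_rcost hbot hD, EReal.coe_lt_coe_iff] at hcost
  exact le_of_lt hcost

end IC

namespace IC

variable {n : ℕ} {f : (Fin n → ℤ) → EReal}

lemma lce_le_f (f : (Fin n → ℤ) → EReal) (z : Fin n → ℤ) :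
    localConvexExt f (coeZR z) ≤ f z := by
  have hfeas : Feas (coeZR z) (Finsupp.single z 1) := by
    refine ⟨⟨?_, ?_, ?_⟩, ?_⟩
    · intro w
      rcases eq_or_ne z w with h | h
      · rw [← h, Finsupp.single_eq_same]; norm_num
      · rw [Finsupp.single_eq_of_ne' h]
    · rw [massL_single]
    · rw [baryL_single, one_smul]
    · intro w hw
      have := Finsupp.support_single_subset hw
      rw [Finset.mem_singleton] at this
      rw [this]
      exact mem_IntNbhd_self z
  have := localConvexExt_le f hfeas
  rwa [ecost, Finsupp.sum_single_index (by rw [EReal.coe_zero, EReal.zero_mul]),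
    EReal.coe_one, one_mul] at this

lemma term_ne_bot' (hu : (u : EReal) ≠ ⊥) {a : ℝ} (ha : 0 < a) :
    (a : EReal) * u ≠ ⊥ := by
  induction u using EReal.rec with
  | bot => exact absurd rfl hu
  | coe s => rw [← EReal.coe_mul]; exact EReal.coe_ne_bot _
  | top => rw [EReal.coe_mul_top_of_pos ha]; simp

lemma half_distrib {u v : EReal} (hu : u ≠ ⊥) (hv : v ≠ ⊥) :
    ((2⁻¹ : ℝ) : EReal) * (u + v) = ((2⁻¹ : ℝ) : EReal) * u + ((2⁻¹ : ℝ) : EReal) * v := by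
  have hhalf : (0:ℝ) < 2⁻¹ := by norm_num
  induction u using EReal.rec with
  | bot => exact absurd rfl hu
  | coe s =>
      induction v using EReal.rec with
      | bot => exact absurd rfl hv
      | coe t => norm_cast; ring
      | top =>
          rw [EReal.add_top_of_ne_bot (EReal.coe_ne_bot s), EReal.coe_mul_top_of_pos hhalf,
            ← EReal.coe_mul, EReal.add_top_of_ne_bot (EReal.coe_ne_bot _)]
  | top =>
      rw [EReal.top_add_of_ne_bot hv, EReal.coe_mul_top_of_pos hhalf,
        EReal.top_add_of_ne_bot (term_ne_bot' hv hhalf)]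

/-- The forward direction of the theorem. -/
lemma forward_dir (hbot : ∀ z, f z ≠ ⊥) (hicf : IntegrallyConvexFn f) :
    ∀ x y : Fin n → ℤ, f x ≠ ⊤ → f y ≠ ⊤ →
      ((∀ i, |x i - y i| ≤ 2) ∧ ∃ i, |x i - y i| = 2) →
      localConvexExt f ((2⁻¹ : ℝ) • (coeZR x + coeZR y)) ≤
        ((2⁻¹ : ℝ) : EReal) * (f x + f y) := by
  intro x y hx hy _
  have h2 : (0:ℝ) ≤ 2⁻¹ := by norm_num
  have := hicf (coeZR x) (coeZR y) 2⁻¹ 2⁻¹ h2 h2 (by norm_num)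
  rw [smul_add]
  refine le_trans this ?_
  rw [half_distrib (hbot x) (hbot y)]
  have hnn : (0 : EReal) ≤ ((2⁻¹ : ℝ) : EReal) := EReal.coe_nonneg.2 h2
  exact add_le_add (mul_le_mul_of_nonneg_left (lce_le_f f x) hnn)
    (mul_le_mul_of_nonneg_left (lce_le_f f y) hnn)

end IC

namespace IC

variable {n : ℕ} {f : (Fin n → ℤ) → EReal}

/-- max of coordinate i over the support -/
def mxI (l : (Fin n → ℤ) →₀ ℝ) (i : Fin n) : ℤ := ((l.support.image fun z => z i).max).getD 0

/-- min of coordinate i over the support -/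
def mnI (l : (Fin n → ℤ) →₀ ℝ) (i : Fin n) : ℤ := ((l.support.image fun z => z i).min).getD 0

lemma supp_nonempty {x : Fin n → ℝ} {l : (Fin n → ℤ) →₀ ℝ} (h : Pc x l) :
    l.support.Nonempty := by
  rw [Finset.nonempty_iff_ne_empty]
  intro hc
  have := h.2.1
  rw [massL_apply, Finsupp.sum, hc, Finset.sum_empty] at this
  norm_num at this

lemma mxI_eq (l : (Fin n → ℤ) →₀ ℝ) (i : Fin n) (h : l.support.Nonempty) :
    mxI l i = (l.support.image fun z => z i).max' ((h.image (fun z => z i))) := by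
  rw [mxI, ← Finset.coe_max' ((h.image (fun z => z i)))]
  rfl

lemma mnI_eq (l : (Fin n → ℤ) →₀ ℝ) (i : Fin n) (h : l.support.Nonempty) :
    mnI l i = (l.support.image fun z => z i).min' ((h.image (fun z => z i))) := by
  rw [mnI, ← Finset.coe_min' ((h.image (fun z => z i)))]
  rfl

lemma le_mxI {l : (Fin n → ℤ) →₀ ℝ} {z : Fin n → ℤ} (hz : z ∈ l.support) (i : Fin n) :
    z i ≤ mxI l i := by
  rw [mxI_eq l i ⟨z, hz⟩]
  exact Finset.le_max' (l.support.image fun z => z i) (z i) (Finset.mem_image_of_mem _ hz)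

lemma mnI_le {l : (Fin n → ℤ) →₀ ℝ} {z : Fin n → ℤ} (hz : z ∈ l.support) (i : Fin n) :
    mnI l i ≤ z i := by
  rw [mnI_eq l i ⟨z, hz⟩]
  exact Finset.min'_le (l.support.image fun z => z i) (z i) (Finset.mem_image_of_mem _ hz)

lemma exists_mxI {l : (Fin n → ℤ) →₀ ℝ} (h : l.support.Nonempty) (i : Fin n) :
    ∃ z ∈ l.support, z i = mxI l i := by
  rw [mxI_eq l i h]
  obtain ⟨v, hv1, hv2⟩ := Finset.mem_image.1 ((l.support.image fun z => z i).max'_mem ((h.image (fun z => z i))))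
  exact ⟨v, hv1, hv2⟩

lemma exists_mnI {l : (Fin n → ℤ) →₀ ℝ} (h : l.support.Nonempty) (i : Fin n) :
    ∃ z ∈ l.support, z i = mnI l i := by
  rw [mnI_eq l i h]
  obtain ⟨v, hv1, hv2⟩ := Finset.mem_image.1 ((l.support.image fun z => z i).min'_mem ((h.image (fun z => z i))))
  exact ⟨v, hv1, hv2⟩

lemma bary_coord {x : Fin n → ℝ} {l : (Fin n → ℤ) →₀ ℝ} (h : Pc x l) (i : Fin n) :
    x i = ∑ w ∈ l.support, l w * ((w i : ℤ) : ℝ) := by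
  have hb := h.2.2
  rw [baryL_apply] at hb
  rw [← hb, Finsupp.sum, Finset.sum_apply]
  apply Finset.sum_congr rfl
  intro w _
  simp [coeZR]

lemma supp_pos {l : (Fin n → ℤ) →₀ ℝ} (hl : ∀ z, 0 ≤ l z) {z : Fin n → ℤ}
    (hz : z ∈ l.support) : 0 < l z :=
  lt_of_le_of_ne (hl z) (Ne.symm (Finsupp.mem_support_iff.1 hz))

/-- if the barycenter coordinate sits at the max and all support points are ≤ max,
then every support point sits at the max -/
lemma coord_rigid_hi {x : Fin n → ℝ} {l : (Fin n → ℤ) →₀ ℝ} (h : Pc x l) (i : Fin n)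
    {β : ℝ} (hub : ∀ w ∈ l.support, ((w i : ℤ) : ℝ) ≤ β) (hx : x i = β)
    {z : Fin n → ℤ} (hz : z ∈ l.support) : ((z i : ℤ) : ℝ) = β := by
  have hm : ∑ w ∈ l.support, l w = 1 := by
    have := h.2.1; rwa [massL_apply, Finsupp.sum] at this
  have hsum : ∑ w ∈ l.support, l w * (β - ((w i : ℤ) : ℝ)) = 0 := by
    have := bary_coord h i
    rw [Finset.sum_congr rfl (fun w _ => mul_sub (l w) β (((w i : ℤ) : ℝ)))]
    rw [Finset.sum_sub_distrib, ← Finset.sum_mul, hm, one_mul, ← this, hx, sub_self]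
  have hterm : ∀ w ∈ l.support, 0 ≤ l w * (β - ((w i : ℤ) : ℝ)) := by
    intro w hw
    exact mul_nonneg (h.1 w) (by linarith [hub w hw])
  have := (Finset.sum_eq_zero_iff_of_nonneg hterm).1 hsum z hz
  have hlz := supp_pos h.1 hz
  have : β - ((z i : ℤ) : ℝ) = 0 := by
    rcases mul_eq_zero.1 this with hc | hc
    · exact absurd hc (ne_of_gt hlz)
    · exact hc
  linarith

lemma coord_rigid_lo {x : Fin n → ℝ} {l : (Fin n → ℤ) →₀ ℝ} (h : Pc x l) (i : Fin n)
    {β : ℝ} (hub : ∀ w ∈ l.support, β ≤ ((w i : ℤ) : ℝ)) (hx : x i = β)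
    {z : Fin n → ℤ} (hz : z ∈ l.support) : ((z i : ℤ) : ℝ) = β := by
  have hm : ∑ w ∈ l.support, l w = 1 := by
    have := h.2.1; rwa [massL_apply, Finsupp.sum] at this
  have hsum : ∑ w ∈ l.support, l w * (((w i : ℤ) : ℝ) - β) = 0 := by
    rw [Finset.sum_congr rfl (fun w _ => mul_sub (l w) (((w i : ℤ) : ℝ)) β)]
    rw [Finset.sum_sub_distrib, ← Finset.sum_mul, hm, one_mul, ← bary_coord h i, hx, sub_self]
  have hterm : ∀ w ∈ l.support, 0 ≤ l w * (((w i : ℤ) : ℝ) - β) := by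
    intro w hw
    exact mul_nonneg (h.1 w) (by linarith [hub w hw])
  have := (Finset.sum_eq_zero_iff_of_nonneg hterm).1 hsum z hz
  have hlz := supp_pos h.1 hz
  have : ((z i : ℤ) : ℝ) - β = 0 := by
    rcases mul_eq_zero.1 this with hc | hc
    · exact absurd hc (ne_of_gt hlz)
    · exact hc
  linarith

/-- Base case: all widths ≤ 1 implies the combination is feasible at its barycenter. -/
lemma base_feas {x : Fin n → ℝ} {l : (Fin n → ℤ) →₀ ℝ} (h : Pc x l)
    (hw : ∀ i, mxI l i - mnI l i ≤ 1) : Feas x l := by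
  refine ⟨h, ?_⟩
  intro z hz i
  set a := mnI l i with ha
  set b := mxI l i with hb
  have hza : a ≤ z i := mnI_le hz i
  have hzb : z i ≤ b := le_mxI hz i
  have hxa : ((a : ℤ) : ℝ) ≤ x i := by
    rw [bary_coord h i]
    have hm : ∑ w ∈ l.support, l w = 1 := by
      have := h.2.1; rwa [massL_apply, Finsupp.sum] at this
    calc ((a : ℤ) : ℝ) = ∑ w ∈ l.support, l w * a := by rw [← Finset.sum_mul, hm, one_mul]
      _ ≤ ∑ w ∈ l.support, l w * ((w i : ℤ) : ℝ) := by
          apply Finset.sum_le_sum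
          intro w hw
          have : a ≤ w i := mnI_le hw i
          have : ((a:ℤ):ℝ) ≤ ((w i : ℤ):ℝ) := by exact_mod_cast this
          exact mul_le_mul_of_nonneg_left this (h.1 w)
  have hxb : x i ≤ ((b : ℤ) : ℝ) := by
    rw [bary_coord h i]
    have hm : ∑ w ∈ l.support, l w = 1 := by
      have := h.2.1; rwa [massL_apply, Finsupp.sum] at this
    calc ∑ w ∈ l.support, l w * ((w i : ℤ) : ℝ) ≤ ∑ w ∈ l.support, l w * b := by
          apply Finset.sum_le_sum
          intro w hw
          have : w i ≤ b := le_mxI hw i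
          have : ((w i : ℤ):ℝ) ≤ ((b:ℤ):ℝ) := by exact_mod_cast this
          exact mul_le_mul_of_nonneg_left this (h.1 w)
      _ = ((b:ℤ):ℝ) := by rw [← Finset.sum_mul, hm, one_mul]
  by_contra hcon
  push_neg at hcon
  -- |x i - z i| ≥ 1 forces b = a + 1 and the extreme configuration
  have hba : ((b:ℤ):ℝ) - ((a:ℤ):ℝ) ≤ 1 := by
    have := hw i
    have : ((b - a : ℤ) : ℝ) ≤ ((1:ℤ):ℝ) := by exact_mod_cast this
    push_cast at this ⊢
    linarith
  have habs : |x i - ((z i : ℤ):ℝ)| ≤ 1 := by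
    rw [abs_le]
    constructor
    · have : ((z i : ℤ):ℝ) ≤ ((b:ℤ):ℝ) := by exact_mod_cast hzb
      linarith
    · have : ((a:ℤ):ℝ) ≤ ((z i : ℤ):ℝ) := by exact_mod_cast hza
      linarith
  have heq : |x i - ((z i : ℤ):ℝ)| = 1 := le_antisymm habs hcon
  rcases abs_cases (x i - ((z i : ℤ):ℝ)) with ⟨h1, _⟩ | ⟨h1, _⟩
  · -- x i = z i + 1, so x i = b and z i = a
    rw [heq] at h1
    have hxib : x i = ((b:ℤ):ℝ) := by
      have : ((z i:ℤ):ℝ) ≥ ((a:ℤ):ℝ) := by exact_mod_cast hza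
      linarith
    have := coord_rigid_hi h i (fun w hw => by exact_mod_cast le_mxI hw i) hxib hz
    -- z i = b, but x i = z i + 1 = b + 1 > b, contradiction
    rw [this] at h1
    linarith
  · rw [heq] at h1
    have hxia : x i = ((a:ℤ):ℝ) := by
      have : ((z i:ℤ):ℝ) ≤ ((b:ℤ):ℝ) := by exact_mod_cast hzb
      linarith
    have := coord_rigid_lo h i (fun w hw => by exact_mod_cast mnI_le hw i) hxia hz
    rw [this] at h1
    linarith

end IC

namespace IC

variable {n : ℕ} {f : (Fin n → ℤ) → EReal}

/-- the key hypothesis: the RHS of the theorem -/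
def HB (f : (Fin n → ℤ) → EReal) : Prop :=
  ∀ x y : Fin n → ℤ, f x ≠ ⊤ → f y ≠ ⊤ →
    ((∀ i, |x i - y i| ≤ 2) ∧ ∃ i, |x i - y i| = 2) →
    localConvexExt f ((2⁻¹ : ℝ) • (coeZR x + coeZR y)) ≤
      ((2⁻¹ : ℝ) : EReal) * (f x + f y)

lemma pair_est (hbot : ∀ z, f z ≠ ⊥) (hB : HB f) {z w : Fin n → ℤ}
    (hz : f z ≠ ⊤) (hw : f w ≠ ⊤) (hd : ∀ i, |z i - w i| ≤ 2) {ε : ℝ} (hε : 0 < ε) :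
    ∃ ρ, Feas ((2⁻¹ : ℝ) • (coeZR z + coeZR w)) ρ ∧ (∀ p ∈ ρ.support, p ∈ Dom f) ∧
      rcost f ρ ≤ ((f z).toReal + (f w).toReal)/2 + ε := by
  by_cases hex : ∃ i, |z i - w i| = 2
  · -- use the hypothesis hB
    have hle := hB z w hz hw ⟨hd, hex⟩
    have heq : ((2⁻¹ : ℝ) : EReal) * (f z + f w)
        = ((((f z).toReal + (f w).toReal)/2 : ℝ) : EReal) := by
      rw [← EReal.coe_toReal hz (hbot z), ← EReal.coe_toReal hw (hbot w), ← EReal.coe_add,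
        ← EReal.coe_mul]
      norm_num [div_eq_inv_mul]
    rw [heq] at hle
    have hlt : localConvexExt f ((2⁻¹ : ℝ) • (coeZR z + coeZR w)) <
        ((((f z).toReal + (f w).toReal)/2 + ε : ℝ) : EReal) := by
      apply lt_of_le_of_lt hle
      rw [EReal.coe_lt_coe_iff]
      linarith
    obtain ⟨ρ, hfeas, hcost⟩ := exists_feas_of_lt f hlt
    have hD : ∀ p ∈ ρ.support, p ∈ Dom f := by
      apply supp_subset_dom hbot hfeas.1.1
      intro hc
      rw [hc] at hcost
      exact absurd hcost (by simp)
    refine ⟨ρ, hfeas, hD, ?_⟩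
    rw [ecost_eq_rcost hbot hD, EReal.coe_lt_coe_iff] at hcost
    linarith
  · -- all coordinates differ by ≤ 1; use the two-point combination directly
    push_neg at hex
    have hd1 : ∀ i, |z i - w i| ≤ 1 := by
      intro i
      have h1 := hd i
      have h2 := hex i
      have h3 : ¬(z i - w i = 2 ∨ z i - w i = -2) := by
        intro hc
        exact h2 ((abs_eq (by norm_num)).2 hc)
      rw [abs_le] at h1 ⊢
      push_neg at h3
      omega
    set ρ : (Fin n → ℤ) →₀ ℝ := Finsupp.single z 2⁻¹ + Finsupp.single w 2⁻¹ with hρ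
    have hnn : ∀ p, 0 ≤ ρ p := by
      intro p
      rw [hρ, Finsupp.add_apply]
      apply add_nonneg
      · rcases eq_or_ne z p with h | h
        · rw [← h, Finsupp.single_eq_same]; norm_num
        · rw [Finsupp.single_eq_of_ne' h]
      · rcases eq_or_ne w p with h | h
        · rw [← h, Finsupp.single_eq_same]; norm_num
        · rw [Finsupp.single_eq_of_ne' h]
    have hsupp : ρ.support ⊆ {z, w} := by
      intro p hp
      rw [Finsupp.mem_support_iff, hρ, Finsupp.add_apply] at hp
      by_contra hc
      simp only [Finset.mem_insert, Finset.mem_singleton] at hc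
      push_neg at hc
      rw [Finsupp.single_eq_of_ne' (Ne.symm hc.1), Finsupp.single_eq_of_ne' (Ne.symm hc.2)] at hp
      norm_num at hp
    have hmemN : ∀ p ∈ ({z, w} : Finset (Fin n → ℤ)),
        p ∈ IntNbhd ((2⁻¹ : ℝ) • (coeZR z + coeZR w)) := by
      intro p hp i
      have hpt : ((2⁻¹ : ℝ) • (coeZR z + coeZR w)) i = 2⁻¹ * (((z i : ℤ):ℝ) + ((w i:ℤ):ℝ)) := by
        simp [coeZR]
      rw [hpt]
      have hcast : |((z i : ℤ):ℝ) - ((w i : ℤ):ℝ)| ≤ 1 := by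
        have := hd1 i
        have : ((|z i - w i| : ℤ) : ℝ) ≤ ((1:ℤ):ℝ) := by exact_mod_cast this
        push_cast at this
        convert this using 2 <;> push_cast <;> ring_nf
      simp only [Finset.mem_insert, Finset.mem_singleton] at hp
      rcases hp with h | h <;> rw [h] <;> rw [abs_sub_lt_iff] <;> constructor <;>
        (rw [abs_le] at hcast; cases' hcast with hc1 hc2) <;> nlinarith
    refine ⟨ρ, ⟨⟨hnn, ?_, ?_⟩, fun p hp => hmemN p (hsupp hp)⟩, ?_, ?_⟩
    · rw [hρ, map_add, massL_single, massL_single]; norm_num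
    · rw [hρ, map_add, baryL_single, baryL_single, smul_add]
    · intro p hp
      have := hsupp hp
      simp only [Finset.mem_insert, Finset.mem_singleton] at this
      rcases this with h | h <;> rw [h] <;> assumption
    · rw [hρ, rcost, map_add, rcostL_single, rcostL_single]
      ring_nf
      nlinarith [hε]

end IC

namespace IC

variable {n : ℕ} {f : (Fin n → ℤ) → EReal}

/-- number of support points extremal in coordinate i₀ -/
def Bcnt (l : (Fin n → ℤ) →₀ ℝ) (i₀ : Fin n) : ℕ :=
  (l.support.filter (fun z => z i₀ = mnI l i₀ ∨ z i₀ = mxI l i₀)).card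

lemma step_core (hbot : ∀ z, f z ≠ ⊥) (hB : HB f) {x : Fin n → ℝ} {l : (Fin n → ℤ) →₀ ℝ}
    (hpc : Pc x l) (hD : ∀ z ∈ l.support, z ∈ Dom f)
    (hpair : ∀ z ∈ l.support, ∀ w ∈ l.support, ∀ i, |z i - w i| ≤ 2)
    {i₀ : Fin n} (hwid : 2 ≤ mxI l i₀ - mnI l i₀) {ε : ℝ} (hε : 0 < ε) :
    ∃ l', Pc x l' ∧ (∀ z ∈ l'.support, z ∈ Dom f) ∧
      (∀ z ∈ l'.support, ∀ w ∈ l'.support, ∀ i, |z i - w i| ≤ 2) ∧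
      (∀ i, mnI l i ≤ mnI l' i ∧ mxI l' i ≤ mxI l i) ∧
      ((mnI l' i₀ = mnI l i₀ ∧ mxI l' i₀ = mxI l i₀) → Bcnt l' i₀ < Bcnt l i₀) ∧
      rcost f l' ≤ rcost f l + ε := by
  classical
  have hne : l.support.Nonempty := supp_nonempty hpc
  obtain ⟨z', hz's, hz'⟩ := exists_mxI hne i₀
  obtain ⟨z'', hz''s, hz''⟩ := exists_mnI hne i₀
  -- width is exactly 2
  have hw2 : mxI l i₀ = mnI l i₀ + 2 := by
    have h1 := hpair z' hz's z'' hz''s i₀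
    rw [hz', hz'', abs_le] at h1
    omega
  have hzz : z' ≠ z'' := by
    intro hc
    rw [hc, hz''] at hz'
    omega
  set ε' : ℝ := min (l z') (l z'') with hε'def
  have hε'pos : 0 < ε' := lt_min (supp_pos hpc.1 hz's) (supp_pos hpc.1 hz''s)
  set ε₁ : ℝ := ε / (2 * (2 * ε' + 1)) with hε₁def
  have hε₁pos : 0 < ε₁ := by
    apply div_pos hε
    nlinarith
  have hbudget : 2 * ε' * ε₁ ≤ ε := by
    rw [hε₁def]
    rw [div_eq_inv_mul, ← mul_assoc]
    have h2 : (0:ℝ) < 2 * (2 * ε' + 1) := by nlinarith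
    rw [mul_comm (2*ε') ((2 * (2 * ε' + 1))⁻¹), mul_assoc]
    calc (2 * (2 * ε' + 1))⁻¹ * (2 * ε' * ε) ≤ (2 * (2 * ε' + 1))⁻¹ * ((2 * (2*ε'+1)) * ε) := by
          apply mul_le_mul_of_nonneg_left _ (le_of_lt (inv_pos.2 h2))
          nlinarith
      _ = ε := by field_simp
  obtain ⟨ρ, hfρ, hρD, hρcost⟩ := pair_est hbot hB (hD z' hz's) (hD z'' hz''s)
    (fun i => hpair z' hz's z'' hz''s i) hε₁pos
  set m : Fin n → ℝ := (2⁻¹ : ℝ) • (coeZR z' + coeZR z'') with hmdef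
  have hm_i : ∀ i, m i = 2⁻¹ * (((z' i : ℤ):ℝ) + ((z'' i : ℤ):ℝ)) := by
    intro i; simp [hmdef, coeZR]; ring
  set l' : (Fin n → ℤ) →₀ ℝ :=
    l - Finsupp.single z' ε' - Finsupp.single z'' ε' + (2 * ε') • ρ with hl'def
  have happ : ∀ p, l' p = l p - (if z' = p then ε' else 0) - (if z'' = p then ε' else 0)
      + 2 * ε' * ρ p := by
    intro p
    rw [hl'def]
    simp [Finsupp.sub_apply, Finsupp.add_apply, Finsupp.smul_apply, Finsupp.single_apply,
      smul_eq_mul]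
  have hρnn : ∀ p, 0 ≤ ρ p := hfρ.1.1
  have hl'nn : ∀ p, 0 ≤ l' p := by
    intro p
    rw [happ p]
    have hρp : 0 ≤ 2 * ε' * ρ p := mul_nonneg (by positivity) (hρnn p)
    split_ifs with h1 h2 h3
    · exact absurd (h1.trans h2.symm) hzz
    · have : ε' ≤ l p := h1 ▸ min_le_left _ _
      linarith
    · have : ε' ≤ l p := h3 ▸ min_le_right _ _
      linarith
    · have := hpc.1 p
      linarith
  have hsupp' : l'.support ⊆ l.support ∪ ρ.support := by
    intro p hp
    rw [Finsupp.mem_support_iff] at hp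
    by_contra hc
    rw [Finset.mem_union] at hc
    push_neg at hc
    have h1 : l p = 0 := Finsupp.notMem_support_iff.1 hc.1
    have h2 : ρ p = 0 := Finsupp.notMem_support_iff.1 hc.2
    have h3 : z' ≠ p := by
      intro hq; rw [hq] at hz's; exact (Finsupp.mem_support_iff.1 hz's) h1
    have h4 : z'' ≠ p := by
      intro hq; rw [hq] at hz''s; exact (Finsupp.mem_support_iff.1 hz''s) h1
    rw [happ p, if_neg h3, if_neg h4, h1, h2] at hp
    norm_num at hp
  have hmassρ : massL ρ = 1 := hfρ.1.2.1
  have hWmass : massL l' = 1 := by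
    rw [hl'def, map_add, map_sub, map_sub, map_smul, massL_single, massL_single, hpc.2.1,
      hmassρ, smul_eq_mul]
    ring
  have hWbary : baryL l' = x := by
    rw [hl'def, map_add, map_sub, map_sub, map_smul, baryL_single, baryL_single, hpc.2.2,
      hfρ.1.2.2, hmdef]
    module
  have hpc' : Pc x l' := ⟨hl'nn, hWmass, hWbary⟩
  -- ρ support points are strictly inside in coordinate i₀ and inside the box in all coords
  have hmid : ∀ p ∈ ρ.support, p i₀ = mnI l i₀ + 1 := by
    intro p hp
    have hnb := hfρ.2 p hp i₀
    rw [hm_i i₀, hz', hz''] at hnb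
    rw [abs_sub_lt_iff] at hnb
    obtain ⟨h1, h2⟩ := hnb
    have hcast : ((mxI l i₀ : ℤ) : ℝ) = ((mnI l i₀ : ℤ) : ℝ) + 2 := by
      rw [hw2]; push_cast; ring
    rw [hcast] at h1 h2
    have e1 : ((p i₀ : ℤ):ℝ) < ((mnI l i₀ + 2 : ℤ):ℝ) := by push_cast; linarith
    have e2 : ((mnI l i₀ : ℤ):ℝ) < ((p i₀ : ℤ):ℝ) := by push_cast; linarith
    have e1' : p i₀ < mnI l i₀ + 2 := by exact_mod_cast e1
    have e2' : mnI l i₀ < p i₀ := by exact_mod_cast e2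
    omega
  have hbox : ∀ p ∈ l'.support, ∀ i, mnI l i ≤ p i ∧ p i ≤ mxI l i := by
    intro p hp i
    rcases Finset.mem_union.1 (hsupp' hp) with hps | hps
    · exact ⟨mnI_le hps i, le_mxI hps i⟩
    · have hnb := hfρ.2 p hps i
      rw [hm_i i] at hnb
      rw [abs_sub_lt_iff] at hnb
      have hz'i1 : mnI l i ≤ z' i := mnI_le hz's i
      have hz'i2 : z' i ≤ mxI l i := le_mxI hz's i
      have hz''i1 : mnI l i ≤ z'' i := mnI_le hz''s i
      have hz''i2 : z'' i ≤ mxI l i := le_mxI hz''s i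
      have hc1 : ((mnI l i : ℤ):ℝ) ≤ ((z' i : ℤ):ℝ) := by exact_mod_cast hz'i1
      have hc2 : ((z' i : ℤ):ℝ) ≤ ((mxI l i : ℤ):ℝ) := by exact_mod_cast hz'i2
      have hc3 : ((mnI l i : ℤ):ℝ) ≤ ((z'' i : ℤ):ℝ) := by exact_mod_cast hz''i1
      have hc4 : ((z'' i : ℤ):ℝ) ≤ ((mxI l i : ℤ):ℝ) := by exact_mod_cast hz''i2
      constructor
      · have hq : ((mnI l i - 1 : ℤ):ℝ) < ((p i : ℤ):ℝ) := by
          push_cast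
          linarith [hnb.1]
        have hq' : mnI l i - 1 < p i := by exact_mod_cast hq
        omega
      · have hq : ((p i : ℤ):ℝ) < ((mxI l i + 1 : ℤ):ℝ) := by
          push_cast
          linarith [hnb.2]
        have hq' : p i < mxI l i + 1 := by exact_mod_cast hq
        omega
  have hl'D : ∀ p ∈ l'.support, p ∈ Dom f := by
    intro p hp
    rcases Finset.mem_union.1 (hsupp' hp) with hps | hps
    · exact hD p hps
    · exact hρD p hps
  have hl'pair : ∀ p ∈ l'.support, ∀ q ∈ l'.support, ∀ i, |p i - q i| ≤ 2 := by
    intro p hp q hq i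
    obtain ⟨za, hzas, hza⟩ := exists_mxI hne i
    obtain ⟨zb, hzbs, hzb⟩ := exists_mnI hne i
    have hwi : mxI l i - mnI l i ≤ 2 := by
      have := hpair za hzas zb hzbs i
      rw [hza, hzb, abs_le] at this
      omega
    have h1 := hbox p hp i
    have h2 := hbox q hq i
    rw [abs_le]
    omega
  have hne' : l'.support.Nonempty := supp_nonempty hpc'
  have hmn' : ∀ i, mnI l i ≤ mnI l' i ∧ mxI l' i ≤ mxI l i := by
    intro i
    obtain ⟨pa, hpas, hpa⟩ := exists_mxI hne' i
    obtain ⟨pb, hpbs, hpb⟩ := exists_mnI hne' i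
    constructor
    · rw [← hpb]; exact (hbox pb hpbs i).1
    · rw [← hpa]; exact (hbox pa hpas i).2
  -- cost bound
  have hWcost : rcost f l' ≤ rcost f l + ε := by
    have : rcost f l' = rcost f l - ε' * (f z').toReal - ε' * (f z'').toReal
        + 2 * ε' * rcost f ρ := by
      rw [rcost, hl'def, map_add, map_sub, map_sub, map_smul, rcostL_single, rcostL_single,
        smul_eq_mul]
      rfl
    rw [this]
    have h2 : rcost f ρ ≤ ((f z').toReal + (f z'').toReal)/2 + ε₁ := hρcost
    nlinarith [hε'pos, hbudget]
  refine ⟨l', hpc', hl'D, hl'pair, hmn', ?_, hWcost⟩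
  -- the B-count decreases
  rintro ⟨hmneq, hmxeq⟩
  set w₀ : Fin n → ℤ := if l z' ≤ l z'' then z' else z'' with hw₀def
  have hw₀s : w₀ ∈ l.support := by
    rw [hw₀def]; split_ifs
    · exact hz's
    · exact hz''s
  have hw₀ext : w₀ i₀ = mnI l i₀ ∨ w₀ i₀ = mxI l i₀ := by
    rw [hw₀def]; split_ifs
    · right; exact hz'
    · left; exact hz''
  have hρnotz' : ρ z' = 0 := by
    rw [← Finsupp.notMem_support_iff]
    intro hc
    have := hmid z' hc
    omega
  have hρnotz'' : ρ z'' = 0 := by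
    rw [← Finsupp.notMem_support_iff]
    intro hc
    have := hmid z'' hc
    rw [hz''] at this
    omega
  have hw₀zero : l' w₀ = 0 := by
    by_cases h : l z' ≤ l z''
    · have hw₀ : w₀ = z' := by rw [hw₀def, if_pos h]
      rw [hw₀, happ z', if_pos rfl, if_neg (Ne.symm hzz), hρnotz']
      have hh : ε' = l z' := min_eq_left h
      rw [hh]; ring
    · have hw₀ : w₀ = z'' := by rw [hw₀def, if_neg h]
      rw [hw₀, happ z'', if_neg hzz, if_pos rfl, hρnotz'']
      have hh : ε' = l z'' := min_eq_right (le_of_not_ge h)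
      rw [hh]; ring
  have hw₀ns : w₀ ∉ l'.support := by
    rw [Finsupp.notMem_support_iff]; exact hw₀zero
  rw [Bcnt, Bcnt]
  apply Finset.card_lt_card
  rw [Finset.ssubset_iff_of_subset]
  · refine ⟨w₀, ?_, ?_⟩
    · rw [Finset.mem_filter]; exact ⟨hw₀s, hw₀ext⟩
    · intro hc
      exact hw₀ns (Finset.mem_filter.1 hc).1
  · intro p hp
    rw [Finset.mem_filter] at hp ⊢
    obtain ⟨hps, hpext⟩ := hp
    rw [hmneq, hmxeq] at hpext
    have hpnotρ : p ∉ ρ.support := by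
      intro hc
      have := hmid p hc
      rcases hpext with h | h <;> omega
    have hpsl : p ∈ l.support := by
      rcases Finset.mem_union.1 (hsupp' hps) with h | h
      · exact h
      · exact absurd h hpnotρ
    exact ⟨hpsl, hpext⟩

end IC

namespace IC

variable {n : ℕ} {f : (Fin n → ℤ) → EReal}

lemma mnI_le_mxI {x : Fin n → ℝ} {l : (Fin n → ℤ) →₀ ℝ} (h : Pc x l) (i : Fin n) :
    mnI l i ≤ mxI l i := by
  obtain ⟨z, hz⟩ := supp_nonempty h
  exact le_trans (mnI_le hz i) (le_mxI hz i)

lemma L2eps (hbot : ∀ z, f z ≠ ⊥) (hB : HB f) :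
    ∀ a : ℕ, ∀ (l : (Fin n → ℤ) →₀ ℝ) (x : Fin n → ℝ), Pc x l →
    (∀ z ∈ l.support, z ∈ Dom f) →
    (∀ z ∈ l.support, ∀ w ∈ l.support, ∀ i, |z i - w i| ≤ 2) →
    (∑ i, (mxI l i - mnI l i).toNat) ≤ a → ∀ ε : ℝ, 0 < ε →
    localConvexExt f x ≤ ((rcost f l + ε : ℝ) : EReal) := by
  intro a
  induction a using Nat.strong_induction_on with
  | _ a IHa =>
  have inner : ∀ b : ℕ, ∀ (i₀ : Fin n) (l : (Fin n → ℤ) →₀ ℝ) (x : Fin n → ℝ), Pc x l →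
      (∀ z ∈ l.support, z ∈ Dom f) →
      (∀ z ∈ l.support, ∀ w ∈ l.support, ∀ i, |z i - w i| ≤ 2) →
      (∑ i, (mxI l i - mnI l i).toNat) ≤ a →
      2 ≤ mxI l i₀ - mnI l i₀ → Bcnt l i₀ ≤ b → ∀ ε : ℝ, 0 < ε →
      localConvexExt f x ≤ ((rcost f l + ε : ℝ) : EReal) := by
    intro b
    induction b using Nat.strong_induction_on with
    | _ b IHb =>
    intro i₀ l x hpc hD hpair hA hwid hb ε hε
    obtain ⟨l', hpc', hD', hpair', hbounds, hBdec, hcost⟩ :=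
      step_core hbot hB hpc hD hpair hwid (half_pos hε)
    have hwi : ∀ i, (mxI l' i - mnI l' i).toNat ≤ (mxI l i - mnI l i).toNat := by
      intro i
      have h1 := hbounds i
      have h2 := mnI_le_mxI hpc' i
      omega
    have hA' : (∑ i, (mxI l' i - mnI l' i).toNat) ≤ a :=
      le_trans (Finset.sum_le_sum (fun i _ => hwi i)) hA
    have hfin : rcost f l' + ε/2 ≤ rcost f l + ε := by linarith
    by_cases hlt : (∑ i, (mxI l' i - mnI l' i).toNat) < (∑ i, (mxI l i - mnI l i).toNat)
    · have hrec := IHa (∑ i, (mxI l' i - mnI l' i).toNat) (lt_of_lt_of_le hlt hA)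
        l' x hpc' hD' hpair' le_rfl (ε/2) (half_pos hε)
      refine le_trans hrec ?_
      rw [EReal.coe_le_coe_iff]
      exact hfin
    · have hsums : (∑ i, (mxI l' i - mnI l' i).toNat) = (∑ i, (mxI l i - mnI l i).toNat) :=
        le_antisymm (Finset.sum_le_sum (fun i _ => hwi i)) (not_lt.1 hlt)
      have heq : ∀ i, (mxI l' i - mnI l' i).toNat = (mxI l i - mnI l i).toNat := by
        intro i
        exact (Finset.sum_eq_sum_iff_of_le (fun i _ => hwi i)).1 hsums i
          (Finset.mem_univ i)
      have hmm : mnI l' i₀ = mnI l i₀ ∧ mxI l' i₀ = mxI l i₀ := by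
        have h1 := hbounds i₀
        have h2 := heq i₀
        have h3 := mnI_le_mxI hpc' i₀
        omega
      have hwid' : 2 ≤ mxI l' i₀ - mnI l' i₀ := by omega
      have hBd := hBdec hmm
      have hrec := IHb (Bcnt l' i₀) (lt_of_lt_of_le hBd hb) i₀ l' x hpc' hD' hpair' hA'
        hwid' le_rfl (ε/2) (half_pos hε)
      refine le_trans hrec ?_
      rw [EReal.coe_le_coe_iff]
      exact hfin
  intro l x hpc hD hpair hA ε hε
  by_cases hex : ∃ i, 2 ≤ mxI l i - mnI l i
  · obtain ⟨i₀, hi₀⟩ := hex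
    exact inner (Bcnt l i₀) i₀ l x hpc hD hpair hA hi₀ le_rfl ε hε
  · push_neg at hex
    have hfeas := base_feas hpc (fun i => by have := hex i; omega)
    have hle := localConvexExt_le f hfeas
    rw [ecost_eq_rcost hbot hD] at hle
    refine le_trans hle ?_
    rw [EReal.coe_le_coe_iff]
    linarith

/-- Main localization lemma: any convex combination with all pairwise coordinate
gaps ≤ 2 and support in the effective domain bounds the local convex extension. -/
lemma L2 (hbot : ∀ z, f z ≠ ⊥) (hB : HB f) {l : (Fin n → ℤ) →₀ ℝ} {x : Fin n → ℝ}
    (hpc : Pc x l) (hD : ∀ z ∈ l.support, z ∈ Dom f)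
    (hpair : ∀ z ∈ l.support, ∀ w ∈ l.support, ∀ i, |z i - w i| ≤ 2) :
    localConvexExt f x ≤ ((rcost f l : ℝ) : EReal) :=
  le_coe_of_forall_le_add
    (fun ε hε => L2eps hbot hB _ l x hpc hD hpair le_rfl ε hε)

end IC

namespace IC

variable {n : ℕ} {f : (Fin n → ℤ) → EReal}

/-- local convexity of the local convex extension, for points at ℓ∞ distance ≤ 1/2 -/
lemma clocal (hbot : ∀ z, f z ≠ ⊥) (hB : HB f) {y z : Fin n → ℝ}
    (hyz : ∀ i, |y i - z i| ≤ 1/2) {a b : ℝ} (ha : 0 ≤ a) (hb : 0 ≤ b) (hab : a + b = 1) :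
    localConvexExt f (a • y + b • z) ≤
      (a : EReal) * localConvexExt f y + (b : EReal) * localConvexExt f z := by
  rcases eq_or_lt_of_le ha with ha0 | hapos
  · have hb1 : b = 1 := by linarith
    rw [← ha0, hb1]
    simp only [EReal.coe_zero, EReal.zero_mul, EReal.coe_one, one_mul, zero_smul, one_smul,
      zero_add]
    exact le_refl _
  rcases eq_or_lt_of_le hb with hb0 | hbpos
  · have ha1 : a = 1 := by linarith
    rw [← hb0, ha1]
    simp only [EReal.coe_zero, EReal.zero_mul, EReal.coe_one, one_mul, zero_smul, one_smul,
      add_zero]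
    exact le_refl _
  rcases eq_or_ne (localConvexExt f y) ⊤ with hy | hy
  · rw [hy, EReal.coe_mul_top_of_pos hapos, EReal.top_add_of_ne_bot]
    · exact le_top
    · exact term_ne_bot' (lce_ne_bot hbot z) hbpos
  rcases eq_or_ne (localConvexExt f z) ⊤ with hz | hz
  · rw [hz, EReal.coe_mul_top_of_pos hbpos, EReal.add_top_of_ne_bot]
    · exact le_top
    · exact term_ne_bot' (lce_ne_bot hbot y) hapos
  -- both finite
  have hyb := lce_ne_bot hbot y
  have hzb := lce_ne_bot hbot z
  set T1 := (localConvexExt f y).toReal with hT1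
  set T2 := (localConvexExt f z).toReal with hT2
  have hrhs : (a : EReal) * localConvexExt f y + (b : EReal) * localConvexExt f z
      = ((a * T1 + b * T2 : ℝ) : EReal) := by
    rw [hT1, hT2]
    conv_lhs => rw [← EReal.coe_toReal hy hyb, ← EReal.coe_toReal hz hzb]
    rw [← EReal.coe_mul, ← EReal.coe_mul, ← EReal.coe_add]
  rw [hrhs]
  apply le_coe_of_forall_le_add
  intro ε hε
  obtain ⟨l₁, hf₁, hD₁, hc₁⟩ := exists_near_opt hbot hy hε
  obtain ⟨l₂, hf₂, hD₂, hc₂⟩ := exists_near_opt hbot hz hε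
  set ν : (Fin n → ℤ) →₀ ℝ := a • l₁ + b • l₂ with hν
  have hνapp : ∀ p, ν p = a * l₁ p + b * l₂ p := by
    intro p
    rw [hν]
    simp [Finsupp.add_apply, Finsupp.smul_apply, smul_eq_mul]
  have hνnn : ∀ p, 0 ≤ ν p := by
    intro p
    rw [hνapp p]
    exact add_nonneg (mul_nonneg ha (hf₁.1.1 p)) (mul_nonneg hb (hf₂.1.1 p))
  have hνsupp : ν.support ⊆ l₁.support ∪ l₂.support := by
    intro p hp
    rw [Finsupp.mem_support_iff, hνapp p] at hp
    by_contra hc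
    rw [Finset.mem_union] at hc
    push_neg at hc
    rw [Finsupp.notMem_support_iff.1 hc.1, Finsupp.notMem_support_iff.1 hc.2] at hp
    norm_num at hp
  have hpc : Pc (a • y + b • z) ν := by
    refine ⟨hνnn, ?_, ?_⟩
    · rw [hν, map_add, map_smul, map_smul, hf₁.1.2.1, hf₂.1.2.1, smul_eq_mul, smul_eq_mul]
      rw [mul_one, mul_one]; exact hab
    · rw [hν, map_add, map_smul, map_smul, hf₁.1.2.2, hf₂.1.2.2]
  have hνD : ∀ p ∈ ν.support, p ∈ Dom f := by
    intro p hp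
    rcases Finset.mem_union.1 (hνsupp hp) with h | h
    · exact hD₁ p h
    · exact hD₂ p h
  have hνpair : ∀ p ∈ ν.support, ∀ q ∈ ν.support, ∀ i, |p i - q i| ≤ 2 := by
    intro p hp q hq i
    have hloc : ∀ r ∈ ν.support, |(((r : Fin n → ℤ) i : ℤ) : ℝ) - y i| < 3/2 := by
      intro r hr
      rcases Finset.mem_union.1 (hνsupp hr) with h | h
      · have := hf₁.2 r h i
        rw [abs_sub_comm] at this
        linarith [this]
      · have h1 := hf₂.2 r h i
        have h2 := hyz i
        rw [abs_sub_comm] at h1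
        have := abs_sub_le (((r i : ℤ) : ℝ)) (z i) (y i)
        rw [abs_sub_comm (z i) (y i)] at this
        linarith
    have h1 := hloc p hp
    have h2 := hloc q hq
    have hr : |((p i : ℤ) : ℝ) - ((q i : ℤ) : ℝ)| < 3 := by
      have := abs_sub_le (((p i : ℤ) : ℝ)) (y i) (((q i : ℤ) : ℝ))
      rw [abs_sub_comm (y i)] at this
      linarith
    have hcast : ((|p i - q i| : ℤ) : ℝ) < ((3:ℤ):ℝ) := by
      push_cast
      exact hr
    have : |p i - q i| < 3 := by exact_mod_cast hcast
    omega
  have hL2 := L2 hbot hB hpc hνD hνpair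
  have hνcost : rcost f ν = a * rcost f l₁ + b * rcost f l₂ := by
    rw [rcost, hν, map_add, map_smul, map_smul, smul_eq_mul, smul_eq_mul]
    rfl
  refine le_trans hL2 ?_
  rw [EReal.coe_le_coe_iff, hνcost]
  calc a * rcost f l₁ + b * rcost f l₂ ≤ a * (T1 + ε) + b * (T2 + ε) :=
        add_le_add (mul_le_mul_of_nonneg_left hc₁ ha) (mul_le_mul_of_nonneg_left hc₂ hb)
    _ = a * T1 + b * T2 + ε := by nlinarith [hab]

end IC

namespace IC

lemma slope_trans1 {φ : ℝ → ℝ} {r s t : ℝ} (h1 : r < s) (h2 : s < t)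
    (h : (φ s - φ r)/(s - r) ≤ (φ t - φ s)/(t - s)) :
    (φ s - φ r)/(s - r) ≤ (φ t - φ r)/(t - r) := by
  rw [div_le_div_iff₀ (by linarith) (by linarith)] at h ⊢
  nlinarith [h]

lemma slope_trans2 {φ : ℝ → ℝ} {r s t : ℝ} (h1 : r < s) (h2 : s < t)
    (h : (φ s - φ r)/(s - r) ≤ (φ t - φ s)/(t - s)) :
    (φ t - φ r)/(t - r) ≤ (φ t - φ s)/(t - s) := by
  rw [div_le_div_iff₀ (by linarith) (by linarith)] at h ⊢
  nlinarith [h]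

lemma convexOn_glue {φ : ℝ → ℝ} {A c p B : ℝ} (hAp : A ≤ p) (hpc : p < c) (hcB : c ≤ B)
    (h1 : ConvexOn ℝ (Set.Icc A c) φ) (h2 : ConvexOn ℝ (Set.Icc p B) φ) :
    ConvexOn ℝ (Set.Icc A B) φ := by
  rw [convexOn_iff_slope_mono_adjacent]
  refine ⟨convex_Icc _ _, ?_⟩
  intro x y z hx hz hxy hyz
  obtain ⟨hxA, hxB⟩ := hx
  obtain ⟨hzA, hzB⟩ := hz
  by_cases hzc : z ≤ c
  · exact h1.slope_mono_adjacent ⟨hxA, by linarith⟩ ⟨by linarith, hzc⟩ hxy hyz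
  by_cases hxp : p ≤ x
  · exact h2.slope_mono_adjacent ⟨hxp, by linarith⟩ ⟨by linarith, hzB⟩ hxy hyz
  push_neg at hzc hxp
  -- x < p < c < z
  by_cases hy1 : p < y ∧ y < c
  · -- y in the overlap
    set w₂ := (y + c)/2 with hw₂
    have hyw₂ : y < w₂ := by rw [hw₂]; linarith [hy1.2]
    have hw₂c : w₂ < c := by rw [hw₂]; linarith [hy1.2]
    have s1 : (φ y - φ x)/(y - x) ≤ (φ w₂ - φ y)/(w₂ - y) :=
      h1.slope_mono_adjacent ⟨hxA, by linarith⟩ ⟨by linarith, by linarith⟩ hxy hyw₂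
    have s2 : (φ w₂ - φ y)/(w₂ - y) ≤ (φ z - φ w₂)/(z - w₂) :=
      h2.slope_mono_adjacent ⟨le_of_lt hy1.1, by linarith⟩ ⟨by linarith, hzB⟩ hyw₂
        (by linarith)
    exact le_trans s1 (slope_trans1 hyw₂ (by linarith) s2)
  push_neg at hy1
  by_cases hy2 : y ≤ p
  · -- y to the left of the overlap
    set w₁ := p + (c - p)/3 with hw₁
    set w₂ := p + 2*(c - p)/3 with hw₂
    have hpw₁ : p < w₁ := by rw [hw₁]; linarith
    have hw₁w₂ : w₁ < w₂ := by rw [hw₁, hw₂]; linarith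
    have hw₂c : w₂ < c := by rw [hw₂]; linarith
    have hyw₁ : y < w₁ := by linarith
    have s1 : (φ y - φ x)/(y - x) ≤ (φ w₁ - φ y)/(w₁ - y) :=
      h1.slope_mono_adjacent ⟨hxA, by linarith⟩ ⟨by linarith, by linarith⟩ hxy hyw₁
    have s2 : (φ w₁ - φ y)/(w₁ - y) ≤ (φ w₂ - φ w₁)/(w₂ - w₁) :=
      h1.slope_mono_adjacent ⟨by linarith, by linarith⟩ ⟨by linarith, by linarith⟩ hyw₁ hw₁w₂
    have s3 : (φ w₂ - φ w₁)/(w₂ - w₁) ≤ (φ z - φ w₂)/(z - w₂) :=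
      h2.slope_mono_adjacent ⟨by linarith, by linarith⟩ ⟨by linarith, hzB⟩ hw₁w₂ (by linarith)
    have t1 := slope_trans1 hw₁w₂ (by linarith : w₂ < z) s3
    have t2 : (φ w₁ - φ y)/(w₁ - y) ≤ (φ z - φ w₁)/(z - w₁) := le_trans s2 t1
    have t3 := slope_trans1 hyw₁ (by linarith : w₁ < z) t2
    exact le_trans s1 t3
  push_neg at hy2
  -- y to the right of the overlap: c ≤ y (since ¬(p < y ∧ y < c) and p < y)
  have hcy : c ≤ y := hy1 hy2
  set w₁ := p + (c - p)/3 with hw₁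
  set w₂ := p + 2*(c - p)/3 with hw₂
  have hpw₁ : p < w₁ := by rw [hw₁]; linarith
  have hw₁w₂ : w₁ < w₂ := by rw [hw₁, hw₂]; linarith
  have hw₂c : w₂ < c := by rw [hw₂]; linarith
  have hw₂y : w₂ < y := by linarith
  have s1 : (φ y - φ w₂)/(y - w₂) ≤ (φ z - φ y)/(z - y) :=
    h2.slope_mono_adjacent ⟨by linarith, by linarith⟩ ⟨by linarith, hzB⟩ hw₂y hyz
  have s2 : (φ w₂ - φ w₁)/(w₂ - w₁) ≤ (φ y - φ w₂)/(y - w₂) :=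
    h2.slope_mono_adjacent ⟨by linarith, by linarith⟩ ⟨by linarith, by linarith⟩ hw₁w₂ hw₂y
  have s3 : (φ w₁ - φ x)/(w₁ - x) ≤ (φ w₂ - φ w₁)/(w₂ - w₁) :=
    h1.slope_mono_adjacent ⟨hxA, by linarith⟩ ⟨by linarith, by linarith⟩ (by linarith) hw₁w₂
  have t1 := slope_trans2 (by linarith : x < w₁) hw₁w₂ s3
  have t2 : (φ w₂ - φ x)/(w₂ - x) ≤ (φ y - φ w₂)/(y - w₂) := le_trans t1 s2
  have t3 := slope_trans2 (by linarith : x < w₂) hw₂y t2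
  exact le_trans t3 s1

lemma convexOn_of_pieces {φ : ℝ → ℝ} {r : ℝ} (hr : 0 < r)
    (hloc : ∀ t₁ t₂ : ℝ, 0 ≤ t₁ → t₂ ≤ 1 → t₂ - t₁ ≤ 2*r → ConvexOn ℝ (Set.Icc t₁ t₂) φ) :
    ConvexOn ℝ (Set.Icc (0:ℝ) 1) φ := by
  have claim : ∀ j : ℕ, ConvexOn ℝ (Set.Icc (0:ℝ) (min (((j:ℝ)+2)*r) 1)) φ := by
    intro j
    induction j with
    | zero =>
        have h0 : ((0:ℕ):ℝ) + 2 = 2 := by norm_num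
        rw [h0]
        apply hloc 0 (min (2*r) 1) le_rfl (min_le_right _ _)
        have : min (2*r) 1 ≤ 2*r := min_le_left _ _
        linarith
    | succ j ih =>
        have hc : ((j+1:ℕ):ℝ) + 2 = (j:ℝ) + 3 := by push_cast; ring
        rw [hc]
        by_cases hbig : 1 ≤ ((j:ℝ)+2)*r
        · have e1 : min (((j:ℝ)+2)*r) 1 = 1 := min_eq_right hbig
          have e2 : min (((j:ℝ)+3)*r) 1 = 1 := by
            apply min_eq_right
            nlinarith
          rw [e2, ← e1]
          exact ih
        · push_neg at hbig
          have e1 : min (((j:ℝ)+2)*r) 1 = ((j:ℝ)+2)*r := min_eq_left (le_of_lt hbig)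
          rw [e1] at ih
          refine convexOn_glue (A := 0) (c := ((j:ℝ)+2)*r) (p := ((j:ℝ)+1)*r)
            (B := min (((j:ℝ)+3)*r) 1) (by positivity) (by nlinarith) ?_ ih ?_
          · apply le_min
            · nlinarith
            · linarith
          · apply hloc
            · positivity
            · exact min_le_right _ _
            · have : min (((j:ℝ)+3)*r) 1 ≤ ((j:ℝ)+3)*r := min_le_left _ _
              nlinarith
  obtain ⟨N, hN⟩ := exists_nat_ge (1/r)
  have h1 : (1:ℝ) ≤ ((N:ℝ)+2)*r := by
    rw [div_le_iff₀ hr] at hN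
    nlinarith
  have := claim N
  rw [min_eq_right h1] at this
  exact this

end IC

namespace IC

variable {n : ℕ} {f : (Fin n → ℤ) → EReal}

lemma backward_dir (hbot : ∀ z, f z ≠ ⊥) (hdom : IntegrallyConvexSet (Dom f)) (hB : HB f) :
    IntegrallyConvexFn f := by
  intro u v a b ha hb hab
  rcases eq_or_lt_of_le ha with ha0 | hapos
  · have hb1 : b = 1 := by linarith
    rw [← ha0, hb1]
    simp only [EReal.coe_zero, EReal.zero_mul, EReal.coe_one, one_mul, zero_smul, one_smul,
      zero_add]
    exact le_refl _
  rcases eq_or_lt_of_le hb with hb0 | hbpos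
  · have ha1 : a = 1 := by linarith
    rw [← hb0, ha1]
    simp only [EReal.coe_zero, EReal.zero_mul, EReal.coe_one, one_mul, zero_smul, one_smul,
      add_zero]
    exact le_refl _
  rcases eq_or_ne (localConvexExt f u) ⊤ with hu | hu
  · rw [hu, EReal.coe_mul_top_of_pos hapos,
      EReal.top_add_of_ne_bot (term_ne_bot' (lce_ne_bot hbot v) hbpos)]
    exact le_top
  rcases eq_or_ne (localConvexExt f v) ⊤ with hv | hv
  · rw [hv, EReal.coe_mul_top_of_pos hbpos,
      EReal.add_top_of_ne_bot (term_ne_bot' (lce_ne_bot hbot u) hapos)]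
    exact le_top
  have hu_h : u ∈ convexHull ℝ (coeZR '' Dom f) := hull_of_lce_ne_top hbot hu
  have hv_h : v ∈ convexHull ℝ (coeZR '' Dom f) := hull_of_lce_ne_top hbot hv
  set X : ℝ → (Fin n → ℝ) := fun t => u + t • (v - u) with hX
  have hXcomb : ∀ t : ℝ, X t = (1 - t) • u + t • v := by
    intro t
    rw [hX]
    simp only
    module
  have hseg : ∀ t : ℝ, 0 ≤ t → t ≤ 1 → localConvexExt f (X t) ≠ ⊤ := by
    intro t ht0 ht1
    have hmem : X t ∈ convexHull ℝ (coeZR '' Dom f) := by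
      rw [hXcomb t]
      exact (convex_convexHull ℝ (coeZR '' Dom f)) hu_h hv_h (by linarith) ht0 (by ring)
    exact lce_ne_top_of_hull hbot (hdom _ hmem)
  set φ : ℝ → ℝ := fun t => (localConvexExt f (X t)).toReal with hφ
  set M : ℝ := ∑ i, |v i - u i| with hM
  have hM0 : 0 ≤ M := Finset.sum_nonneg (fun i _ => abs_nonneg _)
  have hMi : ∀ i, |v i - u i| ≤ M :=
    fun i => Finset.single_le_sum (f := fun i => |v i - u i|) (fun i _ => abs_nonneg _)
      (Finset.mem_univ i)
  set r : ℝ := 1/(4*(M+1)) with hr'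
  have hr : 0 < r := by rw [hr']; positivity
  have hloc : ∀ t₁ t₂ : ℝ, 0 ≤ t₁ → t₂ ≤ 1 → t₂ - t₁ ≤ 2*r → ConvexOn ℝ (Set.Icc t₁ t₂) φ := by
    intro t₁ t₂ ht₁ ht₂ hlen
    refine ⟨convex_Icc _ _, ?_⟩
    intro s hs t ht α β hα hβ hαβ
    have hs01 : 0 ≤ s ∧ s ≤ 1 := ⟨le_trans ht₁ hs.1, le_trans hs.2 ht₂⟩
    have ht01 : 0 ≤ t ∧ t ≤ 1 := ⟨le_trans ht₁ ht.1, le_trans ht.2 ht₂⟩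
    have hst01 : 0 ≤ α*s + β*t ∧ α*s + β*t ≤ 1 := by
      constructor
      · have := mul_nonneg hα hs01.1
        have := mul_nonneg hβ ht01.1
        linarith
      · have h1 : α*s ≤ α := by nlinarith [hs01.2]
        have h2 : β*t ≤ β := by nlinarith [ht01.2]
        linarith
    have hyz : ∀ i, |(X s) i - (X t) i| ≤ 1/2 := by
      intro i
      have hXi : (X s) i - (X t) i = (s - t) * (v i - u i) := by
        rw [hX]
        simp only [Pi.add_apply, Pi.smul_apply, Pi.sub_apply, smul_eq_mul]
        ring
      rw [hXi, abs_mul]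
      have hst : |s - t| ≤ 2*r := by
        rw [abs_le]
        constructor
        · have := hs.1; have := ht.2; linarith
        · have := hs.2; have := ht.1; linarith
      have h2 : |s - t| * |v i - u i| ≤ (2*r) * M :=
        mul_le_mul hst (hMi i) (abs_nonneg _) (by linarith)
      have h3 : (2*r) * M ≤ 1/2 := by
        rw [hr']
        have he : 2 * (1 / (4 * (M + 1))) * M = M / (2*(M+1)) := by
          field_simp
          ring
        rw [he, div_le_div_iff₀ (by positivity) (by norm_num)]
        nlinarith
      linarith
    have hkey := clocal hbot hB hyz hα hβ hαβ
    have hpt : α • (X s) + β • (X t) = X (α*s + β*t) := by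
      have h1 : α • (X s) + β • (X t) = (α + β) • u + (α*s + β*t) • (v - u) := by
        rw [hX]
        simp only
        module
      rw [h1, hαβ, one_smul, hX]
    rw [hpt] at hkey
    have hne1 := hseg s hs01.1 hs01.2
    have hne2 := hseg t ht01.1 ht01.2
    have hne3 := hseg (α*s+β*t) hst01.1 hst01.2
    have hb1 := lce_ne_bot hbot (X s)
    have hb2 := lce_ne_bot hbot (X t)
    have hb3 := lce_ne_bot hbot (X (α*s+β*t))
    rw [← EReal.coe_toReal hne1 hb1, ← EReal.coe_toReal hne2 hb2,
      ← EReal.coe_toReal hne3 hb3, ← EReal.coe_mul, ← EReal.coe_mul, ← EReal.coe_add,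
      EReal.coe_le_coe_iff] at hkey
    exact hkey
  have hcx := convexOn_of_pieces hr hloc
  have h0m : (0:ℝ) ∈ Set.Icc (0:ℝ) 1 := by constructor <;> norm_num
  have h1m : (1:ℝ) ∈ Set.Icc (0:ℝ) 1 := by constructor <;> norm_num
  have happ := hcx.2 h0m h1m ha hb hab
  have hX0 : X 0 = u := by rw [hX]; simp
  have hX1 : X 1 = v := by rw [hXcomb 1]; simp
  have hXb : X b = a • u + b • v := by
    rw [hXcomb b]
    have : 1 - b = a := by linarith
    rw [this]
  have hsmul : a • (0:ℝ) + b • (1:ℝ) = b := by simp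
  rw [hsmul] at happ
  have hnb : localConvexExt f (X b) ≠ ⊤ := hseg b hb (by linarith)
  calc localConvexExt f (a • u + b • v) = ((φ b : ℝ) : EReal) := by
        rw [← hXb, ← EReal.coe_toReal hnb (lce_ne_bot hbot (X b))]
    _ ≤ ((a * φ 0 + b * φ 1 : ℝ) : EReal) := by rw [EReal.coe_le_coe_iff]; exact happ
    _ = (a : EReal) * localConvexExt f u + (b : EReal) * localConvexExt f v := by
        rw [EReal.coe_add, EReal.coe_mul, EReal.coe_mul]
        congr 1
        · congr 1
          rw [hφ]
          simp only
          rw [hX0, EReal.coe_toReal hu (lce_ne_bot hbot u)]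
        · congr 1
          rw [hφ]
          simp only
          rw [hX1, EReal.coe_toReal hv (lce_ne_bot hbot v)]

end IC

theorem stmt10 {n : ℕ} (f : (Fin n → ℤ) → EReal) (hbot : ∀ z, f z ≠ ⊥)
    (hne : ({z : Fin n → ℤ | f z ≠ ⊤}).Nonempty)
    (hdom : IntegrallyConvexSet {z : Fin n → ℤ | f z ≠ ⊤}) :
    IntegrallyConvexFn f ↔
      ∀ x y : Fin n → ℤ, f x ≠ ⊤ → f y ≠ ⊤ →
        ((∀ i, |x i - y i| ≤ 2) ∧ ∃ i, |x i - y i| = 2) →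
        localConvexExt f ((2⁻¹ : ℝ) • (coeZR x + coeZR y)) ≤
          ((2⁻¹ : ℝ) : EReal) * (f x + f y) := by
  constructor
  · exact IC.forward_dir hbot
  · intro h
    exact IC.backward_dir hbot hdom h
end
end
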